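/- arXiv:1106.3622 — 4 statements merged into one kernel-verified Lean document; each statement's English description precedes it below -/
import Mathlib

section
/- Let G be the visibility graph of a set of n points in the plane with at most ℓ collinear (where ℓ ≥ 2 and the points are not all collinear). Then G is ⌈(n−1)/(ℓ−1)⌉-edge-connected. Moreover, between each pair of distinct vertices of G there exist ⌈(n−1)/(ℓ−1)⌉ pairwise edge-disjoint paths each of which has at most one bend, i.e., all vertices of each path lie on the union of at most two line segments sharing an endpoint, traversed in order along those segments. -/
/-- Two distinct points of the plane are visible with respect to a finite point set `P`
if no point of `P` lies in the open line segment between them. -/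
def VisAdj (P : Finset (ℝ × ℝ)) (x y : ℝ × ℝ) : Prop :=
  x ≠ y ∧ ∀ p ∈ P, p ∉ openSegment ℝ x y

/-- The visibility graph of a finite point set `P` in the plane: vertices are the points
of `P`, two distinct points being adjacent iff the open segment between them contains no
point of `P`. -/
def visibilityGraph (P : Finset (ℝ × ℝ)) : SimpleGraph {p : ℝ × ℝ // p ∈ P} where
  Adj u v := VisAdj P u.1 v.1
  symm := by
    constructor
    rintro u v ⟨hne, h⟩
    refine ⟨hne.symm, fun p hp => ?_⟩
    rw [openSegment_symm]
    exact h p hp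
  loopless := by constructor; rintro u ⟨hne, -⟩; exact hne rfl

/-- The point set `P` has at most `ℓ` collinear points: every collinear subset of `P`
has at most `ℓ` points. -/
def AtMostCollinear (P : Finset (ℝ × ℝ)) (ℓ : ℕ) : Prop :=
  ∀ S : Finset (ℝ × ℝ), S ⊆ P → Collinear ℝ (S : Set (ℝ × ℝ)) → S.card ≤ ℓ

/-- A graph is `k`-edge-connected if it has more than one vertex and remains connected
after deletion of any fewer than `k` edges. -/
def IsKEdgeConnected {V : Type*} (G : SimpleGraph V) (k : ℕ) : Prop :=
  1 < Nat.card V ∧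
    ∀ F : Set (Sym2 V), F ⊆ G.edgeSet → Nat.card F < k → (G.deleteEdges F).Connected

/-- The points of the list `L` all lie on the segment `xy`, in order from `x` to `y`. -/
def InOrderOnSegment (x y : ℝ × ℝ) (L : List (ℝ × ℝ)) : Prop :=
  (∀ p ∈ L, p ∈ segment ℝ x y) ∧ List.Chain' (fun p q => q ∈ segment ℝ p y) L

/-- A walk in a visibility graph has at most one bend if all its vertices lie, in order,
on the union of two line segments sharing an endpoint `c`: first a segment from the
initial vertex to `c`, then a segment from `c` to the final vertex. -/
def OneBend (P : Finset (ℝ × ℝ)) {u v : {p : ℝ × ℝ // p ∈ P}}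
    (W : (visibilityGraph P).Walk u v) : Prop :=
  ∃ (c : ℝ × ℝ) (L₁ L₂ : List (ℝ × ℝ)),
    W.support.map Subtype.val = L₁ ++ L₂ ∧
    InOrderOnSegment (u : ℝ × ℝ) c L₁ ∧ InOrderOnSegment c (v : ℝ × ℝ) L₂

open SimpleGraph

namespace VGP

noncomputable def pt (a b : ℝ × ℝ) (t : ℝ) : ℝ × ℝ := a + t • (b - a)

lemma pt_zero (a b : ℝ × ℝ) : pt a b 0 = a := by simp [pt]
lemma pt_one (a b : ℝ × ℝ) : pt a b 1 = b := by simp [pt]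

lemma pt_injective {a b : ℝ × ℝ} (hab : a ≠ b) : Function.Injective (pt a b) := by
  intro s t h
  have h2 : (s - t) • (b - a) = 0 := by
    have := sub_eq_zero.mpr h
    unfold pt at this
    rw [← this]; module
  rcases smul_eq_zero.mp h2 with h | h
  · linarith [sub_eq_zero.mp h]
  · exact absurd (sub_eq_zero.mp h).symm hab

noncomputable def par (a b : ℝ × ℝ) (p : ℝ × ℝ) : ℝ :=
  if b.1 = a.1 then (p.2 - a.2) / (b.2 - a.2) else (p.1 - a.1) / (b.1 - a.1)

lemma par_pt {a b : ℝ × ℝ} (hab : a ≠ b) (t : ℝ) : par a b (pt a b t) = t := by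
  unfold par pt
  by_cases h : b.1 = a.1
  · have h2 : b.2 ≠ a.2 := by
      intro h2; exact hab (Prod.ext h.symm h2.symm)
    simp only [if_pos h]
    have : (a + t • (b - a)).2 = a.2 + t * (b.2 - a.2) := by simp [Prod.smul_snd]
    rw [this, add_sub_cancel_left, mul_div_cancel_right₀ _ (sub_ne_zero.mpr h2)]
  · simp only [if_neg h]
    have h2 : b.1 ≠ a.1 := h
    have : (a + t • (b - a)).1 = a.1 + t * (b.1 - a.1) := by simp [Prod.smul_fst]
    rw [this, add_sub_cancel_left, mul_div_cancel_right₀ _ (sub_ne_zero.mpr h2)]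

lemma mem_segment_iff_pt {a b p : ℝ × ℝ} :
    p ∈ segment ℝ a b ↔ ∃ t, t ∈ Set.Icc (0:ℝ) 1 ∧ pt a b t = p := by
  rw [segment_eq_image']
  constructor
  · rintro ⟨t, ht, rfl⟩; exact ⟨t, ht, rfl⟩
  · rintro ⟨t, ht, rfl⟩; exact ⟨t, ht, rfl⟩

lemma pt_mem_segment {a b : ℝ × ℝ} {s t u : ℝ} (hs : s ≤ u) (ht : u ≤ t) :
    pt a b u ∈ segment ℝ (pt a b s) (pt a b t) := by
  rcases eq_or_lt_of_le (hs.trans ht) with h | h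
  · have hu : u = s := le_antisymm (h ▸ ht) hs
    subst hu; rw [← h]; exact left_mem_segment ℝ _ _
  · rw [segment_eq_image']
    refine ⟨(u - s) / (t - s), ⟨div_nonneg (by linarith) (by linarith),
      (div_le_one (by linarith)).mpr (by linarith)⟩, ?_⟩
    show pt a b s + ((u - s) / (t - s)) • (pt a b t - pt a b s) = pt a b u
    have h1 : pt a b t - pt a b s = (t - s) • (b - a) := by unfold pt; module
    rw [h1, smul_smul, div_mul_cancel₀ _ (by linarith : t - s ≠ 0)]
    unfold pt; module

lemma mem_openSegment_pt' {a b : ℝ × ℝ} {s t : ℝ} (hst : s < t) {p : ℝ × ℝ}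
    (hp : p ∈ openSegment ℝ (pt a b s) (pt a b t)) :
    ∃ u, s < u ∧ u < t ∧ pt a b u = p := by
  rw [openSegment_eq_image'] at hp
  obtain ⟨θ, ⟨h0, h1⟩, rfl⟩ := hp
  refine ⟨s + θ * (t - s), by nlinarith, by nlinarith, ?_⟩
  have h2 : pt a b t - pt a b s = (t - s) • (b - a) := by unfold pt; module
  rw [h2]; unfold pt; module

end VGP

namespace VGP2
open VGP

lemma segment_subset_line {a b : ℝ × ℝ} :
    segment ℝ a b ⊆ (affineSpan ℝ {a, b} : Set (ℝ × ℝ)) :=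
  (AffineSubspace.convex _).segment_subset (left_mem_affineSpan_pair ℝ a b)
    (right_mem_affineSpan_pair ℝ a b)

lemma collinear_line (a b : ℝ × ℝ) : Collinear ℝ ((affineSpan ℝ {a, b} : AffineSubspace ℝ (ℝ × ℝ)) : Set (ℝ × ℝ)) := by
  rw [collinear_iff_rank_le_one ℝ, ← AffineSubspace.direction_eq_vectorSpan,
    direction_affineSpan]
  exact (collinear_iff_rank_le_one ℝ _).1 (collinear_pair ℝ a b)

lemma collinear_of_subset_line {a b : ℝ × ℝ} {S : Set (ℝ × ℝ)}
    (h : S ⊆ (affineSpan ℝ {a, b} : Set (ℝ × ℝ))) : Collinear ℝ S :=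
  Collinear.subset h (collinear_line a b)

/-- If `p ≠ q` both lie on segment `a b` and on segment `c d`, then `a,b,c,d` collinear. -/
lemma collinear_four {p q a b c d : ℝ × ℝ} (hpq : p ≠ q)
    (h1 : p ∈ segment ℝ a b) (h2 : q ∈ segment ℝ a b)
    (h3 : p ∈ segment ℝ c d) (h4 : q ∈ segment ℝ c d) :
    Collinear ℝ ({a, b, c, d} : Set (ℝ × ℝ)) := by
  have key : ∀ x : ℝ × ℝ, ∀ e f : ℝ × ℝ, p ∈ segment ℝ e f → q ∈ segment ℝ e f →
      x ∈ ({e, f} : Set (ℝ × ℝ)) → x ∈ affineSpan ℝ ({p, q} : Set (ℝ × ℝ)) := by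
    intro x e f hp hq hx
    have hcol : Collinear ℝ ({p, q, x} : Set (ℝ × ℝ)) := by
      apply collinear_of_subset_line (a := e) (b := f)
      rintro z (rfl | rfl | rfl)
      · exact segment_subset_line hp
      · exact segment_subset_line hq
      · rcases hx with rfl | rfl
        · exact left_mem_affineSpan_pair ℝ _ _
        · exact right_mem_affineSpan_pair ℝ _ _
    exact hcol.mem_affineSpan_of_mem_of_ne (by simp) (by simp) (by simp) hpq
  apply collinear_of_subset_line (a := p) (b := q)
  intro z hz
  simp only [Set.mem_insert_iff, Set.mem_singleton_iff] at hz
  rcases hz with hz | hz | hz | hz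
  · exact key z a b h1 h2 (by simp [hz])
  · exact key z a b h1 h2 (by simp [hz])
  · exact key z c d h3 h4 (by simp [hz])
  · exact key z c d h3 h4 (by simp [hz])

end VGP2

namespace VGP3
open VGP VGP2

lemma walk_of_chain {V : Type*} (G : SimpleGraph V) :
    ∀ (l : List V) (hl : l ≠ []) (_ : List.Chain' G.Adj l) (x y : V)
      (_ : l.head hl = x) (_ : l.getLast hl = y), ∃ W : G.Walk x y, W.support = l := by
  intro l
  induction l with
  | nil => intro hl; exact absurd rfl hl
  | cons z tail ih =>
    intro hl hc x y hx hy
    cases tail with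
    | nil =>
      simp only [List.head_cons] at hx
      simp only [List.getLast_singleton] at hy
      subst hx; subst hy
      exact ⟨SimpleGraph.Walk.nil, rfl⟩
    | cons z' l' =>
      simp only [List.head_cons] at hx
      have hadj : G.Adj x z' := hx ▸ (List.isChain_cons_cons.mp hc).1
      have hc' : List.Chain' G.Adj (z' :: l') := (List.isChain_cons_cons.mp hc).2
      have hy' : (z' :: l').getLast (by simp) = y := by
        rw [← hy]; exact (List.getLast_cons (by simp)).symm
      obtain ⟨W', hW'⟩ := ih (by simp) hc' z' y rfl hy'
      exact ⟨SimpleGraph.Walk.cons hadj W', by simp [hW', ← hx]⟩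

lemma head_of_sorted {l : List ℝ} (hl : List.Pairwise (· < ·) l) (h : l ≠ []) {x : ℝ}
    (hx : x ∈ l) (hmin : ∀ y ∈ l, x ≤ y) : l.head h = x := by
  cases l with
  | nil => exact absurd rfl h
  | cons c l' =>
    simp only [List.head_cons]
    rcases List.mem_cons.mp hx with rfl | hx'
    · rfl
    · exact absurd (List.rel_of_pairwise_cons hl hx') (not_lt.mpr (hmin c (by simp)))

lemma getLast_of_sorted {l : List ℝ} (hl : List.Pairwise (· < ·) l) (h : l ≠ []) {x : ℝ}
    (hx : x ∈ l) (hmax : ∀ y ∈ l, y ≤ x) : l.getLast h = x := by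
  obtain ⟨i, rfl⟩ := List.mem_iff_get.mp hx
  have hlen : 0 < l.length := List.length_pos_iff.mpr h
  have hgl : l.getLast h = l.get ⟨l.length - 1, by omega⟩ := List.getLast_eq_getElem h
  rcases lt_or_eq_of_le (Nat.le_sub_one_of_lt i.2 : i.1 ≤ l.length - 1) with hlt | heq
  · exfalso
    have := hl.sortedLT.strictMono_get (show i < (⟨l.length - 1, by omega⟩ : Fin l.length) from hlt)
    exact absurd this (not_lt.mpr (hmax _ (List.get_mem _ _)))
  · rw [hgl]; congr 1; exact (Fin.ext heq.symm)

end VGP3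

namespace VGP4
open VGP VGP2 VGP3

lemma getLast_congr' {α : Type*} {l₁ l₂ : List α} (h : l₁ = l₂) (h₁ : l₁ ≠ []) :
    l₁.getLast h₁ = l₂.getLast (h ▸ h₁) := by subst h; rfl

lemma head_congr' {α : Type*} {l₁ l₂ : List α} (h : l₁ = l₂) (h₁ : l₁ ≠ []) :
    l₁.head h₁ = l₂.head (h ▸ h₁) := by subst h; rfl

lemma exists_segWalk (P : Finset (ℝ × ℝ)) {a b : ℝ × ℝ} (ha : a ∈ P) (hb : b ∈ P) (hab : a ≠ b) :
    ∃ W : (visibilityGraph P).Walk ⟨a, ha⟩ ⟨b, hb⟩, W.IsPath ∧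
      (∀ p ∈ W.support, (p : ℝ × ℝ) ∈ segment ℝ a b) ∧
      List.Chain' (fun p q => q ∈ segment ℝ p b) (W.support.map Subtype.val) := by
  classical
  set S : Finset (ℝ × ℝ) := P.filter (fun p => p ∈ segment ℝ a b) with hS
  set T : Finset ℝ := S.image (par a b) with hT
  set l : List ℝ := T.sort (· ≤ ·) with hl
  have hsort : l.Pairwise (· < ·) := T.sortedLT_sort.pairwise
  have hmem : ∀ t ∈ l, 0 ≤ t ∧ t ≤ 1 ∧ pt a b t ∈ P ∧ pt a b t ∈ segment ℝ a b := by
    intro t ht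
    rw [hl, Finset.mem_sort] at ht
    obtain ⟨p, hp, rfl⟩ := Finset.mem_image.mp ht
    rw [hS, Finset.mem_filter] at hp
    obtain ⟨hpP, hpseg⟩ := hp
    obtain ⟨u, ⟨hu0, hu1⟩, rfl⟩ := mem_segment_iff_pt.mp hpseg
    rw [par_pt hab]
    exact ⟨hu0, hu1, hpP, mem_segment_iff_pt.mpr ⟨u, ⟨hu0, hu1⟩, rfl⟩⟩
  have hmemT : ∀ p ∈ P, p ∈ segment ℝ a b → par a b p ∈ l := by
    intro p hp hseg
    rw [hl, Finset.mem_sort, hT]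
    exact Finset.mem_image.mpr ⟨p, Finset.mem_filter.mpr ⟨hp, hseg⟩, rfl⟩
  have hmem0 : (0:ℝ) ∈ l := by
    have h := hmemT a ha (left_mem_segment ℝ a b)
    have h2 : par a b a = 0 := by
      have := par_pt hab (t := 0); rwa [pt_zero] at this
    rwa [h2] at h
  have hmem1 : (1:ℝ) ∈ l := by
    have h := hmemT b hb (right_mem_segment ℝ a b)
    have h2 : par a b b = 1 := by
      have := par_pt hab (t := 1); rwa [pt_one] at this
    rwa [h2] at h
  have hne : l ≠ [] := List.ne_nil_of_mem hmem0
  have hhead : l.head hne = 0 := head_of_sorted hsort hne hmem0 (fun y hy => (hmem y hy).1)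
  have hlast : l.getLast hne = 1 := getLast_of_sorted hsort hne hmem1 (fun y hy => (hmem y hy).2.1)
  -- chain of visibility adjacency on parameters
  have hchainR : List.Chain' (fun s t : ℝ => VisAdj P (pt a b s) (pt a b t)) l := by
    simp only [List.Chain']
    rw [List.isChain_iff_getElem]
    intro i hi
    have hst : l.get ⟨i, by omega⟩ < l.get ⟨i+1, by omega⟩ :=
      hsort.sortedLT.strictMono_get (by simp [Fin.lt_def])
    set s := l.get ⟨i, by omega⟩ with hsdef
    set t := l.get ⟨i+1, by omega⟩ with htdef
    have hsl : s ∈ l := l.get_mem _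
    have htl : t ∈ l := l.get_mem _
    refine ⟨fun h => absurd (pt_injective hab h) hst.ne, ?_⟩
    intro p hpP hpopen
    obtain ⟨u, hsu, hut, rfl⟩ := mem_openSegment_pt' hst hpopen
    have hu0 : (0:ℝ) ≤ u := le_trans (hmem s hsl).1 hsu.le
    have hu1 : u ≤ 1 := le_trans hut.le (hmem t htl).2.1
    have hseg : pt a b u ∈ segment ℝ a b := by
      have := pt_mem_segment (a := a) (b := b) hu0 hu1
      rwa [pt_zero, pt_one] at this
    have hul : u ∈ l := by
      have := hmemT (pt a b u) hpP hseg
      rwa [par_pt hab] at this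
    obtain ⟨j, hj⟩ := List.mem_iff_get.mp hul
    have h1 : (⟨i, by omega⟩ : Fin l.length) < j :=
      (hsort.sortedLT.strictMono_get).lt_iff_lt.mp (by rw [hj]; exact hsu)
    have h2 : j < (⟨i+1, by omega⟩ : Fin l.length) :=
      (hsort.sortedLT.strictMono_get).lt_iff_lt.mp (by rw [hj]; exact hut)
    rw [Fin.lt_def] at h1 h2
    simp only [] at h1 h2
    omega
  have hchainSeg : List.Chain' (fun s t : ℝ => pt a b t ∈ segment ℝ (pt a b s) b) l := by
    simp only [List.Chain']
    rw [List.isChain_iff_getElem]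
    intro i hi
    have hst : l.get ⟨i, by omega⟩ < l.get ⟨i+1, by omega⟩ :=
      hsort.sortedLT.strictMono_get (by simp [Fin.lt_def])
    have h1 : l.get ⟨i+1, by omega⟩ ≤ 1 := (hmem _ (l.get_mem _)).2.1
    have := pt_mem_segment (a := a) (b := b) hst.le h1
    rwa [pt_one] at this
  -- vertex list
  have hPl : ∀ t ∈ l, pt a b t ∈ P := fun t ht => (hmem t ht).2.2.1
  set vl : List {p : ℝ × ℝ // p ∈ P} := l.pmap (fun t ht => ⟨pt a b t, ht⟩) hPl with hvl
  have hvmap : vl.map Subtype.val = l.map (pt a b) := by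
    rw [hvl, List.map_pmap]; exact List.pmap_eq_map _
  have hvne : vl ≠ [] := by
    intro h
    apply hne
    have := congrArg (List.map Subtype.val) h
    rw [hvmap] at this
    exact List.map_eq_nil_iff.mp this
  have hvmapne : vl.map Subtype.val ≠ [] := by simp [hvne]
  have hheadv : vl.head hvne = ⟨a, ha⟩ := by
    apply Subtype.ext
    have e1 : (vl.map Subtype.val).head hvmapne = (vl.head hvne).val := List.head_map _
    have e3 : (l.map (pt a b)).head (hvmap ▸ hvmapne) = pt a b (l.head hne) := by
      have := List.head_map (f := pt a b) (l := l) (hvmap ▸ hvmapne)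
      exact this
    have e2 := head_congr' hvmap hvmapne
    rw [← e1, e2, e3, hhead, pt_zero]
  have hlastv : vl.getLast hvne = ⟨b, hb⟩ := by
    apply Subtype.ext
    have e1 : (vl.map Subtype.val).getLast hvmapne = (vl.getLast hvne).val := List.getLast_map _
    have e3 : (l.map (pt a b)).getLast (hvmap ▸ hvmapne) = pt a b (l.getLast hne) := by
      have := List.getLast_map (f := pt a b) (l := l) (hvmap ▸ hvmapne)
      exact this
    have e2 := getLast_congr' hvmap hvmapne
    rw [← e1, e2, e3, hlast, pt_one]
  have hchainAdj : List.Chain' (visibilityGraph P).Adj vl := by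
    have h1 : List.Chain' (fun p q : ℝ × ℝ => VisAdj P p q) (vl.map Subtype.val) := by
      simp only [List.Chain']; rw [hvmap, List.isChain_map]; exact hchainR
    simp only [List.Chain'] at h1
    rw [List.isChain_map] at h1
    exact h1
  obtain ⟨W, hWsup⟩ := walk_of_chain (visibilityGraph P) vl hvne hchainAdj ⟨a, ha⟩ ⟨b, hb⟩ hheadv hlastv
  refine ⟨W, ?_, ?_, ?_⟩
  · rw [SimpleGraph.Walk.isPath_def, hWsup]
    apply List.Nodup.of_map Subtype.val
    rw [hvmap]
    exact (Finset.sort_nodup _ _).map (pt_injective hab)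
  · intro p hp
    rw [hWsup] at hp
    have : p.val ∈ vl.map Subtype.val := List.mem_map_of_mem hp
    rw [hvmap] at this
    obtain ⟨t, ht, h⟩ := List.mem_map.mp this
    rw [← h]
    exact (hmem t ht).2.2.2
  · simp only [List.Chain']
    rw [hWsup, hvmap, List.isChain_map]
    exact hchainSeg

end VGP4


namespace VGP5
open VGP VGP2 VGP3 VGP4

lemma edge_endpoints_mem_support {P : Finset (ℝ × ℝ)} {u v : {p : ℝ × ℝ // p ∈ P}}
    {W : (visibilityGraph P).Walk u v} {e : Sym2 {p : ℝ × ℝ // p ∈ P}} (he : e ∈ W.edges) :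
    ∀ z ∈ e, z ∈ W.support := by
  induction e with
  | _ p q =>
    intro z hz
    rcases Sym2.mem_iff.mp hz with rfl | rfl
    · exact SimpleGraph.Walk.fst_mem_support_of_mem_edges W he
    · exact SimpleGraph.Walk.snd_mem_support_of_mem_edges W he

lemma edge_ne {P : Finset (ℝ × ℝ)} {u v : {p : ℝ × ℝ // p ∈ P}}
    {W : (visibilityGraph P).Walk u v} {p q : {p : ℝ × ℝ // p ∈ P}}
    (he : s(p, q) ∈ W.edges) : (p : ℝ × ℝ) ≠ (q : ℝ × ℝ) :=
  (W.adj_of_mem_edges he).1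

/-- Core edge-disjointness: an edge cannot lie on two non-collinear segments. -/
lemma edge_not_on_both {P : Finset (ℝ × ℝ)} {a b c d : ℝ × ℝ}
    (h : ¬ Collinear ℝ ({a, b, c, d} : Set (ℝ × ℝ)))
    {u₁ v₁ u₂ v₂ : {p : ℝ × ℝ // p ∈ P}}
    {W₁ : (visibilityGraph P).Walk u₁ v₁} {W₂ : (visibilityGraph P).Walk u₂ v₂}
    (hs₁ : ∀ z ∈ W₁.support, (z : ℝ × ℝ) ∈ segment ℝ a b)
    (hs₂ : ∀ z ∈ W₂.support, (z : ℝ × ℝ) ∈ segment ℝ c d) :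
    List.Disjoint W₁.edges W₂.edges := by
  intro e he₁ he₂
  induction e with
  | _ p q =>
    exact h (collinear_four (edge_ne he₁)
      (hs₁ p (edge_endpoints_mem_support he₁ p (by simp)))
      (hs₁ q (edge_endpoints_mem_support he₁ q (by simp)))
      (hs₂ p (edge_endpoints_mem_support he₂ p (by simp)))
      (hs₂ q (edge_endpoints_mem_support he₂ q (by simp))))

/-- Bent walk through x. -/
lemma exists_bentWalk (P : Finset (ℝ × ℝ)) {v w x : ℝ × ℝ} (hv : v ∈ P) (hw : w ∈ P)
    (hx : x ∈ P) (hncol : ¬ Collinear ℝ ({v, w, x} : Set (ℝ × ℝ))) :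
    ∃ W : (visibilityGraph P).Walk ⟨v, hv⟩ ⟨w, hw⟩, W.IsPath ∧ OneBend P W ∧
      ∀ e ∈ W.edges, (∀ z ∈ e, (z : ℝ × ℝ) ∈ segment ℝ v x) ∨
        (∀ z ∈ e, (z : ℝ × ℝ) ∈ segment ℝ x w) := by
  have hvw : v ≠ w := fun h => hncol (by rw [h]; exact (collinear_pair ℝ w x).subset (by simp))
  have hvx : v ≠ x := fun h => hncol (by rw [h]; exact (collinear_pair ℝ x w).subset (by
    intro z hz; simp at hz ⊢; tauto))
  have hxw : x ≠ w := fun h => hncol (by rw [← h]; exact (collinear_pair ℝ v x).subset (by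
    intro z hz; simp at hz ⊢; tauto))
  obtain ⟨W₁, hW₁path, hW₁seg, hW₁chain⟩ := exists_segWalk P hv hx hvx
  obtain ⟨W₂, hW₂path, hW₂seg, hW₂chain⟩ := exists_segWalk P hx hw hxw
  refine ⟨W₁.append W₂, ?_, ?_, ?_⟩
  · rw [SimpleGraph.Walk.isPath_def, SimpleGraph.Walk.support_append]
    apply List.Nodup.append
    · exact hW₁path.support_nodup
    · exact (SimpleGraph.Walk.support_eq_cons W₂ ▸ hW₂path.support_nodup).of_cons
    · intro p hp₁ hp₂
      have hpx : (p : ℝ × ℝ) ≠ x := by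
        intro h
        have : p = ⟨x, hx⟩ := Subtype.ext h
        subst this
        have := SimpleGraph.Walk.support_eq_cons W₂ ▸ hW₂path.support_nodup
        rw [List.nodup_cons] at this
        exact this.1 hp₂
      have h1 : (p : ℝ × ℝ) ∈ segment ℝ v x := hW₁seg p hp₁
      have h2 : (p : ℝ × ℝ) ∈ segment ℝ x w := hW₂seg p (List.mem_of_mem_tail hp₂)
      have hcol : Collinear ℝ ({v, x, x, w} : Set (ℝ × ℝ)) :=
        collinear_four hpx h1 (right_mem_segment ℝ v x) h2 (left_mem_segment ℝ x w)
      exact hncol (hcol.subset (by intro z hz; simp at hz ⊢; tauto))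
  · refine ⟨x, W₁.support.map Subtype.val, W₂.support.tail.map Subtype.val, ?_, ?_, ?_⟩
    · rw [SimpleGraph.Walk.support_append, List.map_append]
    · constructor
      · intro p hp
        obtain ⟨z, hz, rfl⟩ := List.mem_map.mp hp
        exact hW₁seg z hz
      · exact hW₁chain
    · constructor
      · intro p hp
        obtain ⟨z, hz, rfl⟩ := List.mem_map.mp hp
        exact hW₂seg z (List.mem_of_mem_tail hz)
      · have := hW₂chain.tail
        rwa [← List.map_tail] at this
  · intro e he
    rw [SimpleGraph.Walk.edges_append, List.mem_append] at he
    rcases he with he | he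
    · exact Or.inl (fun z hz => hW₁seg z (edge_endpoints_mem_support he z hz))
    · exact Or.inr (fun z hz => hW₂seg z (edge_endpoints_mem_support he z hz))

end VGP5

namespace VGP6

lemma matching_lemma {α β γ : Type*} [DecidableEq α] [DecidableEq β] [DecidableEq γ]
    (Q : Finset α) (f : α → β) (g : α → γ) (d : ℕ)
    (hf : ∀ b, (Q.filter (fun x => f x = b)).card ≤ d)
    (hg : ∀ c, (Q.filter (fun x => g x = c)).card ≤ d)
    (hinj : ∀ x ∈ Q, ∀ y ∈ Q, f x = f y → g x = g y → x = y) :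
    ∃ M : Finset α, M ⊆ Q ∧ Set.InjOn f ↑M ∧ Set.InjOn g ↑M ∧ Q.card ≤ M.card * d := by
  classical
  set B : Finset β := Q.image f with hB
  set t : {b // b ∈ B} → Finset γ := fun b => (Q.filter (fun x => f x = b.val)).image g with ht
  set D : ℕ := Finset.univ.sup (fun s : Finset {b // b ∈ B} => s.card - (s.biUnion t).card)
    with hD
  have hDbound : ∀ s : Finset {b // b ∈ B}, s.card ≤ (s.biUnion t).card + D := by
    intro s
    have h := Finset.le_sup (f := fun s : Finset {b // b ∈ B} => s.card - (s.biUnion t).card)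
      (Finset.mem_univ s)
    omega
  set t' : {b // b ∈ B} → Finset (γ ⊕ ℕ) :=
    fun b => (t b).image Sum.inl ∪ (Finset.range D).image Sum.inr with ht'
  have hall : ∀ s : Finset {b // b ∈ B}, s.card ≤ (s.biUnion t').card := by
    intro s
    rcases s.eq_empty_or_nonempty with rfl | hs
    · simp
    · have h1 : s.biUnion t' = (s.biUnion t).image Sum.inl ∪ (Finset.range D).image Sum.inr := by
        apply Finset.Subset.antisymm
        · intro z hz
          rw [Finset.mem_biUnion] at hz
          obtain ⟨b, hb, hz⟩ := hz
          simp only [ht'] at hz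
          rw [Finset.mem_union] at hz ⊢
          rcases hz with hz | hz
          · left
            obtain ⟨c, hc, rfl⟩ := Finset.mem_image.mp hz
            exact Finset.mem_image_of_mem _ (Finset.mem_biUnion.mpr ⟨b, hb, hc⟩)
          · right; exact hz
        · intro z hz
          rw [Finset.mem_union] at hz
          rw [Finset.mem_biUnion]
          rcases hz with hz | hz
          · obtain ⟨c, hc, rfl⟩ := Finset.mem_image.mp hz
            obtain ⟨b, hb, hc⟩ := Finset.mem_biUnion.mp hc
            exact ⟨b, hb, by simp only [ht']; exact Finset.mem_union_left _ (Finset.mem_image_of_mem _ hc)⟩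
          · exact ⟨hs.choose, hs.choose_spec, by simp only [ht']; exact Finset.mem_union_right _ hz⟩
      rw [h1, Finset.card_union_of_disjoint (by simp [Finset.disjoint_left]),
        Finset.card_image_of_injective _ Sum.inl_injective,
        Finset.card_image_of_injective _ Sum.inr_injective, Finset.card_range]
      exact hDbound s
  obtain ⟨F, hFinj, hFmem⟩ := (Finset.all_card_le_biUnion_card_iff_exists_injective t').mp hall
  set M : Finset α := Q.filter (fun x => ∃ hb : f x ∈ B, Sum.inl (g x) = F ⟨f x, hb⟩) with hM
  have hMQ : M ⊆ Q := Finset.filter_subset _ _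
  have hMf : ∀ x ∈ M, ∀ (hb : f x ∈ B), Sum.inl (g x) = F ⟨f x, hb⟩ := by
    intro x hx hb
    obtain ⟨hb', h⟩ := (Finset.mem_filter.mp hx).2
    exact h
  have hfB : ∀ x ∈ Q, f x ∈ B := fun x hx => Finset.mem_image_of_mem f hx
  have hinjf : Set.InjOn f ↑M := by
    intro x hx y hy hfxy
    have hx' := Finset.mem_coe.mp hx; have hy' := Finset.mem_coe.mp hy
    have h1 := hMf x hx' (hfB x (hMQ hx'))
    have h2 := hMf y hy' (hfB y (hMQ hy'))
    have : (⟨f x, hfB x (hMQ hx')⟩ : {b // b ∈ B}) = ⟨f y, hfB y (hMQ hy')⟩ :=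
      Subtype.ext hfxy
    rw [this] at h1
    have hg' : g x = g y := Sum.inl_injective (h1.trans h2.symm)
    exact hinj x (hMQ hx') y (hMQ hy') hfxy hg'
  have hinjg : Set.InjOn g ↑M := by
    intro x hx y hy hgxy
    have hx' := Finset.mem_coe.mp hx; have hy' := Finset.mem_coe.mp hy
    have h1 := hMf x hx' (hfB x (hMQ hx'))
    have h2 := hMf y hy' (hfB y (hMQ hy'))
    rw [hgxy] at h1
    have := hFinj (h1.symm.trans h2)
    have hf' : f x = f y := congrArg Subtype.val this
    exact hinj x (hMQ hx') y (hMQ hy') hf' hgxy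
  refine ⟨M, hMQ, hinjf, hinjg, ?_⟩
  -- counting
  have hgood : ∀ b : {b // b ∈ B}, (∃ c, F b = Sum.inl c) → b.val ∈ M.image f := by
    rintro b ⟨c, hc⟩
    have := hFmem b
    rw [ht', Finset.mem_union, hc] at this
    have hcb : c ∈ t b := by
      rcases this with h | h
      · simpa using h
      · exfalso; obtain ⟨m, _, hm⟩ := Finset.mem_image.mp h; exact (by simp at hm)
    obtain ⟨x, hx, hgx⟩ := Finset.mem_image.mp hcb
    obtain ⟨hxQ, hfx⟩ := Finset.mem_filter.mp hx
    have hxM : x ∈ M := by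
      rw [hM, Finset.mem_filter]
      refine ⟨hxQ, hfB x hxQ, ?_⟩
      have : (⟨f x, hfB x hxQ⟩ : {b // b ∈ B}) = b := Subtype.ext hfx
      rw [this, hc, hgx]
    exact Finset.mem_image.mpr ⟨x, hxM, hfx⟩
  have hMcard : (M.image f).card = M.card := Finset.card_image_of_injOn hinjf
  set goodS : Finset {b // b ∈ B} :=
    Finset.univ.filter (fun b => ∃ c, F b = Sum.inl c) with hgoodS
  set badS : Finset {b // b ∈ B} :=
    Finset.univ.filter (fun b => ¬∃ c, F b = Sum.inl c) with hbadS
  have hsplit : goodS.card + badS.card = B.card := by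
    rw [hgoodS, hbadS, Finset.card_filter_add_card_filter_not]
    simp
  have hgoodcard : goodS.card ≤ M.card := by
    rw [← hMcard]
    apply Finset.card_le_card_of_injOn (fun b => b.val)
    · intro b hb
      exact hgood b (Finset.mem_filter.mp hb).2
    · intro x _ y _ h
      exact Subtype.ext h
  have hbadcard : badS.card ≤ D := by
    have : badS.card ≤ ((Finset.range D).image (Sum.inr : ℕ → γ ⊕ ℕ)).card := by
      apply Finset.card_le_card_of_injOn F
      · intro b hb
        have hnb := (Finset.mem_filter.mp hb).2
        have := hFmem b
        rw [ht', Finset.mem_union] at this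
        rcases this with h | h
        · exfalso
          obtain ⟨c, _, hc⟩ := Finset.mem_image.mp h
          exact hnb ⟨c, hc.symm⟩
        · exact h
      · intro x _ y _ h
        exact hFinj h
    rwa [Finset.card_image_of_injective _ Sum.inr_injective, Finset.card_range] at this
  have hBM : B.card ≤ M.card + D := by omega
  -- the counting bound for any set of left vertices
  have count : ∀ S₀ : Finset {b // b ∈ B},
      Q.card ≤ ((S₀.biUnion t).card + (B.card - S₀.card)) * d := by
    intro S₀
    set B₀ : Finset β := S₀.image Subtype.val with hB₀
    have hB₀card : B₀.card = S₀.card := Finset.card_image_of_injective _ Subtype.val_injective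
    have hB₀sub : B₀ ⊆ B := by
      intro b hb
      obtain ⟨b', _, rfl⟩ := Finset.mem_image.mp hb
      exact b'.2
    have hQsplit : (Q.filter (fun x => f x ∈ B₀)).card
        + (Q.filter (fun x => ¬ f x ∈ B₀)).card = Q.card :=
      Finset.card_filter_add_card_filter_not _
    have h1 : (Q.filter (fun x => f x ∈ B₀)).card ≤ (S₀.biUnion t).card * d := by
      have hsub : Q.filter (fun x => f x ∈ B₀) ⊆
          (S₀.biUnion t).biUnion (fun c => Q.filter (fun x => g x = c)) := by
        intro x hx
        obtain ⟨hxQ, hfx⟩ := Finset.mem_filter.mp hx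
        obtain ⟨b', hb'S, hb'v⟩ := Finset.mem_image.mp hfx
        rw [Finset.mem_biUnion]
        refine ⟨g x, ?_, Finset.mem_filter.mpr ⟨hxQ, rfl⟩⟩
        rw [Finset.mem_biUnion]
        refine ⟨b', hb'S, ?_⟩
        rw [ht]
        exact Finset.mem_image_of_mem g (Finset.mem_filter.mpr ⟨hxQ, hb'v.symm⟩)
      calc (Q.filter (fun x => f x ∈ B₀)).card
          ≤ ((S₀.biUnion t).biUnion (fun c => Q.filter (fun x => g x = c))).card :=
            Finset.card_le_card hsub
        _ ≤ ∑ c ∈ S₀.biUnion t, (Q.filter (fun x => g x = c)).card := Finset.card_biUnion_le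
        _ ≤ (S₀.biUnion t).card * d := by
            have := Finset.sum_le_card_nsmul (S₀.biUnion t)
              (fun c => (Q.filter (fun x => g x = c)).card) d (fun c _ => hg c)
            simpa [smul_eq_mul] using this
    have h2 : (Q.filter (fun x => ¬ f x ∈ B₀)).card ≤ (B.card - S₀.card) * d := by
      have hsub : Q.filter (fun x => ¬ f x ∈ B₀) ⊆
          (B \ B₀).biUnion (fun b => Q.filter (fun x => f x = b)) := by
        intro x hx
        obtain ⟨hxQ, hfx⟩ := Finset.mem_filter.mp hx
        rw [Finset.mem_biUnion]
        exact ⟨f x, Finset.mem_sdiff.mpr ⟨hfB x hxQ, hfx⟩, Finset.mem_filter.mpr ⟨hxQ, rfl⟩⟩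
      calc (Q.filter (fun x => ¬ f x ∈ B₀)).card
          ≤ ((B \ B₀).biUnion (fun b => Q.filter (fun x => f x = b))).card :=
            Finset.card_le_card hsub
        _ ≤ ∑ b ∈ B \ B₀, (Q.filter (fun x => f x = b)).card := Finset.card_biUnion_le
        _ ≤ (B \ B₀).card * d := by
            have := Finset.sum_le_card_nsmul (B \ B₀)
              (fun b => (Q.filter (fun x => f x = b)).card) d (fun b _ => hf b)
            simpa [smul_eq_mul] using this
        _ = (B.card - S₀.card) * d := by rw [Finset.card_sdiff_of_subset hB₀sub, hB₀card]
    calc Q.card = _ + _ := hQsplit.symm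
      _ ≤ (S₀.biUnion t).card * d + (B.card - S₀.card) * d := Nat.add_le_add h1 h2
      _ = ((S₀.biUnion t).card + (B.card - S₀.card)) * d := (Nat.add_mul _ _ _).symm
  rcases Nat.eq_zero_or_pos D with hD0 | hDpos
  · refine le_trans (count ∅) ?_
    apply Nat.mul_le_mul_right
    simp only [Finset.biUnion_empty, Finset.card_empty]
    omega
  · obtain ⟨S₀, _, hS₀eq⟩ := Finset.exists_mem_eq_sup Finset.univ ⟨∅, Finset.mem_univ ∅⟩
      (fun s : Finset {b // b ∈ B} => s.card - (s.biUnion t).card)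
    have hS₀le : S₀.card ≤ B.card := by
      have h1 : S₀.card ≤ Finset.univ.card := Finset.card_le_univ S₀
      have h2 : (Finset.univ : Finset {b // b ∈ B}).card = B.card := by
        rw [Finset.card_univ]; exact Fintype.card_coe B
      omega
    have hcount := count S₀
    have hDval : D = S₀.card - (S₀.biUnion t).card := by
      simpa using hS₀eq
    apply le_trans hcount
    apply Nat.mul_le_mul_right
    omega

end VGP6


namespace VGP7
open VGP VGP2 VGP3 VGP4 VGP5 VGP6

lemma line_eq_of_collinear {v x y : ℝ × ℝ} (hx : x ≠ v) (hy : y ≠ v)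
    (h : Collinear ℝ ({v, x, y} : Set (ℝ × ℝ))) :
    affineSpan ℝ ({v, x} : Set (ℝ × ℝ)) = affineSpan ℝ ({v, y} : Set (ℝ × ℝ)) := by
  apply le_antisymm
  · rw [affineSpan_le]
    intro z hz
    rcases hz with rfl | hz
    · exact left_mem_affineSpan_pair ℝ _ _
    · rw [Set.mem_singleton_iff] at hz; subst hz
      exact h.mem_affineSpan_of_mem_of_ne (by simp) (by simp) (by simp) (Ne.symm hy)
  · rw [affineSpan_le]
    intro z hz
    rcases hz with rfl | hz
    · exact left_mem_affineSpan_pair ℝ _ _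
    · rw [Set.mem_singleton_iff] at hz; subst hz
      exact h.mem_affineSpan_of_mem_of_ne (by simp) (by simp) (by simp) (Ne.symm hx)

lemma collinear_of_line_eq {v x y : ℝ × ℝ}
    (h : affineSpan ℝ ({v, x} : Set (ℝ × ℝ)) = affineSpan ℝ ({v, y} : Set (ℝ × ℝ))) :
    Collinear ℝ ({v, x, y} : Set (ℝ × ℝ)) := by
  apply collinear_of_subset_line (a := v) (b := x)
  intro z hz
  rcases hz with rfl | hz
  · exact left_mem_affineSpan_pair ℝ _ _
  · rcases hz with rfl | hz
    · exact right_mem_affineSpan_pair ℝ _ _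
    · rw [Set.mem_singleton_iff] at hz; subst hz
      rw [h]; exact right_mem_affineSpan_pair ℝ _ _

lemma exists_points (P : Finset (ℝ × ℝ)) (ℓ : ℕ) (hℓ : 2 ≤ ℓ)
    (hcol : AtMostCollinear P ℓ) {v w : ℝ × ℝ} (hv : v ∈ P) (hw : w ∈ P) (hvw : v ≠ w) :
    ∃ M : Finset (ℝ × ℝ), M ⊆ P ∧
      (∀ x ∈ M, ¬ Collinear ℝ ({v, w, x} : Set (ℝ × ℝ))) ∧
      (∀ x ∈ M, ∀ y ∈ M, x ≠ y →
        ¬ Collinear ℝ ({v, x, y} : Set (ℝ × ℝ)) ∧ ¬ Collinear ℝ ({w, x, y} : Set (ℝ × ℝ))) ∧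
      P.card ≤ M.card * (ℓ - 1) + ℓ := by
  classical
  set Q : Finset (ℝ × ℝ) := P.filter (fun x => ¬ Collinear ℝ ({v, w, x} : Set (ℝ × ℝ))) with hQ
  have hQmem : ∀ x ∈ Q, x ∈ P ∧ ¬ Collinear ℝ ({v, w, x} : Set (ℝ × ℝ)) := by
    intro x hx; exact Finset.mem_filter.mp hx
  have hQv : ∀ x ∈ Q, x ≠ v := by
    rintro x hx rfl
    exact (hQmem x hx).2 ((collinear_pair ℝ x w).subset (by intro z hz; simp at hz ⊢; tauto))
  have hQw : ∀ x ∈ Q, x ≠ w := by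
    rintro x hx rfl
    exact (hQmem x hx).2 ((collinear_pair ℝ v x).subset (by intro z hz; simp at hz ⊢; tauto))
  set f : ℝ × ℝ → AffineSubspace ℝ (ℝ × ℝ) := fun x => affineSpan ℝ ({v, x} : Set (ℝ × ℝ))
    with hf
  set g : ℝ × ℝ → AffineSubspace ℝ (ℝ × ℝ) := fun x => affineSpan ℝ ({w, x} : Set (ℝ × ℝ))
    with hg
  -- fiber bounds
  have hfib : ∀ (z : ℝ × ℝ) (F : ℝ × ℝ → AffineSubspace ℝ (ℝ × ℝ)),
      z ∈ P → (F = fun x => affineSpan ℝ ({z, x} : Set (ℝ × ℝ))) → (∀ x ∈ Q, x ≠ z) →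
      ∀ L, (Q.filter (fun x => F x = L)).card ≤ ℓ - 1 := by
    intro z F hzP hF hz L
    set Fb := Q.filter (fun x => F x = L) with hFb
    rcases Fb.eq_empty_or_nonempty with h | ⟨x₀, hx₀⟩
    · rw [h]; simp
    · have hx₀' := Finset.mem_filter.mp hx₀
      have hsub : (insert z Fb : Finset (ℝ × ℝ)) ⊆ P := by
        intro y hy
        rcases Finset.mem_insert.mp hy with rfl | hy
        · exact hzP
        · exact (hQmem y (Finset.mem_filter.mp hy).1).1
      have hcoll : Collinear ℝ ((insert z Fb : Finset (ℝ × ℝ)) : Set (ℝ × ℝ)) := by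
        apply collinear_of_subset_line (a := z) (b := x₀)
        intro y hy
        simp only [Finset.coe_insert, Set.mem_insert_iff, Finset.mem_coe] at hy
        rcases hy with rfl | hy
        · exact left_mem_affineSpan_pair ℝ _ _
        · have h1 := (Finset.mem_filter.mp hy).2
          have h2 := hx₀'.2
          have : F y = F x₀ := h1.trans h2.symm
          rw [hF] at this
          simp only at this
          have hy' : y ∈ affineSpan ℝ ({z, y} : Set (ℝ × ℝ)) := right_mem_affineSpan_pair ℝ _ _
          rw [this] at hy'
          exact hy'
      have hcard := hcol _ hsub hcoll
      have hzFb : z ∉ Fb := by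
        intro h
        exact hz z (Finset.mem_filter.mp h).1 rfl
      rw [Finset.card_insert_of_notMem hzFb] at hcard
      omega
  -- joint injectivity
  have hinj : ∀ x ∈ Q, ∀ y ∈ Q, f x = f y → g x = g y → x = y := by
    intro x hx y hy hfxy hgxy
    by_contra hxy
    apply (hQmem x hx).2
    have hcv : Collinear ℝ ({v, x, y} : Set (ℝ × ℝ)) := collinear_of_line_eq hfxy
    have hcw : Collinear ℝ ({w, x, y} : Set (ℝ × ℝ)) := collinear_of_line_eq hgxy
    have hvs : v ∈ affineSpan ℝ ({x, y} : Set (ℝ × ℝ)) :=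
      hcv.mem_affineSpan_of_mem_of_ne (by simp) (by simp) (by simp) hxy
    have hws : w ∈ affineSpan ℝ ({x, y} : Set (ℝ × ℝ)) :=
      hcw.mem_affineSpan_of_mem_of_ne (by simp) (by simp) (by simp) hxy
    apply collinear_of_subset_line (a := x) (b := y)
    intro z hz
    rcases hz with rfl | hz
    · exact hvs
    · rcases hz with rfl | hz
      · exact hws
      · rw [Set.mem_singleton_iff] at hz; subst hz
        exact left_mem_affineSpan_pair ℝ _ _
  obtain ⟨M, hMQ, hMf, hMg, hMcard⟩ := matching_lemma Q f g (ℓ - 1)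
    (hfib v f hv hf hQv) (hfib w g hw hg hQw) hinj
  have hPQ : P.card ≤ Q.card + ℓ := by
    have h1 : (P.filter (fun x => Collinear ℝ ({v, w, x} : Set (ℝ × ℝ)))).card ≤ ℓ := by
      apply hcol _ (Finset.filter_subset _ _)
      apply collinear_of_subset_line (a := v) (b := w)
      intro z hz
      rw [Finset.mem_coe, Finset.mem_filter] at hz
      exact hz.2.mem_affineSpan_of_mem_of_ne (by simp) (by simp) (by simp) hvw
    have h2 := Finset.card_filter_add_card_filter_not
      (s := P) (p := fun x => Collinear ℝ ({v, w, x} : Set (ℝ × ℝ)))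
    rw [hQ]
    omega
  refine ⟨M, fun x hx => (hQmem x (hMQ hx)).1, fun x hx => (hQmem x (hMQ hx)).2, ?_, by omega⟩
  intro x hx y hy hxy
  constructor
  · intro hc
    exact hxy (hMf (Finset.mem_coe.mpr hx) (Finset.mem_coe.mpr hy)
      (line_eq_of_collinear (hQv x (hMQ hx)) (hQv y (hMQ hy)) hc))
  · intro hc
    exact hxy (hMg (Finset.mem_coe.mpr hx) (Finset.mem_coe.mpr hy)
      (line_eq_of_collinear (hQw x (hMQ hx)) (hQw y (hMQ hy)) hc))

end VGP7


namespace VGP8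
open VGP VGP2 VGP3 VGP4 VGP5 VGP6 VGP7

lemma edge_core {P : Finset (ℝ × ℝ)} {e : Sym2 {p : ℝ × ℝ // p ∈ P}}
    (he : e ∈ (visibilityGraph P).edgeSet) {a b c d : ℝ × ℝ}
    (h1 : ∀ z ∈ e, (z : ℝ × ℝ) ∈ segment ℝ a b)
    (h2 : ∀ z ∈ e, (z : ℝ × ℝ) ∈ segment ℝ c d)
    (hnc : ¬ Collinear ℝ ({a, b, c, d} : Set (ℝ × ℝ))) : False := by
  induction e with
  | _ p q =>
    have hne : (p : ℝ × ℝ) ≠ (q : ℝ × ℝ) := ((SimpleGraph.mem_edgeSet _).mp he).1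
    exact hnc (collinear_four hne (h1 p (by simp)) (h1 q (by simp))
      (h2 p (by simp)) (h2 q (by simp)))

lemma main_paths (P : Finset (ℝ × ℝ)) (ℓ : ℕ) (hℓ : 2 ≤ ℓ)
    (hcol : AtMostCollinear P ℓ) (hP : ¬ Collinear ℝ (P : Set (ℝ × ℝ)))
    (k : ℕ) (hk : k = ⌈((P.card : ℝ) - 1) / ((ℓ : ℝ) - 1)⌉₊)
    (h3 : 3 ≤ P.card)
    (v w : {p : ℝ × ℝ // p ∈ P}) (hvw : v ≠ w) :
    ∃ f : Fin k → (visibilityGraph P).Walk v w,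
      (∀ i, (f i).IsPath ∧ OneBend P (f i)) ∧
      ∀ i j, i ≠ j → List.Disjoint (f i).edges (f j).edges := by
  classical
  obtain ⟨vv, hv⟩ := v
  obtain ⟨ww, hw⟩ := w
  have hvw' : vv ≠ ww := fun h => hvw (Subtype.ext h)
  have hl1 : (1:ℝ) ≤ (ℓ:ℝ) - 1 := by
    have : (2:ℝ) ≤ (ℓ:ℝ) := by exact_mod_cast hℓ
    linarith
  have hk1 : 1 ≤ k := by
    rw [hk]
    rw [Nat.one_le_ceil_iff]
    apply div_pos
    · have : (3:ℝ) ≤ (P.card : ℝ) := by exact_mod_cast h3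
      linarith
    · linarith
  obtain ⟨M, hMP, hM1, hM2, hMcard⟩ := exists_points P ℓ hℓ hcol hv hw hvw'
  have hkM : k - 1 ≤ M.card := by
    have hle : k ≤ M.card + 1 := by
      rw [hk, Nat.ceil_le]
      rw [div_le_iff₀ (by linarith)]
      have hcast : (P.card : ℝ) ≤ (M.card : ℝ) * ((ℓ:ℝ) - 1) + ℓ := by
        have h' : (P.card : ℝ) ≤ ((M.card * (ℓ - 1) + ℓ : ℕ) : ℝ) := Nat.cast_le.mpr hMcard
        rw [Nat.cast_add, Nat.cast_mul, Nat.cast_sub (by omega : 1 ≤ ℓ)] at h'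
        push_cast at h'
        linarith
      push_cast
      nlinarith
    omega
  obtain ⟨M', hM'M, hM'card⟩ := Finset.exists_subset_card_eq hkM
  set xs : List (ℝ × ℝ) := M'.toList with hxs
  have hxslen : xs.length = k - 1 := by rw [hxs, Finset.length_toList, hM'card]
  have hxsnodup : xs.Nodup := M'.nodup_toList
  have hxsM : ∀ x ∈ xs, x ∈ M := fun x hx => hM'M (Finset.mem_toList.mp hx)
  obtain ⟨W₀, hW₀path, hW₀seg, hW₀chain⟩ := exists_segWalk P hv hw hvw'
  have he₀ : ∀ e ∈ W₀.edges, ∀ z ∈ e, (z : ℝ × ℝ) ∈ segment ℝ vv ww :=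
    fun e he z hz => hW₀seg z (edge_endpoints_mem_support he z hz)
  have hOB₀ : OneBend P W₀ := by
    refine ⟨vv, [], W₀.support.map Subtype.val, by simp, ⟨by simp, List.isChain_nil⟩, ?_, ?_⟩
    · intro p hp
      obtain ⟨z, hz, rfl⟩ := List.mem_map.mp hp
      exact hW₀seg z hz
    · exact hW₀chain
  have hbw : ∀ x ∈ xs, ∃ W : (visibilityGraph P).Walk ⟨vv, hv⟩ ⟨ww, hw⟩,
      W.IsPath ∧ OneBend P W ∧
      ∀ e ∈ W.edges, (∀ z ∈ e, (z : ℝ × ℝ) ∈ segment ℝ vv x) ∨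
        (∀ z ∈ e, (z : ℝ × ℝ) ∈ segment ℝ x ww) :=
    fun x hx => exists_bentWalk P hv hw (hMP (hxsM x hx)) (hM1 x (hxsM x hx))
  set wt : List ((visibilityGraph P).Walk ⟨vv, hv⟩ ⟨ww, hw⟩) :=
    xs.pmap (fun x hx => (hbw x hx).choose) (fun x hx => hx) with hwt
  have hwtlen : wt.length = k - 1 := by rw [hwt, List.length_pmap, hxslen]
  set walks : List ((visibilityGraph P).Walk ⟨vv, hv⟩ ⟨ww, hw⟩) := W₀ :: wt with hwalks
  have hlen : walks.length = k := by
    rw [hwalks, List.length_cons, hwtlen]; omega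
  have hwtmem : ∀ W ∈ wt, ∃ x ∈ xs, x ∈ M ∧ W.IsPath ∧ OneBend P W ∧
      ∀ e ∈ W.edges, (∀ z ∈ e, (z : ℝ × ℝ) ∈ segment ℝ vv x) ∨
        (∀ z ∈ e, (z : ℝ × ℝ) ∈ segment ℝ x ww) := by
    intro W hW
    obtain ⟨x, hx, hWx⟩ := List.mem_pmap.mp (hwt ▸ hW)
    obtain ⟨hp, hob, hec⟩ := (hbw x hx).choose_spec
    exact ⟨x, hx, hxsM x hx, hWx ▸ hp, hWx ▸ hob, hWx ▸ hec⟩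
  have hgood : ∀ W ∈ walks, W.IsPath ∧ OneBend P W := by
    intro W hW
    rcases List.mem_cons.mp hW with rfl | hW
    · exact ⟨hW₀path, hOB₀⟩
    · obtain ⟨x, _, _, hp, hob, _⟩ := hwtmem W hW
      exact ⟨hp, hob⟩
  -- pairwise disjointness
  have hsubcol : ∀ {S T : Set (ℝ × ℝ)}, S ⊆ T → ¬ Collinear ℝ S → ¬ Collinear ℝ T :=
    fun hST hS hT => hS (hT.subset hST)
  have hdisj0 : ∀ W ∈ wt, List.Disjoint W₀.edges W.edges := by
    intro W hW e he0 heW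
    obtain ⟨x, _, hxM, _, _, hec⟩ := hwtmem W hW
    have heE := W₀.edges_subset_edgeSet he0
    rcases hec e heW with h | h
    · exact edge_core heE (he₀ e he0) h
        (hsubcol (by intro z hz; simp at hz ⊢; tauto) (hM1 x hxM))
    · exact edge_core heE (he₀ e he0) h
        (hsubcol (by intro z hz; simp at hz ⊢; tauto) (hM1 x hxM))
  have hdisjt : List.Pairwise (fun W W' => List.Disjoint W.edges W'.edges) wt := by
    rw [hwt]
    apply List.Pairwise.pmap hxsnodup
    intro x hx y hy hxy
    obtain ⟨hpx, hobx, hecx⟩ := (hbw x hx).choose_spec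
    obtain ⟨hpy, hoby, hecy⟩ := (hbw y hy).choose_spec
    intro e hex hey
    have heE := ((hbw x hx).choose).edges_subset_edgeSet hex
    have hc1 := (hM2 x (hxsM x hx) y (hxsM y hy) hxy).1
    have hc2 := (hM2 x (hxsM x hx) y (hxsM y hy) hxy).2
    have hcx := hM1 x (hxsM x hx)
    rcases hecx e hex with h1 | h1 <;> rcases hecy e hey with h2 | h2
    · exact edge_core heE h1 h2 (hsubcol (by intro z hz; simp at hz ⊢; tauto) hc1)
    · exact edge_core heE h1 h2 (hsubcol (by intro z hz; simp at hz ⊢; tauto) hcx)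
    · exact edge_core heE h1 h2 (hsubcol (by intro z hz; simp at hz ⊢; tauto) hcx)
    · exact edge_core heE h1 h2 (hsubcol (by intro z hz; simp at hz ⊢; tauto) hc2)
  have hpair : List.Pairwise (fun W W' => List.Disjoint W.edges W'.edges) walks :=
    List.pairwise_cons.mpr ⟨hdisj0, hdisjt⟩
  refine ⟨fun i => walks.get ⟨i.1, by rw [hlen]; exact i.2⟩, ?_, ?_⟩
  · intro i
    exact hgood _ (List.get_mem _ _)
  · intro i j hij
    have hvals : i.1 ≠ j.1 := fun h => hij (Fin.ext h)
    have hget := List.pairwise_iff_get.mp hpair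
    rcases lt_or_gt_of_ne hvals with h | h
    · exact hget ⟨i.1, by rw [hlen]; exact i.2⟩ ⟨j.1, by rw [hlen]; exact j.2⟩ h
    · exact List.disjoint_symm
        (hget ⟨j.1, by rw [hlen]; exact j.2⟩ ⟨i.1, by rw [hlen]; exact i.2⟩ h)

end VGP8

/-- Let `G` be the visibility graph of a set of `n` points, at most `ℓ` of which are
collinear (`ℓ ≥ 2`, points not all collinear). Then `G` is `⌈(n-1)/(ℓ-1)⌉`-edge-connected,
and between each pair of distinct vertices there are `⌈(n-1)/(ℓ-1)⌉` pairwise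
edge-disjoint paths, each with at most one bend. -/
theorem visibility_edgeConnected_one_bend
    (P : Finset (ℝ × ℝ)) (ℓ : ℕ) (hℓ : 2 ≤ ℓ)
    (hcol : AtMostCollinear P ℓ) (hP : ¬ Collinear ℝ (P : Set (ℝ × ℝ)))
    (k : ℕ) (hk : k = ⌈((P.card : ℝ) - 1) / ((ℓ : ℝ) - 1)⌉₊) :
    IsKEdgeConnected (visibilityGraph P) k ∧
    ∀ v w : {p : ℝ × ℝ // p ∈ P}, v ≠ w →
      ∃ f : Fin k → (visibilityGraph P).Walk v w,
        (∀ i, (f i).IsPath ∧ OneBend P (f i)) ∧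
        ∀ i j, i ≠ j → List.Disjoint (f i).edges (f j).edges := by
  classical
  have h3 : 3 ≤ P.card := by
    by_contra h
    apply hP
    have h2 : P.card = 0 ∨ P.card = 1 ∨ P.card = 2 := by omega
    rcases h2 with h2 | h2 | h2
    · rw [Finset.card_eq_zero] at h2
      rw [h2, Finset.coe_empty]
      exact collinear_empty ℝ _
    · obtain ⟨a, rfl⟩ := Finset.card_eq_one.mp h2
      rw [Finset.coe_singleton]
      exact collinear_singleton ℝ a
    · obtain ⟨a, b, _, rfl⟩ := Finset.card_eq_two.mp h2
      rw [Finset.coe_insert, Finset.coe_singleton]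
      exact collinear_pair ℝ a b
  have hmain := VGP8.main_paths P ℓ hℓ hcol hP k hk h3
  refine ⟨⟨?_, ?_⟩, fun v w hvw => hmain v w hvw⟩
  · have : Nat.card {p : ℝ × ℝ // p ∈ P} = P.card := by
      rw [Nat.card_eq_fintype_card, Fintype.card_coe]
    omega
  · intro F hF hFk
    obtain ⟨p, hp⟩ := Finset.card_pos.mp (by omega : 0 < P.card)
    have hFin : Finite ↥F := by
      have : Finite (Sym2 {p : ℝ × ℝ // p ∈ P}) := by infer_instance
      exact Set.toFinite F
    rw [SimpleGraph.connected_iff]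
    refine ⟨?_, ⟨⟨p, hp⟩⟩⟩
    intro u v
    by_cases huv : u = v
    · subst huv; exact SimpleGraph.Reachable.refl u
    · obtain ⟨f, hgood, hdisj⟩ := hmain u v huv
      have hfree : ∃ i : Fin k, ∀ e ∈ (f i).edges, e ∉ F := by
        by_contra h
        push_neg at h
        have hchoice : ∀ i : Fin k, ∃ e, e ∈ (f i).edges ∧ e ∈ F := by
          intro i
          exact h i
        set φ : Fin k → ↥F := fun i => ⟨(hchoice i).choose, (hchoice i).choose_spec.2⟩
          with hφ
        have hinj : Function.Injective φ := by
          intro i j hij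
          by_contra hne
          have h1 := (hchoice i).choose_spec.1
          have h2 := (hchoice j).choose_spec.1
          have : (hchoice i).choose = (hchoice j).choose := congrArg Subtype.val hij
          rw [this] at h1
          exact hdisj i j hne h1 h2
        have := Nat.card_le_card_of_injective φ hinj
        rw [Nat.card_eq_fintype_card (α := Fin k), Fintype.card_fin] at this
        omega
      obtain ⟨i, hi⟩ := hfree
      exact ⟨(f i).toDeleteEdges F hi⟩
end

section
/- For a visibility graph G with at least 2 vertices, the following conditions are equivalent: (1) the vertices of G are not all collinear; (2) G has vertex-connectivity at least 2; (3) G has edge-connectivity at least 2; (4) G has minimum degree at least 2. -/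
/-- The minimum degree of a graph: the least number of neighbours of a vertex
(degree measured by `Nat.card` of the neighbour set). -/
noncomputable def minDegree' {V : Type*} (G : SimpleGraph V) : ℕ :=
  sInf {d | ∃ v : V, d = Nat.card (G.neighborSet v)}

/-- The vertex-connectivity of a graph: the least number of vertices whose deletion
disconnects the graph or reduces it to at most one vertex. -/
noncomputable def vertConn {V : Type*} (G : SimpleGraph V) : ℕ :=
  sInf {k | ∃ S : Set V, Nat.card S = k ∧
    (¬ (G.induce Sᶜ).Connected ∨ Nat.card (Sᶜ : Set V) ≤ 1)}

/-- The edge-connectivity of a graph: the least size of a set of edges whose removal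
disconnects the graph. -/
noncomputable def edgeConn {V : Type*} (G : SimpleGraph V) : ℕ :=
  sInf {k | ∃ F : Set (Sym2 V), F ⊆ G.edgeSet ∧ Nat.card F = k ∧
    ¬ (G.deleteEdges F).Connected}

/- ========================= auxiliary development ========================= -/

open scoped Classical

namespace VisibilityAux

/-- signed cross product / twice the signed area of the triangle `x y p`. -/
def cross (x y p : ℝ × ℝ) : ℝ := (y.1 - x.1) * (p.2 - x.2) - (y.2 - x.2) * (p.1 - x.1)

lemma cross_self_left (x y : ℝ × ℝ) : cross x y x = 0 := by simp [cross]

lemma cross_self_right (x y : ℝ × ℝ) : cross x y y = 0 := by simp [cross]; ring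

lemma cross_combo (x y u w p : ℝ × ℝ) (a b : ℝ) (hab : a + b = 1)
    (hp : a • u + b • w = p) : cross x y p = a * cross x y u + b * cross x y w := by
  have h1 : p.1 = a * u.1 + b * w.1 := by rw [← hp]; rfl
  have h2 : p.2 = a * u.2 + b * w.2 := by rw [← hp]; rfl
  have hb : b = 1 - a := by linarith
  subst hb
  simp only [cross, h1, h2]; ring

lemma cross_eq_zero_of_openSegment {x y p : ℝ × ℝ} (h : p ∈ openSegment ℝ x y) :
    cross x y p = 0 := by
  obtain ⟨a, b, _, _, hab, hp⟩ := h
  rw [cross_combo x y x y p a b hab hp, cross_self_left, cross_self_right]; ring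

lemma collinear_of_cross {P : Finset (ℝ × ℝ)} {x y : ℝ × ℝ} (hx : x ∈ P) (hxy : x ≠ y)
    (h : ∀ p ∈ P, cross x y p = 0) : Collinear ℝ (P : Set (ℝ × ℝ)) := by
  rw [collinear_iff_of_mem (show x ∈ (P : Set (ℝ×ℝ)) from hx)]
  refine ⟨y - x, fun p hp => ?_⟩
  have hc := h p hp
  simp only [cross] at hc
  rcases eq_or_ne (y.1 - x.1) 0 with h1 | h1
  · have h2 : y.2 - x.2 ≠ 0 := by
      intro h2
      apply hxy
      have e1 : y.1 = x.1 := by linarith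
      have e2 : y.2 = x.2 := by linarith
      exact Prod.ext e1.symm e2.symm
    refine ⟨(p.2 - x.2) / (y.2 - x.2), ?_⟩
    have hp1 : p.1 - x.1 = 0 := by
      have hz : (y.2 - x.2) * (p.1 - x.1) = 0 := by rw [h1] at hc; linarith
      rcases mul_eq_zero.mp hz with h | h
      · exact absurd h h2
      · exact h
    apply Prod.ext
    · show p.1 = (p.2 - x.2) / (y.2 - x.2) * (y.1 - x.1) + x.1
      rw [h1]; simp; linarith
    · show p.2 = (p.2 - x.2) / (y.2 - x.2) * (y.2 - x.2) + x.2
      field_simp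
      ring
  · refine ⟨(p.1 - x.1) / (y.1 - x.1), ?_⟩
    apply Prod.ext
    · show p.1 = (p.1 - x.1) / (y.1 - x.1) * (y.1 - x.1) + x.1
      field_simp
      ring
    · show p.2 = (p.1 - x.1) / (y.1 - x.1) * (y.2 - x.2) + x.2
      field_simp
      nlinarith [hc]

/-- detour point: a point off the line `x y`, visible from both `x` and `y`. -/
lemma detour {P : Finset (ℝ × ℝ)} {x y : ℝ × ℝ} (hP : ¬ Collinear ℝ (P : Set (ℝ × ℝ)))
    (hx : x ∈ P) (hy : y ∈ P) (hxy : x ≠ y) :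
    ∃ q ∈ P, cross x y q ≠ 0 ∧ VisAdj P x q ∧ VisAdj P y q := by
  have hQ : (P.filter (fun p => cross x y p ≠ 0)).Nonempty := by
    rw [Finset.filter_nonempty_iff]
    by_contra h; push_neg at h
    exact hP (collinear_of_cross hx hxy h)
  obtain ⟨q, hqm, hqmin⟩ := Finset.exists_min_image _ (fun p => |cross x y p|) hQ
  rw [Finset.mem_filter] at hqm
  obtain ⟨hqP, hqc⟩ := hqm
  have key : ∀ z : ℝ × ℝ, cross x y z = 0 → VisAdj P z q := by
    intro z hz
    have hzq : z ≠ q := fun h => hqc (h ▸ hz)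
    refine ⟨hzq, fun p hp hmem => ?_⟩
    obtain ⟨a, b, ha, hb, hab, hpeq⟩ := hmem
    have hcp : cross x y p = b * cross x y q := by
      rw [cross_combo x y z q p a b hab hpeq, hz]; ring
    have hpc : cross x y p ≠ 0 := by
      rw [hcp]; exact mul_ne_zero (ne_of_gt hb) hqc
    have hmem2 : p ∈ P.filter (fun p => cross x y p ≠ 0) := Finset.mem_filter.mpr ⟨hp, hpc⟩
    have := hqmin p hmem2
    have hlt : |cross x y p| < |cross x y q| := by
      rw [hcp, abs_mul, abs_of_pos hb]
      have : |cross x y q| > 0 := abs_pos.mpr hqc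
      nlinarith
    linarith
  refine ⟨q, hqP, hqc, ?_, ?_⟩
  · exact key x (cross_self_left x y)
  · exact key y (cross_self_right x y)

/-- every vertex sees its nearest neighbour. -/
lemma nearest_visible {P : Finset (ℝ × ℝ)} {v : ℝ × ℝ}
    (h2 : (P.erase v).Nonempty) : ∃ n ∈ P, VisAdj P v n := by
  obtain ⟨n, hnm, hnmin⟩ := Finset.exists_min_image (P.erase v) (fun p => dist p v) h2
  have hnP : n ∈ P := Finset.mem_of_mem_erase hnm
  have hnv : n ≠ v := Finset.ne_of_mem_erase hnm
  refine ⟨n, hnP, hnv.symm, fun p hp hmem => ?_⟩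
  obtain ⟨a, b, ha, hb, hab, hpeq⟩ := hmem
  have hpv : p - v = b • (n - v) := by
    rw [← hpeq]; have : a = 1 - b := by linarith
    rw [this]; module
  have hd : dist p v = b * dist n v := by
    rw [dist_eq_norm, dist_eq_norm, hpv, norm_smul, Real.norm_eq_abs, abs_of_pos hb]
  have hdn : (0:ℝ) < dist n v := dist_pos.mpr hnv
  have hpv' : p ≠ v := by
    intro h; rw [h, dist_self] at hd; nlinarith
  have hpm : p ∈ P.erase v := Finset.mem_erase.mpr ⟨hpv', hp⟩
  have := hnmin p hpm
  nlinarith [hb.le, hab]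

lemma not_mem_segment_left {x y p : ℝ × ℝ} (hxy : x ≠ y) (h : p ∈ openSegment ℝ x y) :
    y ∉ segment ℝ x p := by
  obtain ⟨a, b, ha, hb, hab, hpeq⟩ := h
  rintro ⟨c, d, hc, hd, hcd, hyeq⟩
  apply hxy
  have e1a : p.1 = a * x.1 + b * y.1 := (congrArg Prod.fst hpeq).symm
  have e1b : p.2 = a * x.2 + b * y.2 := (congrArg Prod.snd hpeq).symm
  have e2a : y.1 = c * x.1 + d * p.1 := (congrArg Prod.fst hyeq).symm
  have e2b : y.2 = c * x.2 + d * p.2 := (congrArg Prod.snd hyeq).symm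
  have hne : (1 : ℝ) - d * b ≠ 0 := by nlinarith
  have g1 : (1 - d * b) * (y.1 - x.1) = 0 := by
    linear_combination e2a + d * e1a + x.1 * hcd + x.1 * d * hab
  have g2 : (1 - d * b) * (y.2 - x.2) = 0 := by
    linear_combination e2b + d * e1b + x.2 * hcd + x.2 * d * hab
  have hy1 : y.1 = x.1 := by
    rcases mul_eq_zero.mp g1 with h | h
    · exact absurd h hne
    · linarith
  have hy2 : y.2 = x.2 := by
    rcases mul_eq_zero.mp g2 with h | h
    · exact absurd h hne
    · linarith
  exact (Prod.ext hy1 hy2).symm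

lemma not_mem_segment_right {x y p : ℝ × ℝ} (hxy : x ≠ y) (h : p ∈ openSegment ℝ x y) :
    x ∉ segment ℝ p y := by
  have := not_mem_segment_left hxy.symm (by rwa [openSegment_symm] at h)
  rwa [segment_symm] at this

noncomputable def mes (P : Finset (ℝ × ℝ)) (x y : ℝ × ℝ) : ℕ :=
  (P.filter (fun p => p ∈ segment ℝ x y)).card

lemma mes_lt_left {P : Finset (ℝ × ℝ)} {x y p : ℝ × ℝ} (hy : y ∈ P) (hxy : x ≠ y)
    (hp : p ∈ openSegment ℝ x y) : mes P x p < mes P x y := by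
  apply Finset.card_lt_card
  constructor
  · intro z hz
    rw [Finset.mem_filter] at hz ⊢
    exact ⟨hz.1, (convex_segment x y).segment_subset (left_mem_segment ℝ x y)
      (openSegment_subset_segment ℝ x y hp) hz.2⟩
  · intro hsub
    have hym : y ∈ P.filter (fun q => q ∈ segment ℝ x y) :=
      Finset.mem_filter.mpr ⟨hy, right_mem_segment ℝ x y⟩
    have := hsub hym
    rw [Finset.mem_filter] at this
    exact not_mem_segment_left hxy hp this.2

lemma mes_lt_right {P : Finset (ℝ × ℝ)} {x y p : ℝ × ℝ} (hx : x ∈ P) (hxy : x ≠ y)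
    (hp : p ∈ openSegment ℝ x y) : mes P p y < mes P x y := by
  apply Finset.card_lt_card
  constructor
  · intro z hz
    rw [Finset.mem_filter] at hz ⊢
    exact ⟨hz.1, (convex_segment x y).segment_subset
      (openSegment_subset_segment ℝ x y hp) (right_mem_segment ℝ x y) hz.2⟩
  · intro hsub
    have hxm : x ∈ P.filter (fun q => q ∈ segment ℝ x y) :=
      Finset.mem_filter.mpr ⟨hx, left_mem_segment ℝ x y⟩
    have := hsub hxm
    rw [Finset.mem_filter] at this
    exact not_mem_segment_right hxy hp this.2

lemma vertex_reach (P : Finset (ℝ × ℝ)) (hP : ¬ Collinear ℝ (P : Set (ℝ × ℝ)))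
    (S : Set {p : ℝ × ℝ // p ∈ P}) (hS : S.Subsingleton) :
    ∀ (n : ℕ) (x y : ↥(Sᶜ)), mes P x.1.1 y.1.1 ≤ n →
      (((visibilityGraph P).induce Sᶜ)).Reachable x y := by
  intro n
  induction n with
  | zero =>
    intro x y hm
    exfalso
    have : x.1.1 ∈ P.filter (fun p => p ∈ segment ℝ x.1.1 y.1.1) :=
      Finset.mem_filter.mpr ⟨x.1.2, left_mem_segment ℝ _ _⟩
    have := Finset.card_pos.mpr ⟨_, this⟩
    simp only [mes] at hm; omega
  | succ n ih =>
    intro x y hm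
    by_cases hxy : x = y
    · exact hxy ▸ SimpleGraph.Reachable.refl x
    have hxy1 : x.1.1 ≠ y.1.1 := by
      intro h; exact hxy (Subtype.ext (Subtype.ext h))
    by_cases hvis : VisAdj P x.1.1 y.1.1
    · exact SimpleGraph.Adj.reachable hvis
    by_cases hblock : ∃ u : {p : ℝ × ℝ // p ∈ P}, u.1 ∈ openSegment ℝ x.1.1 y.1.1 ∧ u ∈ Sᶜ
    · obtain ⟨u, hu1, hu2⟩ := hblock
      have h1 : mes P x.1.1 u.1 ≤ n := by
        have := mes_lt_left y.1.2 hxy1 hu1; omega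
      have h2 : mes P u.1 y.1.1 ≤ n := by
        have := mes_lt_right x.1.2 hxy1 hu1; omega
      exact (ih x ⟨u, hu2⟩ h1).trans (ih ⟨u, hu2⟩ y h2)
    · push_neg at hblock
      have hvis' : ∃ p ∈ P, p ∈ openSegment ℝ x.1.1 y.1.1 := by
        by_contra h; push_neg at h
        exact hvis ⟨hxy1, h⟩
      obtain ⟨p₀, hp₀P, hp₀s⟩ := hvis'
      have hp₀S : (⟨p₀, hp₀P⟩ : {p : ℝ × ℝ // p ∈ P}) ∈ S := by
        by_contra h
        exact (hblock ⟨p₀, hp₀P⟩ hp₀s) h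
      obtain ⟨q, hqP, hqc, hv1, hv2⟩ := detour hP x.1.2 y.1.2 hxy1
      have hqS : (⟨q, hqP⟩ : {p : ℝ × ℝ // p ∈ P}) ∈ Sᶜ := by
        intro hmem
        have := hS hmem hp₀S
        have hq0 : q = p₀ := congrArg Subtype.val this
        rw [hq0] at hqc
        exact hqc (cross_eq_zero_of_openSegment hp₀s)
      have a1 : ((visibilityGraph P).induce Sᶜ).Adj x ⟨⟨q, hqP⟩, hqS⟩ := hv1
      have a2 : ((visibilityGraph P).induce Sᶜ).Adj ⟨⟨q, hqP⟩, hqS⟩ y :=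
        (visibilityGraph P).symm.symm y.1 ⟨q, hqP⟩ hv2
      exact a1.reachable.trans a2.reachable

lemma edge_reach (P : Finset (ℝ × ℝ)) (hP : ¬ Collinear ℝ (P : Set (ℝ × ℝ)))
    (F : Set (Sym2 {p : ℝ × ℝ // p ∈ P})) (hF : F.Subsingleton) :
    ∀ (n : ℕ) (x y : {p : ℝ × ℝ // p ∈ P}), mes P x.1 y.1 ≤ n →
      ((visibilityGraph P).deleteEdges F).Reachable x y := by
  intro n
  induction n with
  | zero =>
    intro x y hm
    exfalso
    have : x.1 ∈ P.filter (fun p => p ∈ segment ℝ x.1 y.1) :=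
      Finset.mem_filter.mpr ⟨x.2, left_mem_segment ℝ _ _⟩
    have := Finset.card_pos.mpr ⟨_, this⟩
    simp only [mes] at hm; omega
  | succ n ih =>
    intro x y hm
    by_cases hxy : x = y
    · exact hxy ▸ SimpleGraph.Reachable.refl x
    have hxy1 : x.1 ≠ y.1 := fun h => hxy (Subtype.ext h)
    by_cases hvis : VisAdj P x.1 y.1
    · by_cases he : s(x, y) ∈ F
      · obtain ⟨q, hqP, hqc, hv1, hv2⟩ := detour hP x.2 y.2 hxy1
        have hqx : (⟨q, hqP⟩ : {p : ℝ × ℝ // p ∈ P}) ≠ x := by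
          intro h
          apply hqc
          have : q = x.1 := congrArg Subtype.val h
          rw [this]; simp [cross]
        have hqy : (⟨q, hqP⟩ : {p : ℝ × ℝ // p ∈ P}) ≠ y := by
          intro h
          apply hqc
          have : q = y.1 := congrArg Subtype.val h
          rw [this]; simp [cross]; ring
        have a1 : ((visibilityGraph P).deleteEdges F).Adj x ⟨q, hqP⟩ := by
          rw [SimpleGraph.deleteEdges_adj]
          refine ⟨hv1, fun hmem => ?_⟩
          have := hF hmem he
          rw [Sym2.eq_iff] at this
          rcases this with ⟨_, h2⟩ | ⟨h1, h2⟩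
          · exact hqy h2
          · exact hxy h1
        have a2 : ((visibilityGraph P).deleteEdges F).Adj ⟨q, hqP⟩ y := by
          rw [SimpleGraph.deleteEdges_adj]
          refine ⟨(visibilityGraph P).symm.symm y ⟨q, hqP⟩ hv2, fun hmem => ?_⟩
          have := hF hmem he
          rw [Sym2.eq_iff] at this
          rcases this with ⟨h1, _⟩ | ⟨h1, h2⟩
          · exact hqx h1
          · exact hqy h1
        exact a1.reachable.trans a2.reachable
      · exact SimpleGraph.Adj.reachable
          (SimpleGraph.deleteEdges_adj.mpr ⟨hvis, he⟩)
    · have hvis' : ∃ p ∈ P, p ∈ openSegment ℝ x.1 y.1 := by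
        by_contra h; push_neg at h
        exact hvis ⟨hxy1, h⟩
      obtain ⟨p₀, hp₀P, hp₀s⟩ := hvis'
      have h1 : mes P x.1 p₀ ≤ n := by
        have := mes_lt_left y.2 hxy1 hp₀s; omega
      have h2 : mes P p₀ y.1 ≤ n := by
        have := mes_lt_right x.2 hxy1 hp₀s; omega
      exact (ih x ⟨p₀, hp₀P⟩ h1).trans (ih ⟨p₀, hp₀P⟩ y h2)

/-- In a collinear set with ≥ 2 points there is an "endpoint" `e` whose unique
neighbour `n` blocks every other point. -/
lemma collinear_endpoint {P : Finset (ℝ × ℝ)} (hcol : Collinear ℝ (P : Set (ℝ × ℝ)))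
    (hcard : 2 ≤ P.card) :
    ∃ e n : ℝ × ℝ, e ∈ P ∧ n ∈ P ∧ e ≠ n ∧ VisAdj P e n ∧
      ∀ q ∈ P, q ≠ e → q ≠ n → n ∈ openSegment ℝ e q := by
  obtain ⟨x, hx, y, hy, hxyne⟩ := Finset.one_lt_card.mp (show 1 < P.card by omega)
  obtain ⟨d, hd⟩ := (collinear_iff_of_mem (show x ∈ (P : Set (ℝ × ℝ)) from hx)).mp hcol
  set f : ℝ × ℝ → ℝ := fun p => (p.1 - x.1) * d.1 + (p.2 - x.2) * d.2 with hf
  set c : ℝ := d.1 ^ 2 + d.2 ^ 2 with hc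
  have hrep : ∀ p ∈ P, ∃ r : ℝ, p = r • d + x ∧ f p = r * c := by
    intro p hp
    obtain ⟨r, hr⟩ := hd p hp
    refine ⟨r, ?_, ?_⟩
    · rw [hr]; rfl
    · have h1 : p.1 = r * d.1 + x.1 := by rw [hr]; rfl
      have h2 : p.2 = r * d.2 + x.2 := by rw [hr]; rfl
      simp only [hf, hc, h1, h2]; ring
  have hdne : d ≠ 0 := by
    intro h
    obtain ⟨r, hr, -⟩ := hrep y hy
    apply hxyne.symm
    rw [hr, h, smul_zero, zero_add]
  have hcpos : 0 < c := by
    have hd12 : d.1 ≠ 0 ∨ d.2 ≠ 0 := by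
      by_contra h; push_neg at h; exact hdne (Prod.ext h.1 h.2)
    rcases hd12 with h | h
    · simp only [hc]; nlinarith [sq_nonneg d.2, pow_pos (abs_pos.mpr h) 2, sq_abs d.1]
    · simp only [hc]; nlinarith [sq_nonneg d.1, pow_pos (abs_pos.mpr h) 2, sq_abs d.2]
  have hinj : ∀ p ∈ P, ∀ q ∈ P, f p = f q → p = q := by
    intro p hp q hq hfe
    obtain ⟨r, hr, hfr⟩ := hrep p hp
    obtain ⟨r', hr', hfr'⟩ := hrep q hq
    have : r = r' := by
      rw [hfr, hfr'] at hfe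
      exact mul_right_cancel₀ (ne_of_gt hcpos) hfe
    rw [hr, hr', this]
  have hfcombo : ∀ (u w p : ℝ × ℝ) (a b : ℝ), a + b = 1 → a • u + b • w = p →
      f p = a * f u + b * f w := by
    intro u w p a b hab hp
    have h1 : p.1 = a * u.1 + b * w.1 := by rw [← hp]; rfl
    have h2 : p.2 = a * u.2 + b * w.2 := by rw [← hp]; rfl
    have hb : b = 1 - a := by linarith
    subst hb
    simp only [hf, h1, h2]; ring
  have hPne : P.Nonempty := ⟨x, hx⟩
  obtain ⟨e, heP, hemin⟩ := Finset.exists_min_image P f hPne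
  have hePe : (P.erase e).Nonempty := by
    rw [← Finset.card_pos, Finset.card_erase_of_mem heP]; omega
  obtain ⟨n, hnm, hnmin⟩ := Finset.exists_min_image (P.erase e) f hePe
  have hnP : n ∈ P := Finset.mem_of_mem_erase hnm
  have hne : n ≠ e := Finset.ne_of_mem_erase hnm
  have helt : ∀ p ∈ P, p ≠ e → f e < f p := by
    intro p hp hpe
    rcases lt_or_eq_of_le (hemin p hp) with h | h
    · exact h
    · exact absurd (hinj p hp e heP h.symm) hpe
  have hnlt : ∀ q ∈ P, q ≠ e → q ≠ n → f n < f q := by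
    intro q hq hqe hqn
    rcases lt_or_eq_of_le (hnmin q (Finset.mem_erase.mpr ⟨hqe, hq⟩)) with h | h
    · exact h
    · exact absurd (hinj q hq n hnP h.symm) hqn
  have hen : f e < f n := helt n hnP hne
  have hblock : ∀ q ∈ P, q ≠ e → q ≠ n → n ∈ openSegment ℝ e q := by
    intro q hq hqe hqn
    obtain ⟨re, hre, hfre⟩ := hrep e heP
    obtain ⟨rn, hrn, hfrn⟩ := hrep n hnP
    obtain ⟨rq, hrq, hfrq⟩ := hrep q hq
    have hq1 : f n < f q := hnlt q hq hqe hqn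
    have hrelt : re < rn := by
      rw [hfre, hfrn] at hen; exact lt_of_mul_lt_mul_right (by linarith) hcpos.le
    have hrnlt : rn < rq := by
      rw [hfrn, hfrq] at hq1; exact lt_of_mul_lt_mul_right (by linarith) hcpos.le
    have hqe' : rq - re > 0 := by linarith
    refine ⟨(rq - rn) / (rq - re), (rn - re) / (rq - re), div_pos (by linarith) (by linarith),
      div_pos (by linarith) (by linarith), by field_simp; ring, ?_⟩
    have key : ((rq - rn) / (rq - re)) • e + ((rn - re) / (rq - re)) • q
        = (((rq - rn) / (rq - re)) * re + ((rn - re) / (rq - re)) * rq) • d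
          + (((rq - rn) / (rq - re)) + ((rn - re) / (rq - re))) • x := by
      rw [hre, hrq]; module
    rw [key]
    have h1 : ((rq - rn) / (rq - re)) * re + ((rn - re) / (rq - re)) * rq = rn := by
      field_simp; ring
    have h2 : ((rq - rn) / (rq - re)) + ((rn - re) / (rq - re)) = 1 := by
      field_simp
      ring
    rw [h1, h2, one_smul, ← hrn]
  have hvis : VisAdj P e n := by
    refine ⟨hne.symm, fun p hp hmem => ?_⟩
    obtain ⟨a, b, ha, hb, hab, hpeq⟩ := hmem
    have hfp : f p = a * f e + b * f n := hfcombo e n p a b hab hpeq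
    have key1 : f p - f e = b * (f n - f e) := by linear_combination hfp + f e * hab
    have key2 : f n - f p = a * (f n - f e) := by linear_combination -hfp - f n * hab
    have hpe : f e < f p := by nlinarith [mul_pos hb (sub_pos.mpr hen)]
    have hpn : f p < f n := by nlinarith [mul_pos ha (sub_pos.mpr hen)]
    have hpe' : p ≠ e := fun h => by rw [h] at hpe; linarith
    have hpn' : p ≠ n := fun h => by rw [h] at hpn; linarith
    have := hnlt p hp hpe' hpn'
    linarith
  exact ⟨e, n, heP, hnP, hne.symm, hvis, hblock⟩

end VisibilityAux

open VisibilityAux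

section Implications

variable {P : Finset (ℝ × ℝ)}

lemma card_vertices (P : Finset (ℝ × ℝ)) : Nat.card {p : ℝ × ℝ // p ∈ P} = P.card := by
  simp [Nat.card_eq_fintype_card, Fintype.card_coe]

lemma noncol_card3 (hP : 2 ≤ P.card) (h : ¬ Collinear ℝ (P : Set (ℝ × ℝ))) :
    3 ≤ P.card := by
  by_contra hc
  have h2 : P.card = 2 := by omega
  obtain ⟨a, b, hab, hPeq⟩ := Finset.card_eq_two.mp h2
  apply h
  rw [hPeq]
  simp only [Finset.coe_insert, Finset.coe_singleton]
  exact collinear_pair ℝ a b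


lemma not_connected_of_isolated {V : Type*} {G : SimpleGraph V} {u v : V} (huv : u ≠ v)
    (h : ∀ w, ¬ G.Adj u w) : ¬ G.Connected := by
  intro hcon
  obtain ⟨p⟩ := hcon.preconnected u v
  exact h _ ((p.firstDart (SimpleGraph.Walk.not_nil_of_ne huv)).adj)

/-- noncollinear implies vertex connectivity at least 2 -/
lemma vert_ge_two (hP : 2 ≤ P.card) (h : ¬ Collinear ℝ (P : Set (ℝ × ℝ))) :
    2 ≤ vertConn (visibilityGraph P) := by
  have h3 := noncol_card3 hP h
  have hne : {k | ∃ S : Set {p : ℝ × ℝ // p ∈ P}, Nat.card S = k ∧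
      (¬ ((visibilityGraph P).induce Sᶜ).Connected ∨
        Nat.card (Sᶜ : Set {p : ℝ × ℝ // p ∈ P}) ≤ 1)}.Nonempty :=
    ⟨Nat.card (Set.univ : Set {p : ℝ × ℝ // p ∈ P}), Set.univ, rfl,
      Or.inr (by simp [Nat.card_coe_set_eq])⟩
  have hmem := Nat.sInf_mem hne
  obtain ⟨S, hScard, hdis⟩ := hmem
  change Nat.card S = vertConn (visibilityGraph P) at hScard
  by_contra hlt
  push_neg at hlt
  have hS1 : S.ncard ≤ 1 := by
    rw [← Nat.card_coe_set_eq, hScard]; omega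
  have hSsub : S.Subsingleton := fun a ha b hb =>
    (Set.ncard_le_one (Set.toFinite S)).mp hS1 a ha b hb
  have hsum := Set.ncard_add_ncard_compl S
  have hcardV := card_vertices P
  have hc2 : 2 ≤ (Sᶜ : Set {p : ℝ × ℝ // p ∈ P}).ncard := by omega
  rcases hdis with hdis | hdis
  · apply hdis
    have hcne : (Sᶜ : Set {p : ℝ × ℝ // p ∈ P}).Nonempty :=
      Set.nonempty_of_ncard_ne_zero (by omega)
    rw [SimpleGraph.connected_iff]
    exact ⟨fun u v => vertex_reach P h S hSsub _ u v le_rfl, hcne.to_subtype⟩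
  · rw [Nat.card_coe_set_eq] at hdis; omega

/-- noncollinear implies edge connectivity at least 2 -/
lemma edge_ge_two (hP : 2 ≤ P.card) (h : ¬ Collinear ℝ (P : Set (ℝ × ℝ))) :
    2 ≤ edgeConn (visibilityGraph P) := by
  have h3 := noncol_card3 hP h
  obtain ⟨a, ha, b, hb, hab⟩ := Finset.one_lt_card.mp (show 1 < P.card by omega)
  have habV : (⟨a, ha⟩ : {p : ℝ × ℝ // p ∈ P}) ≠ ⟨b, hb⟩ := fun hh => hab (congrArg Subtype.val hh)
  have hnotcon : ¬ ((visibilityGraph P).deleteEdges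
      ((visibilityGraph P).edgeSet)).Connected := by
    apply not_connected_of_isolated habV
    intro w hadj
    rw [SimpleGraph.deleteEdges_adj] at hadj
    exact hadj.2 ((visibilityGraph P).mem_edgeSet.mpr hadj.1)
  have hne : {k | ∃ F : Set (Sym2 {p : ℝ × ℝ // p ∈ P}),
      F ⊆ (visibilityGraph P).edgeSet ∧ Nat.card F = k ∧
      ¬ ((visibilityGraph P).deleteEdges F).Connected}.Nonempty :=
    ⟨Nat.card ((visibilityGraph P).edgeSet), (visibilityGraph P).edgeSet,
      subset_rfl, rfl, hnotcon⟩
  have hmem := Nat.sInf_mem hne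
  obtain ⟨F, hFsub, hFcard, hFdis⟩ := hmem
  change Nat.card F = edgeConn (visibilityGraph P) at hFcard
  by_contra hlt
  push_neg at hlt
  have hF1 : F.ncard ≤ 1 := by
    rw [← Nat.card_coe_set_eq, hFcard]; omega
  have hFss : F.Subsingleton := fun x hx y hy =>
    (Set.ncard_le_one (Set.toFinite F)).mp hF1 x hx y hy
  apply hFdis
  rw [SimpleGraph.connected_iff]
  exact ⟨fun u v => edge_reach P h F hFss _ u v le_rfl, ⟨⟨a, ha⟩⟩⟩

/-- noncollinear implies minimum degree at least 2 -/
lemma deg_ge_two (hP : 2 ≤ P.card) (h : ¬ Collinear ℝ (P : Set (ℝ × ℝ))) :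
    2 ≤ minDegree' (visibilityGraph P) := by
  have h3 := noncol_card3 hP h
  obtain ⟨a, ha⟩ := Finset.card_pos.mp (show 0 < P.card by omega)
  have hne : {d | ∃ v : {p : ℝ × ℝ // p ∈ P},
      d = Nat.card ((visibilityGraph P).neighborSet v)}.Nonempty :=
    ⟨_, ⟨a, ha⟩, rfl⟩
  have hmem := Nat.sInf_mem hne
  obtain ⟨v, hveq⟩ := hmem
  change minDegree' (visibilityGraph P) = _ at hveq
  rw [hveq]
  -- two distinct neighbours of v
  have herase : (P.erase v.1).Nonempty := by
    rw [← Finset.card_pos, Finset.card_erase_of_mem v.2]; omega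
  obtain ⟨n, hnP, hvisn⟩ := nearest_visible herase
  obtain ⟨q, hqP, hqc, hv1, -⟩ := detour h v.2 hnP hvisn.1
  have hqn : q ≠ n := by
    intro hh; rw [hh] at hqc; exact hqc (cross_self_right _ _)
  have hpairsub : ({⟨n, hnP⟩, ⟨q, hqP⟩} : Set {p : ℝ × ℝ // p ∈ P}) ⊆
      (visibilityGraph P).neighborSet v := by
    rintro w (rfl | rfl)
    · exact hvisn
    · exact hv1
  have hpair : ({⟨n, hnP⟩, ⟨q, hqP⟩} : Set {p : ℝ × ℝ // p ∈ P}).ncard = 2 :=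
    Set.ncard_pair (fun hh => hqn (congrArg Subtype.val hh).symm)
  rw [Nat.card_coe_set_eq]
  calc 2 = ({⟨n, hnP⟩, ⟨q, hqP⟩} : Set {p : ℝ × ℝ // p ∈ P}).ncard := hpair.symm
    _ ≤ ((visibilityGraph P).neighborSet v).ncard :=
        Set.ncard_le_ncard hpairsub (Set.toFinite _)

/-- the key structure in the collinear case, at the graph level -/
lemma endpoint_graph (hP : 2 ≤ P.card) (hcol : Collinear ℝ (P : Set (ℝ × ℝ))) :
    ∃ (e n : {p : ℝ × ℝ // p ∈ P}), e ≠ n ∧ (visibilityGraph P).Adj e n ∧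
      ∀ w : {p : ℝ × ℝ // p ∈ P}, (visibilityGraph P).Adj e w → w = n := by
  obtain ⟨e, n, heP, hnP, hen, hvis, hblock⟩ := collinear_endpoint hcol hP
  refine ⟨⟨e, heP⟩, ⟨n, hnP⟩, fun hh => hen (congrArg Subtype.val hh), hvis, ?_⟩
  intro w ha
  by_contra hw
  have hwn : w.1 ≠ n := fun hh => hw (Subtype.ext hh)
  have hwe : w.1 ≠ e := fun hh => ha.1 hh.symm
  exact ha.2 n hnP (hblock w.1 w.2 hwe hwn)

lemma deg_le_one (hP : 2 ≤ P.card) (hcol : Collinear ℝ (P : Set (ℝ × ℝ))) :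
    minDegree' (visibilityGraph P) ≤ 1 := by
  obtain ⟨e, n, hen, hvis, huniq⟩ := endpoint_graph hP hcol
  have hnbr : (visibilityGraph P).neighborSet e = {n} := by
    ext w
    simp only [SimpleGraph.mem_neighborSet, Set.mem_singleton_iff]
    exact ⟨huniq w, fun hh => hh ▸ hvis⟩
  apply Nat.sInf_le
  refine ⟨e, ?_⟩
  rw [hnbr, Nat.card_coe_set_eq, Set.ncard_singleton]

lemma edge_le_one (hP : 2 ≤ P.card) (hcol : Collinear ℝ (P : Set (ℝ × ℝ))) :
    edgeConn (visibilityGraph P) ≤ 1 := by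
  obtain ⟨e, n, hen, hvis, huniq⟩ := endpoint_graph hP hcol
  apply Nat.sInf_le
  refine ⟨{s(e, n)}, ?_, ?_, ?_⟩
  · rw [Set.singleton_subset_iff]
    exact (visibilityGraph P).mem_edgeSet.mpr hvis
  · rw [Nat.card_coe_set_eq, Set.ncard_singleton]
  · apply not_connected_of_isolated hen
    intro w hadj
    rw [SimpleGraph.deleteEdges_adj] at hadj
    have := huniq w hadj.1
    subst this
    exact hadj.2 rfl

lemma vert_le_one (hP : 2 ≤ P.card) (hcol : Collinear ℝ (P : Set (ℝ × ℝ))) :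
    vertConn (visibilityGraph P) ≤ 1 := by
  obtain ⟨e, n, hen, hvis, huniq⟩ := endpoint_graph hP hcol
  rcases eq_or_lt_of_le hP with h2 | h3
  · -- exactly two points: removing one leaves a single vertex
    apply Nat.sInf_le
    refine ⟨{e}, ?_, Or.inr ?_⟩
    · rw [Nat.card_coe_set_eq, Set.ncard_singleton]
    · have hsum := Set.ncard_add_ncard_compl ({e} : Set {p : ℝ × ℝ // p ∈ P})
      have hcardV := card_vertices P
      rw [Nat.card_coe_set_eq]
      have : ({e} : Set {p : ℝ × ℝ // p ∈ P}).ncard = 1 := Set.ncard_singleton e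
      omega
  · -- at least three points: removing n isolates e
    apply Nat.sInf_le
    refine ⟨{n}, ?_, Or.inl ?_⟩
    · rw [Nat.card_coe_set_eq, Set.ncard_singleton]
    · -- find a third vertex z
      have hz : ((P.erase e.1).erase n.1).Nonempty := by
        rw [← Finset.card_pos, Finset.card_erase_of_mem
          (Finset.mem_erase.mpr ⟨fun hh => hen (Subtype.ext hh.symm) |>.elim, n.2⟩)]
        · rw [Finset.card_erase_of_mem e.2]; omega
      obtain ⟨z, hzm⟩ := hz
      have hzn : z ≠ n.1 := (Finset.mem_erase.mp hzm).1
      have hze : z ≠ e.1 := (Finset.mem_erase.mp (Finset.mem_of_mem_erase hzm)).1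
      have hzP : z ∈ P := Finset.mem_of_mem_erase (Finset.mem_of_mem_erase hzm)
      have heS : e ∈ ({n} : Set {p : ℝ × ℝ // p ∈ P})ᶜ := fun hh => hen hh
      have hzS : (⟨z, hzP⟩ : {p : ℝ × ℝ // p ∈ P}) ∈ ({n} : Set {p : ℝ × ℝ // p ∈ P})ᶜ :=
        fun hh => hzn (congrArg Subtype.val hh)
      apply not_connected_of_isolated
        (u := (⟨e, heS⟩ : ↥(({n} : Set {p : ℝ × ℝ // p ∈ P})ᶜ)))
        (v := ⟨⟨z, hzP⟩, hzS⟩)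
      · intro hh
        exact hze (congrArg (fun (t : ↥(({n} : Set {p : ℝ × ℝ // p ∈ P})ᶜ)) => t.1.1) hh).symm
      · intro w hadj
        have ha : (visibilityGraph P).Adj e w.1 := hadj
        exact w.2 (huniq w.1 ha)

end Implications

/-- For a visibility graph `G` with at least two vertices, the following are equivalent:
(1) the vertices are not all collinear; (2) vertex-connectivity at least 2;
(3) edge-connectivity at least 2; (4) minimum degree at least 2. -/
theorem visibility_two_connected_equivalences
    (P : Finset (ℝ × ℝ)) (hP : 2 ≤ P.card) :
    (¬ Collinear ℝ (P : Set (ℝ × ℝ)) ↔ 2 ≤ vertConn (visibilityGraph P)) ∧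
    (2 ≤ vertConn (visibilityGraph P) ↔ 2 ≤ edgeConn (visibilityGraph P)) ∧
    (2 ≤ edgeConn (visibilityGraph P) ↔ 2 ≤ minDegree' (visibilityGraph P)) := by
  have nc_v : 2 ≤ vertConn (visibilityGraph P) → ¬ Collinear ℝ (P : Set (ℝ × ℝ)) :=
    fun hv hcol => by have := vert_le_one hP hcol; omega
  have nc_e : 2 ≤ edgeConn (visibilityGraph P) → ¬ Collinear ℝ (P : Set (ℝ × ℝ)) :=
    fun hv hcol => by have := edge_le_one hP hcol; omega
  have nc_d : 2 ≤ minDegree' (visibilityGraph P) → ¬ Collinear ℝ (P : Set (ℝ × ℝ)) :=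
    fun hv hcol => by have := deg_le_one hP hcol; omega
  exact ⟨⟨fun h => vert_ge_two hP h, nc_v⟩,
    ⟨fun h => edge_ge_two hP (nc_v h), fun h => vert_ge_two hP (nc_e h)⟩,
    ⟨fun h => deg_ge_two hP (nc_e h), fun h => edge_ge_two hP (nc_d h)⟩⟩
end

section
/- For a visibility graph G, the following conditions are equivalent: (1) G has vertex-connectivity at least 3; (2) G has edge-connectivity at least 3; (3) G has minimum degree at least 3. -/
set_option maxHeartbeats 1000000

namespace VGaux

noncomputable section
open Classical Finset

abbrev Pt := ℝ × ℝ

def phi (a b x : Pt) : ℝ := (b.1 - a.1) * (x.2 - a.2) - (b.2 - a.2) * (x.1 - a.1)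
def psi (a b x : Pt) : ℝ := (b.1 - a.1) * (x.1 - a.1) + (b.2 - a.2) * (x.2 - a.2)

lemma comb_fst (p q : Pt) (t : ℝ) : ((1 - t) • p + t • q).1 = (1 - t) * p.1 + t * q.1 := rfl
lemma comb_snd (p q : Pt) (t : ℝ) : ((1 - t) • p + t • q).2 = (1 - t) * p.2 + t * q.2 := rfl

lemma phi_comb (a b p q : Pt) (t : ℝ) :
    phi a b ((1 - t) • p + t • q) = (1 - t) * phi a b p + t * phi a b q := by
  simp only [phi, comb_fst, comb_snd]; ring

lemma psi_comb (a b p q : Pt) (t : ℝ) :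
    psi a b ((1 - t) • p + t • q) = (1 - t) * psi a b p + t * psi a b q := by
  simp only [psi, comb_fst, comb_snd]; ring

lemma phi_self_left (a b : Pt) : phi a b a = 0 := by simp [phi]
lemma phi_self_right (a b : Pt) : phi a b b = 0 := by simp [phi]; ring
lemma psi_self_left (a b : Pt) : psi a b a = 0 := by simp [psi]
lemma psi_self_right (a b : Pt) : psi a b b = (b.1 - a.1)^2 + (b.2 - a.2)^2 := by
  simp [psi]; ring

lemma psi_b_pos {a b : Pt} (hab : a ≠ b) : 0 < psi a b b := by
  rw [psi_self_right]
  rcases eq_or_ne (b.1 - a.1) 0 with h1 | h1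
  · rcases eq_or_ne (b.2 - a.2) 0 with h2 | h2
    · exact absurd (Prod.ext (by linarith) (by linarith) : a = b) hab
    · positivity
  · positivity

lemma pt_inj {a b x y : Pt} (hab : a ≠ b) (h1 : phi a b x = phi a b y)
    (h2 : psi a b x = psi a b y) : x = y := by
  set dx := b.1 - a.1 with hdx
  set dy := b.2 - a.2 with hdy
  have hD : dx ^ 2 + dy ^ 2 ≠ 0 := by
    intro h
    have h1 : dx = 0 := by nlinarith [sq_nonneg dx, sq_nonneg dy]
    have h2 : dy = 0 := by nlinarith [sq_nonneg dx, sq_nonneg dy]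
    apply hab
    have : b.1 = a.1 := by rw [hdx] at h1; linarith
    have h4 : b.2 = a.2 := by rw [hdy] at h2; linarith
    exact Prod.ext this.symm h4.symm
  have e1 : (dx ^ 2 + dy ^ 2) * (x.1 - y.1) = 0 := by
    simp only [phi, psi] at h1 h2
    rw [hdx, hdy]; linear_combination (b.1 - a.1) * h2 - (b.2 - a.2) * h1
  have e2 : (dx ^ 2 + dy ^ 2) * (x.2 - y.2) = 0 := by
    simp only [phi, psi] at h1 h2
    rw [hdx, hdy]; linear_combination (b.2 - a.2) * h2 + (b.1 - a.1) * h1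
  have f1 : x.1 = y.1 := by
    rcases mul_eq_zero.1 e1 with h | h
    · exact absurd h hD
    · linarith
  have f2 : x.2 = y.2 := by
    rcases mul_eq_zero.1 e2 with h | h
    · exact absurd h hD
    · linarith
  exact Prod.ext f1 f2

lemma exists_t {z p q : Pt} (h : z ∈ openSegment ℝ p q) :
    ∃ t : ℝ, 0 < t ∧ t < 1 ∧ z = (1 - t) • p + t • q := by
  rw [openSegment_eq_image] at h
  obtain ⟨t, ht, rfl⟩ := h
  exact ⟨t, ht.1, ht.2, rfl⟩

lemma exists_t_seg {z p q : Pt} (h : z ∈ segment ℝ p q) :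
    ∃ t : ℝ, 0 ≤ t ∧ t ≤ 1 ∧ z = (1 - t) • p + t • q := by
  rw [segment_eq_image] at h
  obtain ⟨t, ht, rfl⟩ := h
  exact ⟨t, ht.1, ht.2, rfl⟩

lemma strict_between {u v w : ℝ} {t : ℝ} (h0 : 0 < t) (h1 : t < 1)
    (h : w = (1 - t) * u + t * v) (huv : u < v) : u < w ∧ w < v := by
  constructor <;> nlinarith

lemma mem_openSegment_of_line {a b x y z : Pt} (hab : a ≠ b)
    (hx : phi a b x = 0) (hy : phi a b y = 0) (hz : phi a b z = 0)
    (h1 : psi a b x < psi a b z) (h2 : psi a b z < psi a b y) :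
    z ∈ openSegment ℝ x y := by
  set t : ℝ := (psi a b z - psi a b x) / (psi a b y - psi a b x) with hT
  have hden : 0 < psi a b y - psi a b x := by linarith
  have ht0 : 0 < t := div_pos (by linarith) hden
  have ht1 : t < 1 := by
    rw [div_lt_one hden]; linarith
  have hzeq : z = (1 - t) • x + t • y := by
    have h0 : psi a b y - psi a b x ≠ 0 := ne_of_gt hden
    apply pt_inj hab
    · rw [phi_comb, hx, hy, hz]; ring
    · rw [psi_comb, hT]; field_simp; ring
  rw [openSegment_eq_image]
  exact ⟨t, ⟨ht0, ht1⟩, hzeq.symm⟩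

lemma blocker_of_not_vis {P : Finset Pt} {x y : Pt} (hxy : x ≠ y)
    (h : ¬ VisAdj P x y) : ∃ p ∈ P, p ∈ openSegment ℝ x y := by
  by_contra hc
  push_neg at hc
  exact h ⟨hxy, hc⟩

lemma vis_of_no_blocker {P : Finset Pt} {x y : Pt} (hxy : x ≠ y)
    (h : ∀ p ∈ P, p ∉ openSegment ℝ x y) : VisAdj P x y := ⟨hxy, h⟩

lemma visadj_symm {P : Finset Pt} {x y : Pt} (h : VisAdj P x y) : VisAdj P y x := by
  refine ⟨h.1.symm, fun p hp hmem => ?_⟩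
  rw [openSegment_symm] at hmem
  exact h.2 p hp hmem

lemma abstract_pair {α : Type*} {κ : Type*} [LinearOrder κ] (key : α → κ)
    (TA TB : Finset α) (hA : TA.Nonempty) (hB : TB.Nonempty)
    (hinj : ∀ x ∈ TA, ∀ y ∈ TB, key x ≠ key y)
    (R : α → α → Prop)
    (h : ∀ p ∈ TA, ∀ r ∈ TB, ¬ R p r → ∃ z, (z ∈ TA ∨ z ∈ TB) ∧
      ((key p < key z ∧ key z < key r) ∨ (key r < key z ∧ key z < key p))) :
    ∃ p ∈ TA, ∃ r ∈ TB, R p r := by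
  classical
  obtain ⟨r, hrB, hrmin⟩ := TB.exists_min_image key hB
  by_cases hU : (TA.filter (fun p => key p < key r)).Nonempty
  · obtain ⟨p, hpU, hpmax⟩ := (TA.filter (fun p => key p < key r)).exists_max_image key hU
    rw [mem_filter] at hpU
    refine ⟨p, hpU.1, r, hrB, ?_⟩
    by_contra hR
    obtain ⟨z, hz, hlt⟩ := h p hpU.1 r hrB hR
    rcases hlt with ⟨h1, h2⟩ | ⟨h1, h2⟩
    · rcases hz with hzA | hzB
      · have := hpmax z (mem_filter.2 ⟨hzA, h2⟩); exact absurd h1 (not_lt.2 this)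
      · exact absurd h2 (not_lt.2 (hrmin z hzB))
    · exact absurd (h2.trans (hpU.2.trans h1)) (lt_irrefl _)
  · obtain ⟨r', hr'A, hr'min⟩ := TA.exists_min_image key hA
    have hle : key r ≤ key r' := by
      by_contra hc
      exact hU ⟨r', mem_filter.2 ⟨hr'A, not_le.1 hc⟩⟩
    have hrr' : key r < key r' :=
      lt_of_le_of_ne hle (fun h => hinj r' hr'A r hrB h.symm)
    have hU' : (TB.filter (fun p => key p < key r')).Nonempty :=
      ⟨r, mem_filter.2 ⟨hrB, hrr'⟩⟩
    obtain ⟨p, hpU, hpmax⟩ := (TB.filter (fun p => key p < key r')).exists_max_image key hU'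
    rw [mem_filter] at hpU
    refine ⟨r', hr'A, p, hpU.1, ?_⟩
    by_contra hR
    obtain ⟨z, hz, hlt⟩ := h r' hr'A p hpU.1 hR
    rcases hlt with ⟨h1, h2⟩ | ⟨h1, h2⟩
    · exact absurd (h1.trans (h2.trans hpU.2)) (lt_irrefl _)
    · rcases hz with hzA | hzB
      · exact absurd h2 (not_lt.2 (hr'min z hzA))
      · have := hpmax z (mem_filter.2 ⟨hzB, h2⟩); exact absurd h1 (not_lt.2 this)


lemma seg_vals {a b x y z : Pt} (h : z ∈ openSegment ℝ x y) :
    ∃ t : ℝ, 0 < t ∧ t < 1 ∧ phi a b z = (1 - t) * phi a b x + t * phi a b y ∧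
      psi a b z = (1 - t) * psi a b x + t * psi a b y := by
  obtain ⟨t, ht0, ht1, rfl⟩ := exists_t h
  exact ⟨t, ht0, ht1, phi_comb a b x y t, psi_comb a b x y t⟩

lemma seg_vals_closed {a b x y z : Pt} (h : z ∈ segment ℝ x y) :
    ∃ t : ℝ, 0 ≤ t ∧ t ≤ 1 ∧ phi a b z = (1 - t) * phi a b x + t * phi a b y ∧
      psi a b z = (1 - t) * psi a b x + t * psi a b y := by
  obtain ⟨t, ht0, ht1, rfl⟩ := exists_t_seg h
  exact ⟨t, ht0, ht1, phi_comb a b x y t, psi_comb a b x y t⟩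

/-- The main geometric lemma: a visibility "cut" of total size ≤ 2 forces a vertex of
degree ≤ 2. Stated in contradiction form. -/
lemma ML (P A B S : Finset Pt)
    (hPA : A ⊆ P) (hPB : B ⊆ P) (hPS : S ⊆ P)
    (hcover : ∀ p ∈ P, p ∈ A ∨ p ∈ B ∨ p ∈ S)
    (hAB : ∀ p ∈ A, p ∉ B) (hAS : ∀ p ∈ A, p ∉ S) (hBS : ∀ p ∈ B, p ∉ S)
    (hA : A.Nonempty) (hB : B.Nonempty) (hS : S.card ≤ 2)
    (hcross : ∀ p ∈ A, ∀ q ∈ B, ¬ VisAdj P p q)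
    (hdeg : ∀ v ∈ P, 3 ≤ (P.filter (fun w => VisAdj P v w)).card) : False := by
  classical
  obtain ⟨c, hcmem, hcmin⟩ := (A ×ˢ B).exists_min_image
      (fun q => (P.filter (fun z => z ∈ segment ℝ q.1 q.2)).card)
      ((Finset.nonempty_product).2 ⟨hA, hB⟩)
  obtain ⟨haA, hbB⟩ := Finset.mem_product.1 hcmem
  obtain ⟨a, b⟩ := c
  simp only at haA hbB hcmin
  have haP : a ∈ P := hPA haA
  have hbP : b ∈ P := hPB hbB
  have hab : a ≠ b := fun h => hAB a haA (h ▸ hbB)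
  have hφa : phi a b a = 0 := phi_self_left a b
  have hφb : phi a b b = 0 := phi_self_right a b
  have hψa : psi a b a = 0 := psi_self_left a b
  have hD : 0 < psi a b b := psi_b_pos hab
  -- every blocker of (a,b) lies in S
  have hblockS : ∀ p ∈ P, p ∈ openSegment ℝ a b → p ∈ S := by
    intro p hpP hpseg
    obtain ⟨t, ht0, ht1, hphip, hpsip⟩ := seg_vals (a := a) (b := b) hpseg
    rw [hφa, hφb] at hphip
    rw [hψa] at hpsip
    have hψp0 : 0 < psi a b p := by rw [hpsip]; nlinarith
    have hψpD : psi a b p < psi a b b := by rw [hpsip]; nlinarith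
    rcases hcover p hpP with hpA | hpB | hpS
    · exfalso
      have hsub : P.filter (fun z => z ∈ segment ℝ p b) ⊆
          P.filter (fun z => z ∈ segment ℝ a b) := by
        intro z hz
        rw [mem_filter] at hz ⊢
        exact ⟨hz.1, (convex_segment a b).segment_subset
          (openSegment_subset_segment ℝ a b hpseg) (right_mem_segment ℝ a b) hz.2⟩
      have hanotin : a ∉ P.filter (fun z => z ∈ segment ℝ p b) := by
        rw [mem_filter]
        rintro ⟨-, hseg⟩
        obtain ⟨s, hs0, hs1, -, hv⟩ := seg_vals_closed (a := a) (b := b) hseg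
        rw [hψa] at hv
        nlinarith
      have hss : P.filter (fun z => z ∈ segment ℝ p b) ⊂
          P.filter (fun z => z ∈ segment ℝ a b) :=
        ⟨hsub, fun hsub' => hanotin (hsub' (mem_filter.2 ⟨haP, left_mem_segment ℝ a b⟩))⟩
      have := hcmin (p, b) (Finset.mem_product.2 ⟨hpA, hbB⟩)
      simp only at this
      exact absurd (Finset.card_lt_card hss) (not_lt.2 this)
    · exfalso
      have hsub : P.filter (fun z => z ∈ segment ℝ a p) ⊆
          P.filter (fun z => z ∈ segment ℝ a b) := by
        intro z hz
        rw [mem_filter] at hz ⊢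
        exact ⟨hz.1, (convex_segment a b).segment_subset
          (left_mem_segment ℝ a b) (openSegment_subset_segment ℝ a b hpseg) hz.2⟩
      have hbnotin : b ∉ P.filter (fun z => z ∈ segment ℝ a p) := by
        rw [mem_filter]
        rintro ⟨-, hseg⟩
        obtain ⟨s, hs0, hs1, -, hv⟩ := seg_vals_closed (a := a) (b := b) hseg
        rw [hψa] at hv
        nlinarith
      have hss : P.filter (fun z => z ∈ segment ℝ a p) ⊂
          P.filter (fun z => z ∈ segment ℝ a b) :=
        ⟨hsub, fun hsub' => hbnotin (hsub' (mem_filter.2 ⟨hbP, right_mem_segment ℝ a b⟩))⟩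
      have := hcmin (a, p) (Finset.mem_product.2 ⟨haA, hpB⟩)
      simp only at this
      exact absurd (Finset.card_lt_card hss) (not_lt.2 this)
    · exact hpS
  obtain ⟨c1, hc1P, hc1seg⟩ := blocker_of_not_vis hab (hcross a haA b hbB)
  have hc1S : c1 ∈ S := hblockS c1 hc1P hc1seg
  have hφc1 : phi a b c1 = 0 := by
    obtain ⟨t, ht0, ht1, hv, -⟩ := seg_vals (a := a) (b := b) hc1seg
    rw [hφa, hφb] at hv
    rw [hv]; ring
  have hψc1 : 0 < psi a b c1 ∧ psi a b c1 < psi a b b := by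
    obtain ⟨t, ht0, ht1, -, hv⟩ := seg_vals (a := a) (b := b) hc1seg
    rw [hψa] at hv
    constructor
    · rw [hv]; nlinarith
    · rw [hv]; nlinarith
  -- injectivity of ψ on the line
  have hinjline : ∀ x y : Pt, phi a b x = 0 → phi a b y = 0 →
      psi a b x = psi a b y → x = y := fun x y hx hy h =>
    pt_inj hab (hx.trans hy.symm) h
  -- case split: all points on the line, or not
  by_cases hO : ∀ p ∈ P, phi a b p = 0
  · -- all collinear: the ψ-maximal point has degree ≤ 1
    obtain ⟨e, heP, hemax⟩ := P.exists_max_image (fun z => psi a b z) ⟨a, haP⟩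
    have hcard : (P.filter (fun w => VisAdj P e w)).card ≤ 1 := by
      rw [Finset.card_le_one]
      intro x hx y hy
      rw [mem_filter] at hx hy
      by_contra hxy
      have hψxe : psi a b x < psi a b e := by
        rcases lt_trichotomy (psi a b x) (psi a b e) with h | h | h
        · exact h
        · exact absurd (hinjline x e (hO x hx.1) (hO e heP) h).symm hx.2.1
        · exact absurd h (not_lt.2 (hemax x hx.1))
      have hψye : psi a b y < psi a b e := by
        rcases lt_trichotomy (psi a b y) (psi a b e) with h | h | h
        · exact h
        · exact absurd (hinjline y e (hO y hy.1) (hO e heP) h).symm hy.2.1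
        · exact absurd h (not_lt.2 (hemax y hy.1))
      have hψne : psi a b x ≠ psi a b y := fun h => hxy (hinjline x y (hO x hx.1) (hO y hy.1) h)
      rcases lt_or_gt_of_ne hψne with h | h
      · have hmem : y ∈ openSegment ℝ x e :=
          mem_openSegment_of_line hab (hO x hx.1) (hO e heP) (hO y hy.1) h hψye
        exact hx.2.2 y hy.1 (by rw [openSegment_symm]; exact hmem)
      · have hmem : x ∈ openSegment ℝ y e :=
          mem_openSegment_of_line hab (hO y hy.1) (hO e heP) (hO x hx.1) h hψxe
        exact hy.2.2 x hx.1 (by rw [openSegment_symm]; exact hmem)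
    have := hdeg e heP
    omega
  · push_neg at hO
    obtain ⟨q0, hq0P, hq0φ⟩ := hO
    set O := P.filter (fun p => phi a b p ≠ 0) with hO_def
    have hOne : O.Nonempty := ⟨q0, mem_filter.2 ⟨hq0P, hq0φ⟩⟩
    -- a point whose |φ| is minimal among its sign class sees every line point
    have hsee : ∀ q ∈ O,
        (∀ p ∈ O, phi a b p * phi a b q > 0 → |phi a b p| < |phi a b q| → False) →
        ∀ x ∈ P, phi a b x = 0 → VisAdj P q x := by
      intro q hqO hmin x hxP hφx
      have hqP := (mem_filter.1 hqO).1
      have hφq := (mem_filter.1 hqO).2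
      have hqx : q ≠ x := fun h => hφq (h ▸ hφx)
      refine vis_of_no_blocker hqx ?_
      intro z hzP hzseg
      obtain ⟨t, ht0, ht1, hvφ, -⟩ := seg_vals (a := a) (b := b) hzseg
      rw [hφx] at hvφ
      have hq2 : 0 < phi a b q * phi a b q := mul_self_pos.2 hφq
      have h1 : phi a b z * phi a b q > 0 := by
        have hz' : phi a b z = (1 - t) * phi a b q := by linarith
        rw [hz', mul_assoc]
        exact mul_pos (by linarith) hq2
      have hzabs : |phi a b z| = (1 - t) * |phi a b q| := by
        rw [show phi a b z = (1 - t) * phi a b q by linarith, abs_mul,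
          abs_of_pos (by linarith : (0:ℝ) < 1 - t)]
      have hzO : z ∈ O := mem_filter.2 ⟨hzP, fun h => by rw [h] at h1; simp at h1⟩
      have habs : |phi a b z| < |phi a b q| := by
        have := abs_pos.2 hφq
        rw [hzabs]; nlinarith
      exact hmin z hzO h1 habs
    obtain ⟨c2, hc2O, hc2min⟩ := O.exists_min_image (fun p => |phi a b p|) hOne
    have hc2P : c2 ∈ P := (mem_filter.1 hc2O).1
    have hφc2 : phi a b c2 ≠ 0 := (mem_filter.1 hc2O).2
    have hseesS : ∀ q ∈ O, (∀ x ∈ P, phi a b x = 0 → VisAdj P q x) → q ∈ S := by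
      intro q hqO hsees
      have hqP := (mem_filter.1 hqO).1
      rcases hcover q hqP with h | h | h
      · exact absurd (hsees b hbP hφb) (hcross q h b hbB)
      · exact absurd (visadj_symm (hsees a haP hφa)) (hcross a haA q h)
      · exact h
    have hc2S : c2 ∈ S := hseesS c2 hc2O (hsee c2 hc2O (fun p hpO _ habs =>
      absurd habs (not_lt.2 (hc2min p hpO))))
    have hc2c1 : c2 ≠ c1 := fun h => hφc2 (h ▸ hφc1)
    have hSmem : ∀ s ∈ S, s = c1 ∨ s = c2 := by
      intro s hs
      by_contra hcon
      push_neg at hcon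
      have hsub : ({c1, c2, s} : Finset Pt) ⊆ S := by
        intro z hz
        simp only [Finset.mem_insert, Finset.mem_singleton] at hz
        rcases hz with rfl | rfl | rfl <;> assumption
      have h1 : c1 ∉ ({c2, s} : Finset Pt) := by
        simp only [Finset.mem_insert, Finset.mem_singleton]
        rintro (h | h)
        · exact hc2c1 h.symm
        · exact hcon.1 h.symm
      have h2 : c2 ∉ ({s} : Finset Pt) := by
        simp only [Finset.mem_singleton]
        exact fun h => hcon.2 h.symm
      have h3 : ({c1, c2, s} : Finset Pt).card = 3 := by
        rw [Finset.card_insert_of_notMem h1, Finset.card_insert_of_notMem h2,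
          Finset.card_singleton]
      have := Finset.card_le_card hsub
      omega
    have hstrict : ∀ p ∈ O, p ≠ c2 → |phi a b c2| < |phi a b p| := by
      intro p hpO hpne
      rcases lt_or_ge (|phi a b c2|) (|phi a b p|) with h | h
      · exact h
      · exfalso
        have hpS : p ∈ S := hseesS p hpO (hsee p hpO (fun z hzO _ habs => by
          have h1 := hc2min z hzO
          have : |phi a b z| < |phi a b z| := lt_of_lt_of_le habs (le_trans h h1)
          exact absurd this (lt_irrefl _)))
        rcases hSmem p hpS with rfl | rfl
        · exact (mem_filter.1 hpO).2 hφc1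
        · exact hpne rfl
    have hsign : ∀ p ∈ O, 0 < phi a b p * phi a b c2 := by
      intro p hpO
      by_contra hcon
      have hφp := (mem_filter.1 hpO).2
      have hneg : phi a b p * phi a b c2 < 0 :=
        lt_of_le_of_ne (not_lt.1 hcon) (mul_ne_zero hφp hφc2)
      have hOnegne : (O.filter (fun z => phi a b z * phi a b c2 < 0)).Nonempty :=
        ⟨p, mem_filter.2 ⟨hpO, hneg⟩⟩
      obtain ⟨m, hmO, hmmin⟩ :=
        (O.filter (fun z => phi a b z * phi a b c2 < 0)).exists_min_image
          (fun z => |phi a b z|) hOnegne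
      rw [mem_filter] at hmO
      have hφm : phi a b m ≠ 0 := (mem_filter.1 hmO.1).2
      have hmS : m ∈ S := hseesS m hmO.1 (hsee m hmO.1 (fun z hzO hzsign habs => by
        have hzneg : phi a b z * phi a b c2 < 0 := by
          nlinarith [mul_self_pos.2 hφm]
        exact absurd habs (not_lt.2 (hmmin z (mem_filter.2 ⟨hzO, hzneg⟩)))))
      have hmc2 : m = c2 := (hSmem m hmS).resolve_left (fun h => hφm (h ▸ hφc1))
      rw [hmc2] at hmO
      nlinarith [hmO.2, mul_self_pos.2 hφc2]
    -- normalize the sign of φ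
    set sgn : ℝ := if 0 < phi a b c2 then 1 else -1 with hsgn_def
    have hsgncases : sgn = 1 ∨ sgn = -1 := by
      rw [hsgn_def]; split <;> simp
    have hsgnpos : ∀ p ∈ O, 0 < sgn * phi a b p := by
      intro p hpO
      have := hsign p hpO
      rw [hsgn_def]
      split
      · nlinarith
      · rcases lt_trichotomy (phi a b c2) 0 with h | h | h
        · nlinarith
        · exact absurd h hφc2
        · exact absurd h (by assumption)
    have habsΦ : ∀ p ∈ O, sgn * phi a b p = |phi a b p| := by
      intro p hpO
      have h1 := hsgnpos p hpO
      rcases hsgncases with h | h <;> rw [h] at h1 ⊢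
      · rw [abs_of_pos (by linarith)]; ring
      · rw [abs_of_neg (by linarith)]; ring
    set key : Pt → ℝ ×ₗ ℝ := fun p => toLex (sgn * phi a b p, psi a b p) with hkey_def
    have hsgnne : sgn ≠ 0 := by rcases hsgncases with h | h <;> rw [h] <;> norm_num
    have hkeyinj : ∀ x y : Pt, key x = key y → x = y := by
      intro x y h
      rw [hkey_def] at h
      have h' := congrArg ofLex h
      have h1 : sgn * phi a b x = sgn * phi a b y := congrArg Prod.fst h'
      have h2 : psi a b x = psi a b y := congrArg Prod.snd h'
      exact pt_inj hab (mul_left_cancel₀ hsgnne h1) h2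
    have hbet : ∀ p r z : Pt, z ∈ openSegment ℝ p r → key p ≠ key r →
        ((key p < key z ∧ key z < key r) ∨ (key r < key z ∧ key z < key p)) := by
      intro p r z hz hne
      obtain ⟨t, ht0, ht1, hvφ, hvψ⟩ := seg_vals (a := a) (b := b) hz
      have hvΦ : sgn * phi a b z = (1 - t) * (sgn * phi a b p) + t * (sgn * phi a b r) := by
        rw [hvφ]; ring
      rcases lt_trichotomy (sgn * phi a b p) (sgn * phi a b r) with h | h | h
      · obtain ⟨hl, hu⟩ := strict_between ht0 ht1 hvΦ h
        exact Or.inl ⟨Prod.Lex.lt_iff.2 (Or.inl hl), Prod.Lex.lt_iff.2 (Or.inl hu)⟩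
      · have hΦz : sgn * phi a b z = sgn * phi a b p := by rw [hvΦ, h]; ring
        have hψne : psi a b p ≠ psi a b r := by
          intro hh
          exact hne (by rw [hkey_def]; exact congrArg toLex (Prod.ext h hh))
        rcases lt_or_gt_of_ne hψne with hψ | hψ
        · obtain ⟨hl, hu⟩ := strict_between ht0 ht1 hvψ hψ
          exact Or.inl ⟨Prod.Lex.lt_iff.2 (Or.inr ⟨hΦz.symm, hl⟩),
            Prod.Lex.lt_iff.2 (Or.inr ⟨hΦz.trans h, hu⟩)⟩
        · have hvψ' : psi a b z = (1 - (1 - t)) * psi a b r + (1 - t) * psi a b p := by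
            rw [hvψ]; ring
          obtain ⟨hl, hu⟩ := strict_between (by linarith) (by linarith) hvψ' hψ
          exact Or.inr ⟨Prod.Lex.lt_iff.2 (Or.inr ⟨(hΦz.trans h).symm, hl⟩),
            Prod.Lex.lt_iff.2 (Or.inr ⟨hΦz, hu⟩)⟩
      · have hvΦ' : sgn * phi a b z = (1 - (1 - t)) * (sgn * phi a b r) + (1 - t) * (sgn * phi a b p) := by
          rw [hvφ]; ring
        obtain ⟨hl, hu⟩ := strict_between (by linarith) (by linarith) hvΦ' h
        exact Or.inr ⟨Prod.Lex.lt_iff.2 (Or.inl hl), Prod.Lex.lt_iff.2 (Or.inl hu)⟩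
    -- the off-line points other than c2
    set T := O.erase c2 with hT_def
    have hTAB : ∀ z ∈ T, z ∈ A ∨ z ∈ B := by
      intro z hz
      have hzO := Finset.mem_of_mem_erase hz
      have hzne := Finset.ne_of_mem_erase hz
      have hzP := (mem_filter.1 hzO).1
      rcases hcover z hzP with h | h | h
      · exact Or.inl h
      · exact Or.inr h
      · rcases hSmem z h with rfl | rfl
        · exact absurd hφc1 (mem_filter.1 hzO).2
        · exact absurd rfl hzne
    set Pl := P.filter (fun z => phi a b z = 0) with hPl_def
    have haPl : a ∈ Pl := mem_filter.2 ⟨haP, hφa⟩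
    have hbPl : b ∈ Pl := mem_filter.2 ⟨hbP, hφb⟩
    have hc1Pl : c1 ∈ Pl := mem_filter.2 ⟨hc1P, hφc1⟩
    -- the separation lemma on the line
    have core : ∀ θ : Pt → ℝ,
        (∀ x y z : Pt, z ∈ openSegment ℝ x y →
          ∃ t : ℝ, 0 < t ∧ t < 1 ∧ θ z = (1 - t) * θ x + t * θ y) →
        (∀ x y : Pt, phi a b x = 0 → phi a b y = 0 → θ x = θ y → x = y) →
        ∀ X Y : Finset Pt, ((X = A ∧ Y = B) ∨ (X = B ∧ Y = A)) →
        ∀ x ∈ X, ∀ y ∈ Y, phi a b x = 0 → phi a b y = 0 →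
        θ c1 < θ x → θ c1 < θ y → θ x < θ y → False := by
      intro θ hθcomb hθinj X Y hXY x hxX y hyY hφx hφy hcx hcy hxy
      have hXP : X ⊆ P := by
        rcases hXY with ⟨h, -⟩ | ⟨h, -⟩
        · rw [h]; exact hPA
        · rw [h]; exact hPB
      have hYP : Y ⊆ P := by
        rcases hXY with ⟨-, h⟩ | ⟨-, h⟩
        · rw [h]; exact hPB
        · rw [h]; exact hPA
      have hdisjXY : ∀ z ∈ X, z ∉ Y := by
        rcases hXY with ⟨h1, h2⟩ | ⟨h1, h2⟩
        · rw [h1, h2]; exact hAB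
        · rw [h1, h2]; exact fun z hz hz' => hAB z hz' hz
      obtain ⟨m, hmM, hmmax⟩ :=
        (Pl.filter (fun z => z ∈ X ∧ θ c1 < θ z ∧ θ z < θ y)).exists_max_image θ
          ⟨x, mem_filter.2 ⟨mem_filter.2 ⟨hXP hxX, hφx⟩, hxX, hcx, hxy⟩⟩
      rw [mem_filter] at hmM
      obtain ⟨hmPl, hmX, hmc1, hmy⟩ := hmM
      have hmP : m ∈ P := (mem_filter.1 hmPl).1
      have hφm : phi a b m = 0 := (mem_filter.1 hmPl).2
      obtain ⟨y0, hy0N, hy0min⟩ :=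
        (Pl.filter (fun z => θ m < θ z)).exists_min_image θ
          ⟨y, mem_filter.2 ⟨mem_filter.2 ⟨hYP hyY, hφy⟩, hmy⟩⟩
      rw [mem_filter] at hy0N
      obtain ⟨hy0Pl, hmy0⟩ := hy0N
      have hy0P : y0 ∈ P := (mem_filter.1 hy0Pl).1
      have hφy0 : phi a b y0 = 0 := (mem_filter.1 hy0Pl).2
      have hmy0ne : m ≠ y0 := fun h => absurd (h ▸ hmy0) (lt_irrefl _)
      have hvis : VisAdj P m y0 := by
        refine vis_of_no_blocker hmy0ne ?_
        intro z hzP hzseg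
        obtain ⟨t, ht0, ht1, hvθ⟩ := hθcomb m y0 z hzseg
        obtain ⟨t', ht0', ht1', hvφ, -⟩ := seg_vals (a := a) (b := b) hzseg
        have hφz : phi a b z = 0 := by rw [hvφ, hφm, hφy0]; ring
        obtain ⟨hl, hu⟩ := strict_between ht0 ht1 hvθ hmy0
        have hzN : z ∈ Pl.filter (fun z => θ m < θ z) :=
          mem_filter.2 ⟨mem_filter.2 ⟨hzP, hφz⟩, hl⟩
        exact absurd hu (not_lt.2 (hy0min z hzN))
      have hy0cases : y0 ∈ X ∨ y0 ∈ Y ∨ y0 ∈ S := by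
        rcases hXY with ⟨h1, h2⟩ | ⟨h1, h2⟩
        · rw [h1, h2]; rcases hcover y0 hy0P with h | h | h <;> tauto
        · rw [h1, h2]; rcases hcover y0 hy0P with h | h | h <;> tauto
      rcases hy0cases with hy0X | hy0Y | hy0S
      · have hy0y : θ y0 ≤ θ y :=
          hy0min y (mem_filter.2 ⟨mem_filter.2 ⟨hYP hyY, hφy⟩, hmy⟩)
        rcases lt_or_eq_of_le hy0y with h | h
        · have : y0 ∈ Pl.filter (fun z => z ∈ X ∧ θ c1 < θ z ∧ θ z < θ y) :=
            mem_filter.2 ⟨hy0Pl, hy0X, lt_trans hmc1 hmy0, h⟩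
          exact absurd hmy0 (not_lt.2 (hmmax y0 this))
        · exact hdisjXY y0 hy0X ((hθinj y0 y hφy0 hφy h) ▸ hyY)
      · rcases hXY with ⟨h1, h2⟩ | ⟨h1, h2⟩
        · exact hcross m (h1 ▸ hmX) y0 (h2 ▸ hy0Y) hvis
        · exact hcross y0 (h2 ▸ hy0Y) m (h1 ▸ hmX) (visadj_symm hvis)
      · rcases hSmem y0 hy0S with rfl | rfl
        · exact absurd (lt_trans hmc1 hmy0) (lt_irrefl _)
        · exact hφc2 hφy0
    have hψcomb : ∀ x y z : Pt, z ∈ openSegment ℝ x y →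
        ∃ t : ℝ, 0 < t ∧ t < 1 ∧ psi a b z = (1 - t) * psi a b x + t * psi a b y := by
      intro x y z hz
      obtain ⟨t, h0, h1, -, hv⟩ := seg_vals (a := a) (b := b) hz
      exact ⟨t, h0, h1, hv⟩
    have hsepA : ∀ x ∈ A, phi a b x = 0 → psi a b x < psi a b c1 := by
      intro x hxA hφx
      rcases lt_trichotomy (psi a b x) (psi a b c1) with h | h | h
      · exact h
      · exact absurd ((hinjline x c1 hφx hφc1 h) ▸ hc1S) (hAS x hxA)
      · exfalso
        rcases lt_trichotomy (psi a b x) (psi a b b) with hxb | hxb | hxb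
        · exact core (psi a b) hψcomb hinjline A B (Or.inl ⟨rfl, rfl⟩) x hxA b hbB hφx hφb
            h hψc1.2 hxb
        · exact hAB x hxA ((hinjline x b hφx hφb hxb) ▸ hbB)
        · exact core (psi a b) hψcomb hinjline B A (Or.inr ⟨rfl, rfl⟩) b hbB x hxA hφb hφx
            hψc1.2 h hxb
    have hsepB : ∀ y ∈ B, phi a b y = 0 → psi a b c1 < psi a b y := by
      intro y hyB hφy
      rcases lt_trichotomy (psi a b c1) (psi a b y) with h | h | h
      · exact h
      · exact absurd ((hinjline c1 y hφc1 hφy h) ▸ hyB) (hBS c1 · hc1S)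
      · exfalso
        have hθcomb : ∀ x y z : Pt, z ∈ openSegment ℝ x y →
            ∃ t : ℝ, 0 < t ∧ t < 1 ∧
              (fun w => -psi a b w) z = (1 - t) * (fun w => -psi a b w) x +
                t * (fun w => -psi a b w) y := by
          intro x y z hz
          obtain ⟨t, h0, h1, hv⟩ := hψcomb x y z hz
          exact ⟨t, h0, h1, by simp only; rw [hv]; ring⟩
        have hθinj : ∀ x y : Pt, phi a b x = 0 → phi a b y = 0 →
            (fun w => -psi a b w) x = (fun w => -psi a b w) y → x = y := by
          intro x y h1 h2 h3
          simp only [neg_inj] at h3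
          exact hinjline x y h1 h2 h3
        have hca : -psi a b c1 < -psi a b a := by rw [hψa]; linarith [hψc1.1]
        have hcy : -psi a b c1 < -psi a b y := by linarith
        rcases lt_trichotomy (-psi a b a) (-psi a b y) with hay | hay | hay
        · exact core (fun w => -psi a b w) hθcomb hθinj A B (Or.inl ⟨rfl, rfl⟩)
            a haA y hyB hφa hφy hca hcy hay
        · exact hAB a haA ((hθinj a y hφa hφy hay) ▸ hyB)
        · exact core (fun w => -psi a b w) hθcomb hθinj B A (Or.inr ⟨rfl, rfl⟩)
            y hyB a haA hφy hφa hcy hca hay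
    -- now the three subcases
    by_cases hTAne : (T.filter (fun z => z ∈ A)).Nonempty
    · by_cases hTBne : (T.filter (fun z => z ∈ B)).Nonempty
      · -- both sides have off-line points: produce a crossing visibility edge
        have hTO : ∀ z ∈ T, z ∈ O := fun z hz => Finset.mem_of_mem_erase hz
        have hΦc2lt : ∀ z ∈ T, sgn * phi a b c2 < sgn * phi a b z := by
          intro z hz
          have h1 := hstrict z (hTO z hz) (Finset.ne_of_mem_erase hz)
          rw [← habsΦ z (hTO z hz), ← habsΦ c2 hc2O] at h1
          exact h1
        have harg1 : ∀ x ∈ T.filter (fun z => z ∈ A), ∀ y ∈ T.filter (fun z => z ∈ B),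
            key x ≠ key y := by
          intro x hx y hy h
          have := hkeyinj x y h
          subst this
          exact hAB x (mem_filter.1 hx).2 (mem_filter.1 hy).2
        have harg2 : ∀ p ∈ T.filter (fun z => z ∈ A), ∀ r ∈ T.filter (fun z => z ∈ B),
            ¬ VisAdj P p r → ∃ z, (z ∈ T.filter (fun z => z ∈ A) ∨ z ∈ T.filter (fun z => z ∈ B)) ∧
              ((key p < key z ∧ key z < key r) ∨ (key r < key z ∧ key z < key p)) := by
          intro p hp r hr hnR
          rw [mem_filter] at hp hr
          have hpP : p ∈ P := (mem_filter.1 (hTO p hp.1)).1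
          have hrP : r ∈ P := (mem_filter.1 (hTO r hr.1)).1
          have hpr : p ≠ r := fun h => hAB p hp.2 (h ▸ hr.2)
          obtain ⟨z, hzP, hzseg⟩ := blocker_of_not_vis hpr hnR
          have hkeyne : key p ≠ key r := fun h => hpr (hkeyinj p r h)
          have hbetz := hbet p r z hzseg hkeyne
          obtain ⟨t, ht0, ht1, hvφ, -⟩ := seg_vals (a := a) (b := b) hzseg
          have hΦp := hsgnpos p (hTO p hp.1)
          have hΦr := hsgnpos r (hTO r hr.1)
          have hΦz : 0 < sgn * phi a b z := by
            have : sgn * phi a b z = (1 - t) * (sgn * phi a b p) + t * (sgn * phi a b r) := by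
              rw [hvφ]; ring
            nlinarith
          have hφz : phi a b z ≠ 0 := fun h => by rw [h, mul_zero] at hΦz; linarith
          have hzO : z ∈ O := mem_filter.2 ⟨hzP, hφz⟩
          have hzc2 : z ≠ c2 := by
            intro h
            subst h
            have h1 := hΦc2lt p hp.1
            have h2 := hΦc2lt r hr.1
            have : sgn * phi a b z = (1 - t) * (sgn * phi a b p) + t * (sgn * phi a b r) := by
              rw [hvφ]; ring
            nlinarith
          have hzT : z ∈ T := Finset.mem_erase.2 ⟨hzc2, hzO⟩
          refine ⟨z, ?_, hbetz⟩
          rcases hTAB z hzT with h | h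
          · exact Or.inl (mem_filter.2 ⟨hzT, h⟩)
          · exact Or.inr (mem_filter.2 ⟨hzT, h⟩)
        obtain ⟨p, hp, r, hr, hvis⟩ := abstract_pair key (T.filter (fun z => z ∈ A))
          (T.filter (fun z => z ∈ B)) hTAne hTBne harg1 (fun p r => VisAdj P p r) harg2
        exact hcross p (mem_filter.1 hp).2 r (mem_filter.1 hr).2 hvis
      · -- B lies entirely on the line; the ψ-maximal line point is in B and has degree ≤ 2
        have hBline : ∀ y ∈ B, phi a b y = 0 := by
          intro y hyB
          by_contra hcon
          have hyO : y ∈ O := mem_filter.2 ⟨hPB hyB, hcon⟩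
          have hyT : y ∈ T := Finset.mem_erase.2 ⟨fun h => hBS y hyB (h ▸ hc2S), hyO⟩
          exact hTBne ⟨y, mem_filter.2 ⟨hyT, hyB⟩⟩
        obtain ⟨e, hePl, hemax⟩ := Pl.exists_max_image (fun z => psi a b z) ⟨a, haPl⟩
        have heP : e ∈ P := (mem_filter.1 hePl).1
        have hφe : phi a b e = 0 := (mem_filter.1 hePl).2
        have hbe : psi a b b ≤ psi a b e := hemax b hbPl
        have heB : e ∈ B := by
          rcases hcover e heP with h | h | h
          · exact absurd (hsepA e h hφe) (by push_neg; linarith [hψc1.2])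
          · exact h
          · exfalso
            rcases hSmem e h with rfl | rfl
            · linarith [hψc1.2]
            · exact hφc2 hφe
        have hmemN : ∀ w, w ∈ (P.filter (fun w => VisAdj P e w)).erase c2 →
            phi a b w = 0 ∧ psi a b w < psi a b e ∧ VisAdj P e w ∧ w ∈ P := by
          intro w hw
          have hwc2 := Finset.ne_of_mem_erase hw
          have hw' := Finset.mem_of_mem_erase hw
          rw [mem_filter] at hw'
          obtain ⟨hwP, hwvis⟩ := hw'
          have hwφ : phi a b w = 0 := by
            rcases hcover w hwP with h | h | h
            · exact absurd (visadj_symm hwvis) (hcross w h e heB)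
            · exact hBline w h
            · rcases hSmem w h with rfl | rfl
              · exact hφc1
              · exact absurd rfl hwc2
          have hwe : w ≠ e := fun h => hwvis.1 h.symm
          refine ⟨hwφ, ?_, hwvis, hwP⟩
          rcases lt_trichotomy (psi a b w) (psi a b e) with h | h | h
          · exact h
          · exact absurd (hinjline w e hwφ hφe h) hwe
          · exact absurd h (not_lt.2 (hemax w (mem_filter.2 ⟨hwP, hwφ⟩)))
        have hone : ((P.filter (fun w => VisAdj P e w)).erase c2).card ≤ 1 := by
          rw [Finset.card_le_one]
          intro u hu v hv
          obtain ⟨hφu, hψu, huvis, huP⟩ := hmemN u hu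
          obtain ⟨hφv, hψv, hvvis, hvP⟩ := hmemN v hv
          by_contra huv
          have hψne : psi a b u ≠ psi a b v := fun h => huv (hinjline u v hφu hφv h)
          rcases lt_or_gt_of_ne hψne with h | h
          · have hmem : v ∈ openSegment ℝ u e := mem_openSegment_of_line hab hφu hφe hφv h hψv
            exact huvis.2 v hvP (by rw [openSegment_symm]; exact hmem)
          · have hmem : u ∈ openSegment ℝ v e := mem_openSegment_of_line hab hφv hφe hφu h hψu
            exact hvvis.2 u huP (by rw [openSegment_symm]; exact hmem)
        have hsub : P.filter (fun w => VisAdj P e w) ⊆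
            insert c2 ((P.filter (fun w => VisAdj P e w)).erase c2) := by
          intro z hz
          by_cases hzc : z = c2
          · rw [hzc]; exact Finset.mem_insert_self _ _
          · exact Finset.mem_insert_of_mem (Finset.mem_erase.2 ⟨hzc, hz⟩)
        have h2 : (P.filter (fun w => VisAdj P e w)).card ≤ 2 :=
          le_trans (Finset.card_le_card hsub) (le_trans (Finset.card_insert_le _ _) (by omega))
        have := hdeg e heP
        omega
    · -- A lies entirely on the line; the ψ-minimal line point is in A and has degree ≤ 2
      have hAline : ∀ x ∈ A, phi a b x = 0 := by
        intro x hxA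
        by_contra hcon
        have hxO : x ∈ O := mem_filter.2 ⟨hPA hxA, hcon⟩
        have hxT : x ∈ T := Finset.mem_erase.2 ⟨fun h => hAS x hxA (h ▸ hc2S), hxO⟩
        exact hTAne ⟨x, mem_filter.2 ⟨hxT, hxA⟩⟩
      obtain ⟨e, hePl, hemin⟩ := Pl.exists_min_image (fun z => psi a b z) ⟨a, haPl⟩
      have heP : e ∈ P := (mem_filter.1 hePl).1
      have hφe : phi a b e = 0 := (mem_filter.1 hePl).2
      have hae : psi a b e ≤ psi a b a := hemin a haPl
      have heA : e ∈ A := by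
        rcases hcover e heP with h | h | h
        · exact h
        · exact absurd (hsepB e h hφe) (by push_neg; rw [hψa] at hae; linarith [hψc1.1])
        · exfalso
          rcases hSmem e h with rfl | rfl
          · rw [hψa] at hae; linarith [hψc1.1]
          · exact hφc2 hφe
      have hmemN : ∀ w, w ∈ (P.filter (fun w => VisAdj P e w)).erase c2 →
          phi a b w = 0 ∧ psi a b e < psi a b w ∧ VisAdj P e w ∧ w ∈ P := by
        intro w hw
        have hwc2 := Finset.ne_of_mem_erase hw
        have hw' := Finset.mem_of_mem_erase hw
        rw [mem_filter] at hw'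
        obtain ⟨hwP, hwvis⟩ := hw'
        have hwφ : phi a b w = 0 := by
          rcases hcover w hwP with h | h | h
          · exact hAline w h
          · exact absurd hwvis (hcross e heA w h)
          · rcases hSmem w h with rfl | rfl
            · exact hφc1
            · exact absurd rfl hwc2
        have hwe : w ≠ e := fun h => hwvis.1 h.symm
        refine ⟨hwφ, ?_, hwvis, hwP⟩
        rcases lt_trichotomy (psi a b e) (psi a b w) with h | h | h
        · exact h
        · exact absurd (hinjline w e hwφ hφe h.symm) hwe
        · exact absurd h (not_lt.2 (hemin w (mem_filter.2 ⟨hwP, hwφ⟩)))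
      have hone : ((P.filter (fun w => VisAdj P e w)).erase c2).card ≤ 1 := by
        rw [Finset.card_le_one]
        intro u hu v hv
        obtain ⟨hφu, hψu, huvis, huP⟩ := hmemN u hu
        obtain ⟨hφv, hψv, hvvis, hvP⟩ := hmemN v hv
        by_contra huv
        have hψne : psi a b u ≠ psi a b v := fun h => huv (hinjline u v hφu hφv h)
        rcases lt_or_gt_of_ne hψne with h | h
        · have hmem : u ∈ openSegment ℝ e v := mem_openSegment_of_line hab hφe hφv hφu hψu h
          exact hvvis.2 u huP hmem
        · have hmem : v ∈ openSegment ℝ e u := mem_openSegment_of_line hab hφe hφu hφv hψv h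
          exact huvis.2 v hvP hmem
      have hsub : P.filter (fun w => VisAdj P e w) ⊆
          insert c2 ((P.filter (fun w => VisAdj P e w)).erase c2) := by
        intro z hz
        by_cases hzc : z = c2
        · rw [hzc]; exact Finset.mem_insert_self _ _
        · exact Finset.mem_insert_of_mem (Finset.mem_erase.2 ⟨hzc, hz⟩)
      have h2 : (P.filter (fun w => VisAdj P e w)).card ≤ 2 :=
        le_trans (Finset.card_le_card hsub) (le_trans (Finset.card_insert_le _ _) (by omega))
      have := hdeg e heP
      omega


abbrev Vtx (P : Finset Pt) := {p : Pt // p ∈ P}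

/-- the minimum-degree-≥-3 condition, point level -/
def D3 (P : Finset Pt) : Prop :=
  P.Nonempty ∧ ∀ v : Vtx P, 3 ≤ (P.filter (fun w => VisAdj P v.1 w)).card

lemma three_le_sInf_iff {s : Set ℕ} : 3 ≤ sInf s ↔ s.Nonempty ∧ ∀ k ∈ s, 3 ≤ k := by
  constructor
  · intro h
    have hne : s.Nonempty := by
      by_contra hc
      rw [Set.not_nonempty_iff_eq_empty] at hc
      rw [hc, Nat.sInf_empty] at h
      omega
    exact ⟨hne, fun k hk => le_trans h (Nat.sInf_le hk)⟩
  · rintro ⟨hne, h⟩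
    exact h _ (Nat.sInf_mem hne)

lemma degree_bridge (P : Finset Pt) (v : Vtx P) :
    Nat.card ((visibilityGraph P).neighborSet v) =
      (P.filter (fun w => VisAdj P v.1 w)).card := by
  classical
  have e : ((visibilityGraph P).neighborSet v) ≃
      {w // w ∈ P.filter (fun w => VisAdj P v.1 w)} :=
  { toFun := fun x => ⟨x.1.1, Finset.mem_filter.2 ⟨x.1.2, x.2⟩⟩
    invFun := fun x => ⟨⟨x.1, (Finset.mem_filter.1 x.2).1⟩, (Finset.mem_filter.1 x.2).2⟩
    left_inv := fun x => Subtype.ext (Subtype.ext rfl)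
    right_inv := fun x => Subtype.ext rfl }
  rw [Nat.card_congr e, Nat.card_eq_finsetCard]

lemma minDeg_iff (P : Finset Pt) : 3 ≤ minDegree' (visibilityGraph P) ↔ D3 P := by
  rw [minDegree', three_le_sInf_iff]
  constructor
  · rintro ⟨⟨d, v, hd⟩, h⟩
    refine ⟨⟨v.1, v.2⟩, fun w => ?_⟩
    have := h _ ⟨w, rfl⟩
    rwa [degree_bridge] at this
  · rintro ⟨⟨p, hp⟩, h⟩
    refine ⟨⟨_, ⟨⟨p, hp⟩, rfl⟩⟩, ?_⟩
    rintro k ⟨v, rfl⟩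
    rw [degree_bridge]
    exact h v

lemma vertConn_iff (P : Finset Pt) : 3 ≤ vertConn (visibilityGraph P) ↔
    ∀ S : Set (Vtx P), Nat.card S ≤ 2 →
      ((visibilityGraph P).induce Sᶜ).Connected ∧ 2 ≤ Nat.card (Sᶜ : Set (Vtx P)) := by
  rw [vertConn, three_le_sInf_iff]
  constructor
  · rintro ⟨-, h⟩ S hS
    by_contra hc
    rw [not_and_or] at hc
    have hmem : Nat.card S ∈ {k | ∃ S' : Set (Vtx P), Nat.card S' = k ∧
        (¬ ((visibilityGraph P).induce S'ᶜ).Connected ∨ Nat.card (S'ᶜ : Set (Vtx P)) ≤ 1)} := by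
      refine ⟨S, rfl, ?_⟩
      rcases hc with h1 | h1
      · exact Or.inl h1
      · exact Or.inr (by omega)
    have := h _ hmem
    omega
  · intro h
    constructor
    · refine ⟨Nat.card (Set.univ : Set (Vtx P)), Set.univ, rfl, Or.inr ?_⟩
      rw [Set.compl_univ]
      simp
    · rintro k ⟨S, rfl, hdis⟩
      by_contra hk
      push_neg at hk
      obtain ⟨hconn, hcard⟩ := h S (by omega)
      rcases hdis with h1 | h1
      · exact h1 hconn
      · omega

lemma not_connected_of_isolated {V' : Type*} (G : SimpleGraph V') (v w : V') (hvw : v ≠ w)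
    (h : ∀ u, ¬ G.Adj v u) : ¬ G.Connected := by
  intro hc
  obtain ⟨walk⟩ := hc.preconnected v w
  cases walk with
  | nil => exact hvw rfl
  | cons h' p => exact h _ h'

lemma not_connected_deleteEdges_all {V' : Type*} (G : SimpleGraph V') {x y : V'} (hxy : x ≠ y) :
    ¬ (G.deleteEdges G.edgeSet).Connected := by
  refine not_connected_of_isolated _ x y hxy ?_
  intro u hadj
  rw [SimpleGraph.deleteEdges_adj] at hadj
  exact hadj.2 ((G.mem_edgeSet).2 hadj.1)

lemma vertConn_to_D3 (P : Finset Pt) (h : 3 ≤ vertConn (visibilityGraph P)) : D3 P := by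
  classical
  rw [vertConn_iff] at h
  have h0 := h ∅ (by simp)
  rw [Set.compl_empty] at h0
  have hPne : P.Nonempty := by
    by_contra hemp
    have hie : IsEmpty (Vtx P) := ⟨fun v => hemp ⟨v.1, v.2⟩⟩
    have h2 := h0.2
    rw [Nat.card_of_isEmpty] at h2
    omega
  refine ⟨hPne, ?_⟩
  intro v
  by_contra hlt
  push_neg at hlt
  have hScard : Nat.card ((visibilityGraph P).neighborSet v) ≤ 2 := by
    rw [degree_bridge]; omega
  obtain ⟨hconn, hcard⟩ := h ((visibilityGraph P).neighborSet v) hScard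
  have hv : v ∈ ((visibilityGraph P).neighborSet v)ᶜ :=
    fun hmem => (visibilityGraph P).irrefl hmem
  have hcard' : 1 < (((visibilityGraph P).neighborSet v)ᶜ : Set (Vtx P)).ncard := by
    rw [← Nat.card_coe_set_eq]; omega
  obtain ⟨w, hw, hwv⟩ := Set.exists_ne_of_one_lt_ncard hcard' v
  refine not_connected_of_isolated ((visibilityGraph P).induce
    (((visibilityGraph P).neighborSet v)ᶜ)) ⟨v, hv⟩ ⟨w, hw⟩
    (fun hh => hwv (congrArg Subtype.val hh).symm) ?_ hconn
  intro u hadj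
  exact u.2 hadj

lemma edgeConn_to_D3 (P : Finset Pt) (h : 3 ≤ edgeConn (visibilityGraph P)) : D3 P := by
  classical
  rw [edgeConn, three_le_sInf_iff] at h
  obtain ⟨⟨k0, F0, hF0sub, hF0card, hF0dis⟩, hall⟩ := h
  have hGconn : (visibilityGraph P).Connected := by
    by_contra hc
    have hmem : (0:ℕ) ∈ {k | ∃ F : Set (Sym2 (Vtx P)), F ⊆ (visibilityGraph P).edgeSet ∧
        Nat.card F = k ∧ ¬ ((visibilityGraph P).deleteEdges F).Connected} := by
      refine ⟨∅, Set.empty_subset _, by simp, ?_⟩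
      rwa [SimpleGraph.deleteEdges_empty]
    have := hall 0 hmem
    omega
  have hne : Nonempty (Vtx P) := hGconn.nonempty
  have hPne : P.Nonempty := ⟨hne.some.1, hne.some.2⟩
  refine ⟨hPne, ?_⟩
  intro v
  by_contra hlt
  push_neg at hlt
  obtain ⟨x, y, hxy⟩ : ∃ x y : Vtx P,
      ¬ ((visibilityGraph P).deleteEdges F0).Reachable x y := by
    by_contra hcon
    push_neg at hcon
    exact hF0dis ((SimpleGraph.connected_iff _).2 ⟨hcon, hne⟩)
  have hxyne : x ≠ y := fun hh => hxy (hh ▸ SimpleGraph.Reachable.refl x)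
  have hwv : ∃ w : Vtx P, w ≠ v := by
    by_cases hx : x = v
    · exact ⟨y, fun hh => hxyne (hx.trans hh.symm)⟩
    · exact ⟨x, hx⟩
  obtain ⟨w, hwv⟩ := hwv
  have hdis : ¬ ((visibilityGraph P).deleteEdges
      ((visibilityGraph P).incidenceSet v)).Connected := by
    refine not_connected_of_isolated _ v w (Ne.symm hwv) ?_
    intro u hadj
    rw [SimpleGraph.deleteEdges_adj] at hadj
    exact hadj.2 ((SimpleGraph.mem_incidenceSet _ v u).2 hadj.1)
  have hmem : Nat.card ((visibilityGraph P).incidenceSet v) ∈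
      {k | ∃ F : Set (Sym2 (Vtx P)), F ⊆ (visibilityGraph P).edgeSet ∧
        Nat.card F = k ∧ ¬ ((visibilityGraph P).deleteEdges F).Connected} :=
    ⟨_, (visibilityGraph P).incidenceSet_subset v, rfl, hdis⟩
  have h3 := hall _ hmem
  rw [Nat.card_congr ((visibilityGraph P).incidenceSetEquivNeighborSet v),
    degree_bridge] at h3
  omega

lemma D3_card (P : Finset Pt) (hD : D3 P) : 4 ≤ P.card := by
  classical
  obtain ⟨⟨p, hp⟩, hdeg⟩ := hD
  have h3 : 3 ≤ (P.filter (fun w => VisAdj P p w)).card := hdeg ⟨p, hp⟩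
  have hsub : P.filter (fun w => VisAdj P p w) ⊆ P.erase p := by
    intro w hw
    rw [Finset.mem_filter] at hw
    exact Finset.mem_erase.2 ⟨fun hh => hw.2.1 hh.symm, hw.1⟩
  have h1 := Finset.card_le_card hsub
  have h2 := Finset.card_erase_of_mem hp
  omega

lemma D3_to_vertConn (P : Finset Pt) (hD : D3 P) : 3 ≤ vertConn (visibilityGraph P) := by
  classical
  rw [vertConn_iff]
  intro S hS
  have hP4 : 4 ≤ P.card := D3_card P hD
  have hcards : (S : Set (Vtx P)).ncard + (Sᶜ : Set (Vtx P)).ncard = Nat.card (Vtx P) :=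
    Set.ncard_add_ncard_compl S
  have hVcard : Nat.card (Vtx P) = P.card := Nat.card_eq_finsetCard P
  have hSn : (S : Set (Vtx P)).ncard ≤ 2 := by
    rw [← Nat.card_coe_set_eq]; exact hS
  have hcompl : 2 ≤ Nat.card (Sᶜ : Set (Vtx P)) := by
    rw [Nat.card_coe_set_eq]; omega
  refine ⟨?_, hcompl⟩
  by_contra hconn
  have hScne : ((Sᶜ : Set (Vtx P))).Nonempty := by
    apply Set.nonempty_of_ncard_ne_zero
    have := hcompl
    rw [Nat.card_coe_set_eq] at this
    omega
  have hne : Nonempty ↥(Sᶜ : Set (Vtx P)) := hScne.to_subtype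
  obtain ⟨x, y, hxy⟩ : ∃ x y : ↥(Sᶜ : Set (Vtx P)),
      ¬ ((visibilityGraph P).induce Sᶜ).Reachable x y := by
    by_contra hcon
    push_neg at hcon
    exact hconn ((SimpleGraph.connected_iff _).2 ⟨hcon, hne⟩)
  set AV : Set (Vtx P) := {v | ∃ h : v ∈ (Sᶜ : Set (Vtx P)),
    ((visibilityGraph P).induce Sᶜ).Reachable x ⟨v, h⟩} with hAV_def
  refine ML P
    (P.filter (fun p => ∃ h : p ∈ P, (⟨p, h⟩ : Vtx P) ∈ AV))
    (P.filter (fun p => ∃ h : p ∈ P, (⟨p, h⟩ : Vtx P) ∈ (Sᶜ : Set (Vtx P)) ∧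
      (⟨p, h⟩ : Vtx P) ∉ AV))
    (P.filter (fun p => ∃ h : p ∈ P, (⟨p, h⟩ : Vtx P) ∈ S))
    (Finset.filter_subset _ _) (Finset.filter_subset _ _) (Finset.filter_subset _ _)
    ?_ ?_ ?_ ?_ ?_ ?_ ?_ ?_ ?_
  · intro p hp
    by_cases h1 : (⟨p, hp⟩ : Vtx P) ∈ S
    · exact Or.inr (Or.inr (mem_filter.2 ⟨hp, hp, h1⟩))
    · by_cases h2 : (⟨p, hp⟩ : Vtx P) ∈ AV
      · exact Or.inl (mem_filter.2 ⟨hp, hp, h2⟩)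
      · exact Or.inr (Or.inl (mem_filter.2 ⟨hp, hp, h1, h2⟩))
  · rintro p hp hp'
    rw [mem_filter] at hp hp'
    obtain ⟨hpP, h, hAVp⟩ := hp
    obtain ⟨-, h', -, hnAVp⟩ := hp'
    exact hnAVp hAVp
  · rintro p hp hp'
    rw [mem_filter] at hp hp'
    obtain ⟨hpP, h, hsc, -⟩ := hp
    obtain ⟨-, h', hS'⟩ := hp'
    exact hsc hS'
  · rintro p hp hp'
    rw [mem_filter] at hp hp'
    obtain ⟨-, h, hsc, -⟩ := hp
    obtain ⟨-, h', hS'⟩ := hp'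
    exact hsc hS'
  · exact ⟨x.1.1, mem_filter.2 ⟨x.1.2, x.1.2, x.2, by exact SimpleGraph.Reachable.refl x⟩⟩
  · refine ⟨y.1.1, mem_filter.2 ⟨y.1.2, y.1.2, y.2, ?_⟩⟩
    rintro ⟨h, hr⟩
    exact hxy (by exact hr)
  · have hinj : (P.filter (fun p => ∃ h : p ∈ P, (⟨p, h⟩ : Vtx P) ∈ S)).card ≤
        ((S : Set (Vtx P)).toFinite.toFinset).card := by
      apply Finset.card_le_card_of_injOn
        (fun p => if h : p ∈ P then (⟨p, h⟩ : Vtx P) else x.1)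
      · intro p hp
        rw [Finset.mem_coe, mem_filter] at hp
        obtain ⟨hpP, h, hS'⟩ := hp
        rw [Finset.mem_coe]; dsimp only
        rw [dif_pos hpP, Set.Finite.mem_toFinset]
        exact hS'
      · intro p1 h1 p2 h2 heq
        rw [Finset.mem_coe, mem_filter] at h1 h2
        simp only [dif_pos h1.1, dif_pos h2.1] at heq
        exact congrArg Subtype.val heq
    have heq : ((S : Set (Vtx P)).toFinite.toFinset).card = (S : Set (Vtx P)).ncard :=
      (Set.ncard_eq_toFinset_card _ _).symm
    omega
  · intro p hp q hq hvis
    rw [mem_filter] at hp hq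
    obtain ⟨hpP, h, hsc, hr⟩ := hp
    obtain ⟨hqP, h', hsc', hnAV⟩ := hq
    apply hnAV
    exact ⟨hsc', hr.trans (SimpleGraph.Adj.reachable (by exact hvis))⟩
  · intro w hw
    exact hD.2 ⟨w, hw⟩

lemma D3_to_edgeConn (P : Finset Pt) (hD : D3 P) : 3 ≤ edgeConn (visibilityGraph P) := by
  classical
  rw [edgeConn, three_le_sInf_iff]
  have hP4 := D3_card P hD
  obtain ⟨u0, v0, hu0v0⟩ : ∃ u v : Vtx P, u ≠ v := by
    have h1 : 1 < P.card := by omega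
    obtain ⟨u, hu, v, hv, huv⟩ := Finset.one_lt_card.1 h1
    exact ⟨⟨u, hu⟩, ⟨v, hv⟩, fun h => huv (congrArg Subtype.val h)⟩
  constructor
  · exact ⟨_, (visibilityGraph P).edgeSet, le_refl _, rfl,
      not_connected_deleteEdges_all _ hu0v0⟩
  · rintro k ⟨F, hFsub, rfl, hFdis⟩
    by_contra hk
    push_neg at hk
    have hFn2 : (F : Set (Sym2 (Vtx P))).ncard ≤ 2 := by
      rw [← Nat.card_coe_set_eq]; omega
    have hne : Nonempty (Vtx P) := ⟨u0⟩
    obtain ⟨x, y, hxy⟩ : ∃ x y : Vtx P,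
        ¬ ((visibilityGraph P).deleteEdges F).Reachable x y := by
      by_contra hcon
      push_neg at hcon
      exact hFdis ((SimpleGraph.connected_iff _).2 ⟨hcon, hne⟩)
    set AV : Set (Vtx P) := {v | ((visibilityGraph P).deleteEdges F).Reachable x v}
      with hAVdef
    have hxAV : x ∈ AV := SimpleGraph.Reachable.refl x
    have hynAV : y ∉ AV := hxy
    have hcrossF : ∀ v w : Vtx P, v ∈ AV → w ∉ AV → VisAdj P v.1 w.1 → s(v, w) ∈ F := by
      intro v w hv hw hadj
      by_contra hmem
      exact hw (hv.trans (SimpleGraph.Adj.reachable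
        (by rw [SimpleGraph.deleteEdges_adj]; exact ⟨hadj, hmem⟩)))
    set A0 := P.filter (fun p => ∃ h : p ∈ P, (⟨p, h⟩ : Vtx P) ∈ AV) with hA0def
    set B0 := P.filter (fun p => ∃ h : p ∈ P, (⟨p, h⟩ : Vtx P) ∉ AV) with hB0def
    set CR := fun (p : Pt) => ∃ (h : p ∈ P) (q : Pt) (hq : q ∈ P),
        ((⟨q, hq⟩ : Vtx P) ∉ AV ∧ VisAdj P p q) with hCRdef
    set S0 := A0.filter CR with hS0def
    set Ffin := (F : Set (Sym2 (Vtx P))).toFinite.toFinset with hFfin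
    have hFfincard : Ffin.card ≤ 2 := by
      rw [hFfin, ← Set.ncard_eq_toFinset_card]; exact hFn2
    have hcrossmem : ∀ p, p ∈ A0 → ∀ q ∈ B0, VisAdj P p q →
        ∀ (hp : p ∈ P) (hq : q ∈ P), s((⟨p, hp⟩ : Vtx P), (⟨q, hq⟩ : Vtx P)) ∈ Ffin := by
      intro p hpA q hqB hvis hp hq
      rw [hFfin, Set.Finite.mem_toFinset]
      obtain ⟨-, h, hAVp⟩ := mem_filter.1 hpA
      obtain ⟨-, h', hnAVq⟩ := mem_filter.1 hqB
      exact hcrossF _ _ hAVp hnAVq hvis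
    have hcover0 : ∀ p ∈ P, p ∈ A0 ∨ p ∈ B0 := by
      intro p hp
      by_cases h : (⟨p, hp⟩ : Vtx P) ∈ AV
      · exact Or.inl (mem_filter.2 ⟨hp, hp, h⟩)
      · exact Or.inr (mem_filter.2 ⟨hp, hp, h⟩)
    have hABdisj : ∀ p ∈ A0, p ∉ B0 := by
      intro p hp hp'
      obtain ⟨-, h, hAVp⟩ := mem_filter.1 hp
      obtain ⟨-, h', hnAVp⟩ := mem_filter.1 hp'
      exact hnAVp hAVp
    have hxA0 : x.1 ∈ A0 := mem_filter.2 ⟨x.2, x.2, by exact hxAV⟩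
    have hyB0 : y.1 ∈ B0 := mem_filter.2 ⟨y.2, y.2, by exact hynAV⟩
    have hS0card : S0.card ≤ 2 := by
      have hinj : S0.card ≤ Ffin.card := by
        apply Finset.card_le_card_of_injOn (fun p =>
          if h : CR p then s((⟨p, h.choose⟩ : Vtx P),
            (⟨h.choose_spec.choose, h.choose_spec.choose_spec.choose⟩ : Vtx P)) else s(u0, u0))
        · intro p hp
          obtain ⟨hpA0, hCR⟩ := mem_filter.1 hp
          simp only [dif_pos hCR]
          have hprop := hCR.choose_spec.choose_spec.choose_spec
          exact hcrossmem p hpA0 _ (mem_filter.2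
            ⟨hCR.choose_spec.choose_spec.choose, hCR.choose_spec.choose_spec.choose, hprop.1⟩)
            hprop.2 _ _
        · intro p1 h1 p2 h2 heq
          rw [Finset.mem_coe] at h1 h2
          obtain ⟨hpA1, hCR1⟩ := mem_filter.1 h1
          obtain ⟨hpA2, hCR2⟩ := mem_filter.1 h2
          simp only [dif_pos hCR1, dif_pos hCR2] at heq
          rcases Sym2.eq_iff.1 heq with ⟨ha, hb⟩ | ⟨ha, hb⟩
          · exact congrArg Subtype.val ha
          · exfalso
            obtain ⟨-, h, hAVp1⟩ := mem_filter.1 hpA1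
            have hnAVq2 := hCR2.choose_spec.choose_spec.choose_spec.1
            rw [ha] at hAVp1
            exact hnAVq2 hAVp1
      omega
    by_cases hAne : (A0 \ S0).Nonempty
    · refine ML P (A0 \ S0) B0 S0
        ((Finset.sdiff_subset).trans (Finset.filter_subset _ _))
        (Finset.filter_subset _ _)
        ((Finset.filter_subset _ _).trans (Finset.filter_subset _ _))
        ?_ ?_ ?_ ?_ hAne ⟨y.1, hyB0⟩ hS0card ?_ ?_
      · intro p hp
        rcases hcover0 p hp with h | h
        · by_cases h2 : p ∈ S0
          · exact Or.inr (Or.inr h2)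
          · exact Or.inl (Finset.mem_sdiff.2 ⟨h, h2⟩)
        · exact Or.inr (Or.inl h)
      · intro p hp
        exact hABdisj p (Finset.mem_sdiff.1 hp).1
      · intro p hp
        exact (Finset.mem_sdiff.1 hp).2
      · intro p hp hp'
        exact hABdisj p (Finset.filter_subset _ _ hp') hp
      · intro p hp q hq hvis
        obtain ⟨hpA0, hpnS0⟩ := Finset.mem_sdiff.1 hp
        obtain ⟨hqP, h', hnAVq⟩ := mem_filter.1 hq
        exact hpnS0 (mem_filter.2 ⟨hpA0, (mem_filter.1 hpA0).1, q, hqP, hnAVq, hvis⟩)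
      · intro w hw
        exact hD.2 ⟨w, hw⟩
    · have hsubS : A0 ⊆ S0 := by
        intro p hp
        by_contra h
        exact hAne ⟨p, Finset.mem_sdiff.2 ⟨hp, h⟩⟩
      have hA0card : A0.card ≤ 2 := le_trans (Finset.card_le_card hsubS) hS0card
      have hdegbound : ∀ p, p ∈ A0 → (P.filter (fun w => VisAdj P p w)).card ≤
          (A0.erase p).card + (B0.filter (fun w => VisAdj P p w)).card := by
        intro p hpA
        have hsub2 : P.filter (fun w => VisAdj P p w) ⊆
            (A0.erase p) ∪ (B0.filter (fun w => VisAdj P p w)) := by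
          intro w hw
          obtain ⟨hwP, hwvis⟩ := mem_filter.1 hw
          rcases hcover0 w hwP with h | h
          · exact Finset.mem_union_left _ (Finset.mem_erase.2 ⟨fun hh => hwvis.1 hh.symm, h⟩)
          · exact Finset.mem_union_right _ (mem_filter.2 ⟨h, hwvis⟩)
        exact le_trans (Finset.card_le_card hsub2) (Finset.card_union_le _ _)
      have hcrossbound : ∀ p, p ∈ A0 → ∀ (hp : p ∈ P),
          (B0.filter (fun w => VisAdj P p w)).card ≤ Ffin.card := by
        intro p hpA hp
        apply Finset.card_le_card_of_injOn (fun q =>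
          if hq : q ∈ P then s((⟨p, hp⟩ : Vtx P), (⟨q, hq⟩ : Vtx P)) else s(u0, u0))
        · intro q hq
          obtain ⟨hqB, hqvis⟩ := mem_filter.1 hq
          have hqP : q ∈ P := (mem_filter.1 hqB).1
          simp only [dif_pos hqP]
          exact hcrossmem p hpA q hqB hqvis hp hqP
        · intro q1 hq1 q2 hq2 heq
          rw [Finset.mem_coe] at hq1 hq2
          have hq1P : q1 ∈ P := (mem_filter.1 ((mem_filter.1 hq1).1)).1
          have hq2P : q2 ∈ P := (mem_filter.1 ((mem_filter.1 hq2).1)).1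
          simp only [dif_pos hq1P, dif_pos hq2P] at heq
          rcases Sym2.eq_iff.1 heq with ⟨ha, hb⟩ | ⟨ha, hb⟩
          · exact congrArg Subtype.val hb
          · exfalso
            have hq2B : q2 ∈ B0 := (mem_filter.1 hq2).1
            have : p = q2 := congrArg Subtype.val ha
            rw [this] at hpA
            exact hABdisj q2 hpA hq2B
      rcases Nat.lt_or_ge A0.card 2 with hc | hc
      · have h1 : A0.card = 1 := by
          have := Finset.card_pos.2 ⟨x.1, hxA0⟩
          omega
        obtain ⟨p, hpeq⟩ := Finset.card_eq_one.1 h1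
        have hpA : p ∈ A0 := hpeq ▸ Finset.mem_singleton_self p
        have hpP : p ∈ P := (mem_filter.1 hpA).1
        have herase : (A0.erase p).card = 0 := by rw [hpeq]; simp
        have h3 : 3 ≤ (P.filter (fun w => VisAdj P p w)).card := hD.2 ⟨p, hpP⟩
        have h4 := hdegbound p hpA
        have h5 := hcrossbound p hpA hpP
        omega
      · have h2 : A0.card = 2 := by omega
        obtain ⟨u, v, huv, heq2⟩ := Finset.card_eq_two.1 h2
        have huA : u ∈ A0 := heq2 ▸ by simp
        have hvA : v ∈ A0 := heq2 ▸ by simp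
        have huP : u ∈ P := (mem_filter.1 huA).1
        have hvP : v ∈ P := (mem_filter.1 hvA).1
        have heraseu : (A0.erase u).card ≤ 1 := by
          rw [heq2]
          have : ({u, v} : Finset Pt).erase u ⊆ {v} := by
            intro z hz
            obtain ⟨hz1, hz2⟩ := Finset.mem_erase.1 hz
            rcases Finset.mem_insert.1 hz2 with h | h
            · exact absurd h hz1
            · exact (Finset.mem_singleton.1 h) ▸ Finset.mem_singleton_self v
          exact le_trans (Finset.card_le_card this) (by simp)
        have herasev : (A0.erase v).card ≤ 1 := by
          rw [heq2]
          have : ({u, v} : Finset Pt).erase v ⊆ {u} := by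
            intro z hz
            obtain ⟨hz1, hz2⟩ := Finset.mem_erase.1 hz
            rcases Finset.mem_insert.1 hz2 with h | h
            · exact h ▸ Finset.mem_singleton_self u
            · exact absurd (Finset.mem_singleton.1 h) hz1
          exact le_trans (Finset.card_le_card this) (by simp)
        have hdegu : 3 ≤ (P.filter (fun w => VisAdj P u w)).card := hD.2 ⟨u, huP⟩
        have hdegv : 3 ≤ (P.filter (fun w => VisAdj P v w)).card := hD.2 ⟨v, hvP⟩
        have hbu := hdegbound u huA
        have hbv := hdegbound v hvA
        have hcu : 2 ≤ (B0.filter (fun w => VisAdj P u w)).card := by omega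
        have hcv : 1 ≤ (B0.filter (fun w => VisAdj P v w)).card := by omega
        obtain ⟨q1, hq1, q2, hq2, hq12⟩ := Finset.one_lt_card.1
          (by omega : 1 < (B0.filter (fun w => VisAdj P u w)).card)
        obtain ⟨w, hw⟩ := Finset.card_pos.1 (by omega :
          0 < (B0.filter (fun w => VisAdj P v w)).card)
        obtain ⟨hq1B, hq1vis⟩ := mem_filter.1 hq1
        obtain ⟨hq2B, hq2vis⟩ := mem_filter.1 hq2
        obtain ⟨hwB, hwvis⟩ := mem_filter.1 hw
        have hq1P : q1 ∈ P := (mem_filter.1 hq1B).1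
        have hq2P : q2 ∈ P := (mem_filter.1 hq2B).1
        have hwP : w ∈ P := (mem_filter.1 hwB).1
        have hB0nA : ∀ q ∈ B0, q ∉ A0 := fun q hq hq' => hABdisj q hq' hq
        have he1 := hcrossmem u huA q1 hq1B hq1vis huP hq1P
        have he2 := hcrossmem u huA q2 hq2B hq2vis huP hq2P
        have he3 := hcrossmem v hvA w hwB hwvis hvP hwP
        set e1 := s((⟨u, huP⟩ : Vtx P), (⟨q1, hq1P⟩ : Vtx P)) with he1def
        set e2 := s((⟨u, huP⟩ : Vtx P), (⟨q2, hq2P⟩ : Vtx P)) with he2def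
        set e3 := s((⟨v, hvP⟩ : Vtx P), (⟨w, hwP⟩ : Vtx P)) with he3def
        have hne12 : e1 ≠ e2 := by
          rw [he1def, he2def]
          intro h
          rcases Sym2.eq_iff.1 h with ⟨-, hb⟩ | ⟨ha, -⟩
          · exact hq12 (congrArg Subtype.val hb)
          · have : u = q2 := congrArg Subtype.val ha
            rw [this] at huA
            exact hB0nA q2 hq2B huA
        have hne13 : e1 ≠ e3 := by
          rw [he1def, he3def]
          intro h
          rcases Sym2.eq_iff.1 h with ⟨ha, -⟩ | ⟨ha, -⟩
          · exact huv (congrArg Subtype.val ha)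
          · have : u = w := congrArg Subtype.val ha
            rw [this] at huA
            exact hB0nA w hwB huA
        have hne23 : e2 ≠ e3 := by
          rw [he2def, he3def]
          intro h
          rcases Sym2.eq_iff.1 h with ⟨ha, -⟩ | ⟨ha, -⟩
          · exact huv (congrArg Subtype.val ha)
          · have : u = w := congrArg Subtype.val ha
            rw [this] at huA
            exact hB0nA w hwB huA
        have hsub3 : ({e1, e2, e3} : Finset (Sym2 (Vtx P))) ⊆ Ffin := by
          intro z hz
          rcases Finset.mem_insert.1 hz with h | h
          · exact h ▸ he1
          rcases Finset.mem_insert.1 h with h' | h'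
          · exact h' ▸ he2
          · exact (Finset.mem_singleton.1 h') ▸ he3
        have hcard3 : ({e1, e2, e3} : Finset (Sym2 (Vtx P))).card = 3 := by
          rw [Finset.card_insert_of_notMem, Finset.card_insert_of_notMem,
            Finset.card_singleton]
          · simp only [Finset.mem_singleton]
            exact hne23
          · simp only [Finset.mem_insert, Finset.mem_singleton]
            rintro (h | h)
            · exact hne12 h
            · exact hne13 h
        have := Finset.card_le_card hsub3
        omega

theorem visibility_three_connected_equivalences' (P : Finset (ℝ × ℝ)) :
    (3 ≤ vertConn (visibilityGraph P) ↔ 3 ≤ edgeConn (visibilityGraph P)) ∧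
    (3 ≤ edgeConn (visibilityGraph P) ↔ 3 ≤ minDegree' (visibilityGraph P)) := by
  constructor
  · constructor
    · intro h
      exact D3_to_edgeConn P (vertConn_to_D3 P h)
    · intro h
      exact D3_to_vertConn P (edgeConn_to_D3 P h)
  · constructor
    · intro h
      exact (minDeg_iff P).2 (edgeConn_to_D3 P h)
    · intro h
      exact D3_to_edgeConn P ((minDeg_iff P).1 h)

end
end VGaux

/-- For a visibility graph `G`, the following are equivalent:
(1) vertex-connectivity at least 3; (2) edge-connectivity at least 3;
(3) minimum degree at least 3. -/
theorem visibility_three_connected_equivalences (P : Finset (ℝ × ℝ)) :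
    (3 ≤ vertConn (visibilityGraph P) ↔ 3 ≤ edgeConn (visibilityGraph P)) ∧
    (3 ≤ edgeConn (visibilityGraph P) ↔ 3 ≤ minDegree' (visibilityGraph P)) := by
  exact VGaux.visibility_three_connected_equivalences' P
end

section
/- There exist infinitely many positive integers δ for which there is a finite set of points in the plane, with at most three points on any line and not all points collinear, whose visibility graph has minimum degree δ and vertex-connectivity exactly (2δ+1)/3. -/
/-! ### Auxiliary: the cubic curve `y = x³` -/

namespace VC

attribute [local instance] Classical.propDecidable

lemma cubic_identity (a b x y : ℝ) (hab : a + b = 1) :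
    a*x^3 + b*y^3 - (a*x+b*y)^3 = a*b*(x-y)^2*((a*x+b*y)+x+y) := by
  have hb : b = 1 - a := by linarith
  subst hb; ring

lemma cubic_mem_openSegment {x y z : ℝ} (hxy : x ≠ y) :
    ((z, z^3) ∈ openSegment ℝ (x, x^3) (y, y^3)) ↔
      (x + y + z = 0 ∧ ((x < z ∧ z < y) ∨ (y < z ∧ z < x))) := by
  constructor
  · rintro ⟨a, b, ha, hb, hab, h⟩
    rw [Prod.ext_iff] at h
    obtain ⟨h1, h2⟩ := h
    simp only [Prod.smul_fst, Prod.smul_snd, Prod.fst_add, Prod.snd_add, smul_eq_mul] at h1 h2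
    have key := cubic_identity a b x y hab
    rw [h1] at key
    rw [h2] at key
    have hzero : a*b*(x-y)^2*(z+x+y) = 0 := by linarith
    have hsum : x + y + z = 0 := by
      have h2' : (x-y)^2 ≠ 0 := pow_ne_zero _ (sub_ne_zero.2 hxy)
      rcases mul_eq_zero.1 hzero with h | h
      · exact absurd h (mul_ne_zero (mul_ne_zero ha.ne' hb.ne') h2')
      · linarith
    refine ⟨hsum, ?_⟩
    rcases lt_or_gt_of_ne hxy with hlt | hlt
    · left; constructor <;> nlinarith
    · right; constructor <;> nlinarith
  · rintro ⟨hsum, hbet⟩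
    have hz : z = -x - y := by linarith
    subst hz
    have hyx : y - x ≠ 0 := fun h => hxy (by linarith)
    have hxy' : x - y ≠ 0 := fun h => hxy (by linarith)
    rcases hbet with ⟨h1, h2⟩ | ⟨h1, h2⟩
    · refine ⟨(y-(-x-y))/(y-x), ((-x-y)-x)/(y-x), ?_, ?_, ?_, ?_⟩
      · apply div_pos <;> linarith
      · apply div_pos <;> linarith
      · field_simp; ring
      · rw [Prod.ext_iff]
        simp only [Prod.smul_fst, Prod.smul_snd, Prod.fst_add, Prod.snd_add, smul_eq_mul]
        constructor
        · field_simp; ring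
        · field_simp; ring
    · refine ⟨(y-(-x-y))/(y-x), ((-x-y)-x)/(y-x), ?_, ?_, ?_, ?_⟩
      · apply div_pos_of_neg_of_neg <;> linarith
      · apply div_pos_of_neg_of_neg <;> linarith
      · field_simp; ring
      · rw [Prod.ext_iff]
        simp only [Prod.smul_fst, Prod.smul_snd, Prod.fst_add, Prod.snd_add, smul_eq_mul]
        constructor
        · field_simp; ring
        · field_simp; ring

lemma cubic_collinear_sum {x y z : ℝ} (hxy : x ≠ y) (hxz : x ≠ z) (hyz : y ≠ z)
    (h : Collinear ℝ ({(x,x^3), (y,y^3), (z,z^3)} : Set (ℝ × ℝ))) : x + y + z = 0 := by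
  rw [collinear_iff_of_mem (Set.mem_insert _ _)] at h
  obtain ⟨v, hv⟩ := h
  obtain ⟨ty, hty⟩ := hv (y, y^3) (by simp)
  obtain ⟨tz, htz⟩ := hv (z, z^3) (by simp)
  rw [Prod.ext_iff] at hty htz
  simp only [vadd_eq_add, Prod.smul_fst, Prod.smul_snd, Prod.fst_add, Prod.snd_add,
    smul_eq_mul] at hty htz
  obtain ⟨hy1, hy2⟩ := hty
  obtain ⟨hz1, hz2⟩ := htz
  have cross : (y - x) * (z^3 - x^3) = (z - x) * (y^3 - x^3) := by
    have e1 : y - x = ty * v.1 := by linarith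
    have e2 : y^3 - x^3 = ty * v.2 := by linarith
    have e3 : z - x = tz * v.1 := by linarith
    have e4 : z^3 - x^3 = tz * v.2 := by linarith
    rw [e1, e2, e3, e4]; ring
  have factored : (y - x) * (z - x) * (z - y) * (x + y + z) = 0 := by nlinarith [cross]
  have h1 : y - x ≠ 0 := fun h => hxy (by linarith)
  have h2 : z - x ≠ 0 := fun h => hxz (by linarith)
  have h3 : z - y ≠ 0 := fun h => hyz (by linarith)
  rcases mul_eq_zero.1 factored with h | h
  · rcases mul_eq_zero.1 h with h | h
    · rcases mul_eq_zero.1 h with h | h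
      · exact absurd h h1
      · exact absurd h h2
    · exact absurd h h3
  · linarith

/-! ### The point configuration -/

def pt (n : ℤ) : ℝ × ℝ := ((n : ℝ), (n : ℝ)^3)

lemma pt_injective : Function.Injective pt := by
  intro m n h
  have : (m : ℝ) = (n : ℝ) := congrArg Prod.fst h
  exact_mod_cast this


lemma pt_mem_openSegment {m n k : ℤ} (hmn : m ≠ n) :
    pt k ∈ openSegment ℝ (pt m) (pt n) ↔
      (m + n + k = 0 ∧ ((m < k ∧ k < n) ∨ (n < k ∧ k < m))) := by
  have hmn' : ((m : ℤ) : ℝ) ≠ ((n : ℤ) : ℝ) := by exact_mod_cast hmn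
  show (((k:ℤ):ℝ), ((k:ℤ):ℝ)^3) ∈ openSegment ℝ (((m:ℤ):ℝ), ((m:ℤ):ℝ)^3)
    (((n:ℤ):ℝ), ((n:ℤ):ℝ)^3) ↔ _
  rw [cubic_mem_openSegment hmn']
  constructor
  · rintro ⟨hsum, hbet⟩
    have hsum' : m + n + k = 0 := by exact_mod_cast hsum
    refine ⟨hsum', ?_⟩
    rcases hbet with ⟨h1, h2⟩ | ⟨h1, h2⟩
    · exact Or.inl ⟨by exact_mod_cast h1, by exact_mod_cast h2⟩
    · exact Or.inr ⟨by exact_mod_cast h1, by exact_mod_cast h2⟩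
  · rintro ⟨hsum, hbet⟩
    refine ⟨by exact_mod_cast hsum, ?_⟩
    rcases hbet with ⟨h1, h2⟩ | ⟨h1, h2⟩
    · exact Or.inl ⟨by exact_mod_cast h1, by exact_mod_cast h2⟩
    · exact Or.inr ⟨by exact_mod_cast h1, by exact_mod_cast h2⟩

variable (s : ℕ)

noncomputable def AZ : Finset ℤ := Finset.Icc (-(5*(s:ℤ))) (-(4*(s:ℤ))-1)
noncomputable def BZ : Finset ℤ := Finset.Icc (3*(s:ℤ)+1) (4*(s:ℤ))
noncomputable def CZ : Finset ℤ := Finset.Icc 1 (2*(s:ℤ)-1)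
noncomputable def ZZ : Finset ℤ := AZ s ∪ BZ s ∪ CZ s
noncomputable def PP : Finset (ℝ × ℝ) := (ZZ s).image pt

lemma AZ_subset : AZ s ⊆ ZZ s := fun n h =>
  Finset.mem_union_left _ (Finset.mem_union_left _ h)
lemma BZ_subset : BZ s ⊆ ZZ s := fun n h =>
  Finset.mem_union_left _ (Finset.mem_union_right _ h)
lemma CZ_subset : CZ s ⊆ ZZ s := fun n h => Finset.mem_union_right _ h

lemma card_AZ : (AZ s).card = s := by
  rw [AZ, Int.card_Icc]; omega
lemma card_BZ : (BZ s).card = s := by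
  rw [BZ, Int.card_Icc]; omega
lemma card_CZ (hs : 2 ≤ s) : (CZ s).card = 2*s - 1 := by
  rw [CZ, Int.card_Icc]; omega

lemma card_ZZ (hs : 2 ≤ s) : (ZZ s).card = 4*s - 1 := by
  rw [ZZ, Finset.card_union_of_disjoint, Finset.card_union_of_disjoint, card_AZ, card_BZ,
    card_CZ s hs]
  · omega
  · rw [Finset.disjoint_left]
    intro n hn hn'
    simp only [AZ, BZ, Finset.mem_Icc] at hn hn'
    omega
  · rw [Finset.disjoint_left]
    intro n hn hn'
    simp only [AZ, BZ, CZ, Finset.mem_union, Finset.mem_Icc] at hn hn'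
    omega

lemma blocked_iff (hs : 2 ≤ s) {m n : ℤ} (hm : m ∈ ZZ s) (hn : n ∈ ZZ s) :
    ((-m-n) ∈ ZZ s ∧ ((m < -m-n ∧ -m-n < n) ∨ (n < -m-n ∧ -m-n < m))) ↔
      ((m ∈ AZ s ∧ n ∈ BZ s) ∨ (m ∈ BZ s ∧ n ∈ AZ s)) := by
  have hs' : (2:ℤ) ≤ (s:ℤ) := by exact_mod_cast hs
  simp only [ZZ, AZ, BZ, CZ, Finset.mem_union, Finset.mem_Icc] at hm hn ⊢
  omega

lemma visAdj_iff (hs : 2 ≤ s) {m n : ℤ} (hm : m ∈ ZZ s) (hn : n ∈ ZZ s) :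
    VisAdj (PP s) (pt m) (pt n) ↔
      (m ≠ n ∧ ¬((m ∈ AZ s ∧ n ∈ BZ s) ∨ (m ∈ BZ s ∧ n ∈ AZ s))) := by
  constructor
  · rintro ⟨hne, hvis⟩
    have hmn : m ≠ n := fun h => hne (by rw [h])
    refine ⟨hmn, fun hcase => ?_⟩
    obtain ⟨hmem, hbet⟩ := (blocked_iff s hs hm hn).2 hcase
    apply hvis (pt (-m-n)) (Finset.mem_image_of_mem _ hmem)
    rw [pt_mem_openSegment hmn]
    exact ⟨by ring, hbet⟩
  · rintro ⟨hmn, hncase⟩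
    refine ⟨fun h => hmn (pt_injective h), ?_⟩
    intro q hq hqseg
    obtain ⟨k, hk, rfl⟩ := Finset.mem_image.1 hq
    rw [pt_mem_openSegment hmn] at hqseg
    obtain ⟨hksum, hbet⟩ := hqseg
    have hk' : k = -m - n := by omega
    subst hk'
    apply hncase
    apply (blocked_iff s hs hm hn).1
    exact ⟨hk, hbet⟩

/-! ### Vertex-level structure -/

abbrev Vtx := {p : ℝ × ℝ // p ∈ PP s}

def SA : Set (Vtx s) := {v | ∃ n ∈ AZ s, pt n = v.1}
def SB : Set (Vtx s) := {v | ∃ n ∈ BZ s, pt n = v.1}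
def SC : Set (Vtx s) := {v | ∃ n ∈ CZ s, pt n = v.1}

lemma exists_param (v : Vtx s) : ∃ n ∈ ZZ s, pt n = v.1 := Finset.mem_image.1 v.2

lemma mem_SA_iff {v : Vtx s} {n : ℤ} (hn : pt n = v.1) : v ∈ SA s ↔ n ∈ AZ s := by
  constructor
  · rintro ⟨k, hk, hkv⟩
    rwa [pt_injective (hkv.trans hn.symm)] at hk
  · intro h; exact ⟨n, h, hn⟩

lemma mem_SB_iff {v : Vtx s} {n : ℤ} (hn : pt n = v.1) : v ∈ SB s ↔ n ∈ BZ s := by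
  constructor
  · rintro ⟨k, hk, hkv⟩
    rwa [pt_injective (hkv.trans hn.symm)] at hk
  · intro h; exact ⟨n, h, hn⟩

lemma mem_SC_iff {v : Vtx s} {n : ℤ} (hn : pt n = v.1) : v ∈ SC s ↔ n ∈ CZ s := by
  constructor
  · rintro ⟨k, hk, hkv⟩
    rwa [pt_injective (hkv.trans hn.symm)] at hk
  · intro h; exact ⟨n, h, hn⟩

lemma vtx_eq_iff {u v : Vtx s} {k m : ℤ} (hk : pt k = u.1) (hm : pt m = v.1) :
    u = v ↔ k = m := by
  constructor
  · intro h; exact pt_injective (by rw [hk, hm, h])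
  · intro h; apply Subtype.ext; rw [← hk, ← hm, h]

lemma adj_iff (hs : 2 ≤ s) {u v : Vtx s} {m n : ℤ} (hm : m ∈ ZZ s) (hn : n ∈ ZZ s)
    (hum : pt m = u.1) (hvn : pt n = v.1) :
    (visibilityGraph (PP s)).Adj u v ↔
      (m ≠ n ∧ ¬((m ∈ AZ s ∧ n ∈ BZ s) ∨ (m ∈ BZ s ∧ n ∈ AZ s))) := by
  show VisAdj (PP s) u.1 v.1 ↔ _
  rw [← hum, ← hvn]
  exact visAdj_iff s hs hm hn

lemma ncard_class (T : Finset ℤ) (hT : T ⊆ ZZ s) :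
    ({v : Vtx s | ∃ n ∈ T, pt n = v.1}).ncard = T.card := by
  have hset : {v : Vtx s | ∃ n ∈ T, pt n = v.1} =
      ↑(Finset.univ.filter (fun v : Vtx s => ∃ n ∈ T, pt n = v.1)) := by
    ext v
    simp [Finset.mem_filter]
  rw [hset, Set.ncard_coe_finset]
  symm
  apply Finset.card_bij (fun n hn => (⟨pt n, Finset.mem_image_of_mem _ (hT hn)⟩ : Vtx s))
  · intro n hn
    simp only [Finset.mem_filter, Finset.mem_univ, true_and]
    exact ⟨n, hn, rfl⟩
  · intro n₁ h₁ n₂ h₂ h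
    exact pt_injective (congrArg Subtype.val h)
  · intro v hv
    simp only [Finset.mem_filter, Finset.mem_univ, true_and] at hv
    obtain ⟨n, hn, hnv⟩ := hv
    exact ⟨n, hn, Subtype.ext hnv⟩

lemma card_Vtx (hs : 2 ≤ s) : Nat.card (Vtx s) = 4*s - 1 := by
  rw [Nat.card_eq_fintype_card, Fintype.card_coe, PP,
    Finset.card_image_of_injective _ pt_injective, card_ZZ s hs]

lemma ncard_SA : (SA s).ncard = s := by
  rw [SA, ncard_class s _ (AZ_subset s), card_AZ]
lemma ncard_SB : (SB s).ncard = s := by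
  rw [SB, ncard_class s _ (BZ_subset s), card_BZ]
lemma ncard_SC (hs : 2 ≤ s) : (SC s).ncard = 2*s - 1 := by
  rw [SC, ncard_class s _ (CZ_subset s), card_CZ s hs]

lemma covers (v : Vtx s) : v ∈ SA s ∨ v ∈ SB s ∨ v ∈ SC s := by
  obtain ⟨n, hn, hnv⟩ := exists_param s v
  rw [ZZ, Finset.mem_union, Finset.mem_union] at hn
  rcases hn with (h | h) | h
  · exact Or.inl ⟨n, h, hnv⟩
  · exact Or.inr (Or.inl ⟨n, h, hnv⟩)
  · exact Or.inr (Or.inr ⟨n, h, hnv⟩)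

lemma AB_disj {n : ℤ} (hn : n ∈ AZ s) : n ∉ BZ s := by
  simp only [AZ, BZ, Finset.mem_Icc] at *
  omega
lemma CA_disj {n : ℤ} (hn : n ∈ CZ s) : n ∉ AZ s := by
  simp only [AZ, CZ, Finset.mem_Icc] at *
  omega
lemma CB_disj {n : ℤ} (hn : n ∈ CZ s) : n ∉ BZ s := by
  simp only [BZ, CZ, Finset.mem_Icc] at *
  omega

/-! ### Neighborhoods and degrees -/

lemma nbhd_A (hs : 2 ≤ s) {v : Vtx s} {m : ℤ} (hm : m ∈ AZ s) (hvm : pt m = v.1) :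
    (visibilityGraph (PP s)).neighborSet v = (SB s ∪ {v})ᶜ := by
  ext u
  obtain ⟨k, hk, hku⟩ := exists_param s u
  rw [SimpleGraph.mem_neighborSet,
    adj_iff s hs (AZ_subset s hm) hk hvm hku]
  simp only [Set.mem_compl_iff, Set.mem_union, Set.mem_singleton_iff]
  rw [mem_SB_iff s hku, vtx_eq_iff s hku hvm]
  have hmB : m ∉ BZ s := AB_disj s hm
  constructor
  · rintro ⟨hmk, hc⟩
    push_neg
    refine ⟨fun hkB => hc (Or.inl ⟨hm, hkB⟩), fun h => hmk (h.symm)⟩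
  · intro h
    push_neg at h
    obtain ⟨hkB, hkm⟩ := h
    refine ⟨fun h => hkm h.symm, ?_⟩
    rintro (⟨_, h2⟩ | ⟨h1, _⟩)
    · exact hkB h2
    · exact hmB h1

lemma nbhd_B (hs : 2 ≤ s) {v : Vtx s} {m : ℤ} (hm : m ∈ BZ s) (hvm : pt m = v.1) :
    (visibilityGraph (PP s)).neighborSet v = (SA s ∪ {v})ᶜ := by
  ext u
  obtain ⟨k, hk, hku⟩ := exists_param s u
  rw [SimpleGraph.mem_neighborSet,
    adj_iff s hs (BZ_subset s hm) hk hvm hku]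
  simp only [Set.mem_compl_iff, Set.mem_union, Set.mem_singleton_iff]
  rw [mem_SA_iff s hku, vtx_eq_iff s hku hvm]
  have hmA : m ∉ AZ s := fun h => AB_disj s h hm
  constructor
  · rintro ⟨hmk, hc⟩
    push_neg
    refine ⟨fun hkA => hc (Or.inr ⟨hm, hkA⟩), fun h => hmk (h.symm)⟩
  · intro h
    push_neg at h
    obtain ⟨hkA, hkm⟩ := h
    refine ⟨fun h => hkm h.symm, ?_⟩
    rintro (⟨h1, _⟩ | ⟨_, h2⟩)
    · exact hmA h1
    · exact hkA h2

lemma nbhd_C (hs : 2 ≤ s) {v : Vtx s} {m : ℤ} (hm : m ∈ CZ s) (hvm : pt m = v.1) :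
    (visibilityGraph (PP s)).neighborSet v = {v}ᶜ := by
  ext u
  obtain ⟨k, hk, hku⟩ := exists_param s u
  rw [SimpleGraph.mem_neighborSet,
    adj_iff s hs (CZ_subset s hm) hk hvm hku]
  simp only [Set.mem_compl_iff, Set.mem_singleton_iff]
  rw [vtx_eq_iff s hku hvm]
  have hmA : m ∉ AZ s := CA_disj s hm
  have hmB : m ∉ BZ s := CB_disj s hm
  constructor
  · rintro ⟨hmk, _⟩ h
    exact hmk h.symm
  · intro h
    refine ⟨fun h' => h h'.symm, ?_⟩
    rintro (⟨h1, _⟩ | ⟨h1, _⟩)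
    · exact hmA h1
    · exact hmB h1

lemma deg_A (hs : 2 ≤ s) {v : Vtx s} {m : ℤ} (hm : m ∈ AZ s) (hvm : pt m = v.1) :
    Nat.card ((visibilityGraph (PP s)).neighborSet v) = 3*s - 2 := by
  rw [Nat.card_coe_set_eq, nbhd_A s hs hm hvm]
  have hvnot : v ∉ SB s := fun h => AB_disj s hm ((mem_SB_iff s hvm).1 h)
  have h1 : (SB s ∪ {v}).ncard = s + 1 := by
    rw [Set.union_singleton, Set.ncard_insert_of_notMem hvnot (Set.toFinite _), ncard_SB]
  have h2 := Set.ncard_add_ncard_compl (SB s ∪ {v}) (Set.toFinite _) (Set.toFinite _)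
  rw [h1, card_Vtx s hs] at h2
  omega

lemma deg_B (hs : 2 ≤ s) {v : Vtx s} {m : ℤ} (hm : m ∈ BZ s) (hvm : pt m = v.1) :
    Nat.card ((visibilityGraph (PP s)).neighborSet v) = 3*s - 2 := by
  rw [Nat.card_coe_set_eq, nbhd_B s hs hm hvm]
  have hvnot : v ∉ SA s := fun h => AB_disj s ((mem_SA_iff s hvm).1 h) hm
  have h1 : (SA s ∪ {v}).ncard = s + 1 := by
    rw [Set.union_singleton, Set.ncard_insert_of_notMem hvnot (Set.toFinite _), ncard_SA]
  have h2 := Set.ncard_add_ncard_compl (SA s ∪ {v}) (Set.toFinite _) (Set.toFinite _)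
  rw [h1, card_Vtx s hs] at h2
  omega

lemma deg_C (hs : 2 ≤ s) {v : Vtx s} {m : ℤ} (hm : m ∈ CZ s) (hvm : pt m = v.1) :
    Nat.card ((visibilityGraph (PP s)).neighborSet v) = 4*s - 2 := by
  rw [Nat.card_coe_set_eq, nbhd_C s hs hm hvm]
  have h1 : ({v} : Set (Vtx s)).ncard = 1 := Set.ncard_singleton v
  have h2 := Set.ncard_add_ncard_compl ({v} : Set (Vtx s)) (Set.toFinite _) (Set.toFinite _)
  rw [h1, card_Vtx s hs] at h2
  omega

/-! ### Distinguished vertices -/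

lemma a0_mem (hs : 2 ≤ s) : (-(5*(s:ℤ))) ∈ AZ s := by
  simp only [AZ, Finset.mem_Icc]; omega
lemma b0_mem (hs : 2 ≤ s) : (3*(s:ℤ)+1) ∈ BZ s := by
  simp only [BZ, Finset.mem_Icc]; omega

noncomputable def a0 (hs : 2 ≤ s) : Vtx s :=
  ⟨pt (-(5*(s:ℤ))), Finset.mem_image_of_mem _ (AZ_subset s (a0_mem s hs))⟩
noncomputable def b0 (hs : 2 ≤ s) : Vtx s :=
  ⟨pt (3*(s:ℤ)+1), Finset.mem_image_of_mem _ (BZ_subset s (b0_mem s hs))⟩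

/-! ### Minimum degree -/

lemma minDeg (hs : 2 ≤ s) : minDegree' (visibilityGraph (PP s)) = 3*s - 2 := by
  have hmem : (3*s - 2) ∈ {d | ∃ v : Vtx s, d = Nat.card ((visibilityGraph (PP s)).neighborSet v)} :=
    ⟨a0 s hs, (deg_A s hs (a0_mem s hs) rfl).symm⟩
  apply le_antisymm
  · exact Nat.sInf_le hmem
  · apply le_csInf ⟨_, hmem⟩
    rintro d ⟨v, rfl⟩
    rcases covers s v with h | h | h
    · obtain ⟨n, hn, hnv⟩ := h
      rw [deg_A s hs hn hnv]
    · obtain ⟨n, hn, hnv⟩ := h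
      rw [deg_B s hs hn hnv]
    · obtain ⟨n, hn, hnv⟩ := h
      rw [deg_C s hs hn hnv]
      omega

/-! ### Universality of C vertices -/

lemma univ_C (hs : 2 ≤ s) {c : Vtx s} {m : ℤ} (hm : m ∈ CZ s) (hcm : pt m = c.1)
    (u : Vtx s) (hu : u ≠ c) : (visibilityGraph (PP s)).Adj c u := by
  obtain ⟨k, hk, hku⟩ := exists_param s u
  rw [adj_iff s hs (CZ_subset s hm) hk hcm hku]
  refine ⟨fun h => hu ((vtx_eq_iff s hku hcm).2 h.symm), ?_⟩
  rintro (⟨h1, _⟩ | ⟨h1, _⟩)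
  · exact CA_disj s hm h1
  · exact CB_disj s hm h1

/-! ### Connectivity -/

lemma vconn (hs : 2 ≤ s) : vertConn (visibilityGraph (PP s)) = 2*s - 1 := by
  set G := visibilityGraph (PP s) with hG
  have hmem : (2*s - 1) ∈ {k | ∃ S : Set (Vtx s), Nat.card S = k ∧
      (¬ (G.induce Sᶜ).Connected ∨ Nat.card (Sᶜ : Set (Vtx s)) ≤ 1)} := by
    refine ⟨SC s, ?_, Or.inl ?_⟩
    · rw [Nat.card_coe_set_eq, ncard_SC s hs]
    · intro hconn
      have ha0 : a0 s hs ∈ (SC s)ᶜ := by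
        intro h
        have := (mem_SC_iff s (rfl : pt (-(5*(s:ℤ))) = (a0 s hs).1)).1 h
        simp only [CZ, Finset.mem_Icc] at this
        omega
      have hb0 : b0 s hs ∈ (SC s)ᶜ := by
        intro h
        have := (mem_SC_iff s (rfl : pt (3*(s:ℤ)+1) = (b0 s hs).1)).1 h
        simp only [CZ, Finset.mem_Icc] at this
        omega
      obtain ⟨w⟩ := hconn.preconnected ⟨a0 s hs, ha0⟩ ⟨b0 s hs, hb0⟩
      have step : ∀ {x y : ↥((SC s)ᶜ)} (_ : (G.induce (SC s)ᶜ).Adj x y),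
          (x : Vtx s) ∈ SA s → (y : Vtx s) ∈ SA s := by
        intro x y hxy hxA
        have hadj : G.Adj (x : Vtx s) (y : Vtx s) := hxy
        obtain ⟨m, hm, hmx⟩ := hxA
        obtain ⟨k, hk, hky⟩ := exists_param s (y : Vtx s)
        rw [adj_iff s hs (AZ_subset s hm) hk hmx hky] at hadj
        have hkC : k ∉ CZ s := fun h => y.2 ((mem_SC_iff s hky).2 h)
        have hkZ := hk
        rw [ZZ, Finset.mem_union, Finset.mem_union] at hkZ
        rcases hkZ with (h | h) | h
        · exact ⟨k, h, hky⟩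
        · exact absurd (Or.inl ⟨hm, h⟩) hadj.2
        · exact absurd h hkC
      have walkA : ∀ {x y : ↥((SC s)ᶜ)} (_ : (G.induce (SC s)ᶜ).Walk x y),
          (x : Vtx s) ∈ SA s → (y : Vtx s) ∈ SA s := by
        intro x y p
        induction p with
        | nil => exact id
        | cons h p ih => intro hx; exact ih (step h hx)
      have hb0A : (b0 s hs : Vtx s) ∈ SA s := by
        apply walkA w
        exact ⟨-(5*(s:ℤ)), a0_mem s hs, rfl⟩
      obtain ⟨n, hn, hnb⟩ := hb0A
      have : n = 3*(s:ℤ)+1 := pt_injective (hnb.trans rfl)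
      subst this
      exact AB_disj s hn (b0_mem s hs)
  apply le_antisymm
  · exact Nat.sInf_le hmem
  · apply le_csInf ⟨_, hmem⟩
    rintro k ⟨S, hScard, hdisj⟩
    by_contra hlt
    push_neg at hlt
    have hk : k ≤ 2*s - 2 := by omega
    have hSn : S.ncard = k := by rw [← Nat.card_coe_set_eq, hScard]
    have hcompl := Set.ncard_add_ncard_compl S (Set.toFinite _) (Set.toFinite _)
    rw [hSn, card_Vtx s hs] at hcompl
    have hScn : (Sᶜ).ncard = 4*s - 1 - k := by omega
    have hexc : ∃ c ∈ SC s, c ∉ S := by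
      by_contra hno
      push_neg at hno
      have := Set.ncard_le_ncard hno (Set.toFinite S)
      rw [ncard_SC s hs, hSn] at this
      omega
    obtain ⟨c₀, hc₀C, hc₀S⟩ := hexc
    obtain ⟨m, hm, hmc⟩ := hc₀C
    have hc₀S' : c₀ ∈ Sᶜ := hc₀S
    rcases hdisj with hnc | hle
    · apply hnc
      rw [SimpleGraph.connected_iff]
      refine ⟨?_, ⟨⟨c₀, hc₀S'⟩⟩⟩
      · intro u v
        by_cases huv : u = v
        · subst huv; exact SimpleGraph.Reachable.refl u
        · have reach_c : ∀ x : ↥(Sᶜ), (G.induce Sᶜ).Reachable x ⟨c₀, hc₀S'⟩ := by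
            intro x
            by_cases hx : (x : Vtx s) = c₀
            · have : x = ⟨c₀, hc₀S'⟩ := Subtype.ext hx
              rw [this]
            · apply SimpleGraph.Adj.reachable
              show G.Adj (x : Vtx s) c₀
              exact (univ_C s hs hm hmc (x : Vtx s) hx).symm
          exact (reach_c u).trans (reach_c v).symm
    · rw [Nat.card_coe_set_eq, hScn] at hle
      omega

/-! ### Collinearity conditions -/

lemma pt_eq_form (n : ℤ) : pt n = (((n:ℤ):ℝ), ((n:ℤ):ℝ)^3) := rfl

lemma not_collinear (hs : 2 ≤ s) : ¬ Collinear ℝ ((PP s : Set (ℝ × ℝ))) := by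
  intro h
  have h123 : ∀ n : ℤ, n ∈ CZ s → pt n ∈ (PP s : Set (ℝ × ℝ)) := by
    intro n hn
    exact Finset.mem_coe.2 (Finset.mem_image_of_mem _ (CZ_subset s hn))
  have h1 : (1:ℤ) ∈ CZ s := by simp only [CZ, Finset.mem_Icc]; omega
  have h2 : (2:ℤ) ∈ CZ s := by simp only [CZ, Finset.mem_Icc]; omega
  have h3 : (3:ℤ) ∈ CZ s := by simp only [CZ, Finset.mem_Icc]; omega
  have hsub : ({pt 1, pt 2, pt 3} : Set (ℝ × ℝ)) ⊆ (PP s : Set (ℝ × ℝ)) := by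
    intro x hx
    rcases hx with h | h | h <;> subst h
    · exact h123 1 h1
    · exact h123 2 h2
    · exact h123 3 h3
  have hcol := h.subset hsub
  have := cubic_collinear_sum
    (show ((1:ℤ):ℝ) ≠ ((2:ℤ):ℝ) by norm_num)
    (show ((1:ℤ):ℝ) ≠ ((3:ℤ):ℝ) by norm_num)
    (show ((2:ℤ):ℝ) ≠ ((3:ℤ):ℝ) by norm_num) hcol
  norm_num at this

lemma atMost3 (hs : 2 ≤ s) : AtMostCollinear (PP s) 3 := by
  intro S hS hcol
  by_cases hS1 : S.card ≤ 1
  · omega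
  · push_neg at hS1
    obtain ⟨u, hu, v, hv, huv⟩ := Finset.one_lt_card.1 hS1
    obtain ⟨m, hm, hmu⟩ := Finset.mem_image.1 (hS hu)
    obtain ⟨n, hn, hnv⟩ := Finset.mem_image.1 (hS hv)
    have hmn : m ≠ n := fun h => huv (by rw [← hmu, ← hnv, h])
    have hsub : S ⊆ {u, v, pt (-m-n)} := by
      intro w hw
      obtain ⟨k, hk, hkw⟩ := Finset.mem_image.1 (hS hw)
      simp only [Finset.mem_insert, Finset.mem_singleton]
      by_cases hkm : k = m
      · left; rw [← hkw, ← hmu, hkm]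
      · by_cases hkn : k = n
        · right; left; rw [← hkw, ← hnv, hkn]
        · right; right
          have hcol3 : Collinear ℝ ({pt m, pt n, pt k} : Set (ℝ × ℝ)) := by
            apply hcol.subset
            intro x hx
            rcases hx with h | h | h <;> subst h
            · rw [hmu]; exact hu
            · rw [hnv]; exact hv
            · rw [hkw]; exact hw
          have hsum := cubic_collinear_sum
            (show ((m:ℤ):ℝ) ≠ ((n:ℤ):ℝ) by exact_mod_cast hmn)
            (show ((m:ℤ):ℝ) ≠ ((k:ℤ):ℝ) by exact_mod_cast (fun h => hkm h.symm : m ≠ k))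
            (show ((n:ℤ):ℝ) ≠ ((k:ℤ):ℝ) by exact_mod_cast (fun h => hkn h.symm : n ≠ k))
            hcol3
          have : (((m+n+k : ℤ)):ℝ) = 0 := by push_cast; linarith
          have hk0 : m + n + k = 0 := by exact_mod_cast this
          rw [← hkw]
          congr 1
          omega
    calc S.card ≤ ({u, v, pt (-m-n)} : Finset (ℝ × ℝ)).card := Finset.card_le_card hsub
      _ ≤ 3 := by
        apply le_trans (Finset.card_insert_le _ _)
        have := Finset.card_insert_le v ({pt (-m-n)} : Finset (ℝ × ℝ))
        simp only [Finset.card_singleton] at this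
        omega

end VC

/-- There are infinitely many positive integers `δ` for which there is a finite planar point
set, with at most three points on any line and not all points collinear, whose visibility
graph has minimum degree `δ` and vertex-connectivity exactly `(2δ+1)/3`. -/
theorem visibility_connectivity_two_thirds_tight :
    ∀ N : ℕ, ∃ δ : ℕ, N ≤ δ ∧ 0 < δ ∧
      ∃ P : Finset (ℝ × ℝ),
        ¬ Collinear ℝ (P : Set (ℝ × ℝ)) ∧ AtMostCollinear P 3 ∧
        minDegree' (visibilityGraph P) = δ ∧
        (vertConn (visibilityGraph P) : ℝ) = (2 * (δ : ℝ) + 1) / 3 := by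
  intro N
  set s : ℕ := N + 2 with hsdef
  have hs : 2 ≤ s := by omega
  refine ⟨3*s - 2, by omega, by omega, VC.PP s, VC.not_collinear s hs, VC.atMost3 s hs,
    VC.minDeg s hs, ?_⟩
  rw [VC.vconn s hs]
  have h1 : (2*s - 1 : ℕ) = 2*N + 3 := by omega
  have h2 : (3*s - 2 : ℕ) = 3*N + 4 := by omega
  rw [h1, h2]
  push_cast
  ring
end
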